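/- arXiv:1510.05127 — 5 statements merged into one kernel-verified Lean document; each statement's English description precedes it below -/
import Mathlib

section
/- Let G be a completely metrizable topological group. If G has a free abelian subgroup which is dense-in-itself, then G contains a free abelian subgroup generated by a perfect set, i.e. there exists a perfect set P ⊆ G generating a free abelian subgroup with P as a free basis. -/
open Set Filter Cardinal FirstOrder

universe u v

/-- A topological space is completely metrizable if its topology is induced by a complete metric. -/
def CompletelyMetrizable (Y : Type*) [t : TopologicalSpace Y] : Prop :=
  ∃ m : MetricSpace Y, m.toUniformSpace.toTopologicalSpace = t ∧ @CompleteSpace Y m.toUniformSpace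

/-- The weight of a topological space: the least cardinality of a topological basis. -/
noncomputable def topWeight (X : Type u) [TopologicalSpace X] : Cardinal.{u} :=
  ⨅ B : { B : Set (Set X) // TopologicalSpace.IsTopologicalBasis B }, Cardinal.mk B.1

/-- A set is dense-in-itself if it is nonempty and has no isolated points
(in the subspace topology). -/
def DenseInItselfSet {X : Type*} [TopologicalSpace X] (S : Set X) : Prop :=
  S.Nonempty ∧ ∀ x ∈ S, AccPt x (𝓟 S)

/-- A set is perfect if it is nonempty, completely metrizable in the subspace topology,
and has no isolated points. -/
def IsPerfectSet {X : Type*} [TopologicalSpace X] (P : Set X) : Prop :=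
  P.Nonempty ∧ CompletelyMetrizable P ∧ ∀ x ∈ P, AccPt x (𝓟 P)

/-- The `γ`-th Cantor–Bendixson derivative of a set: iterate the operation of removing
isolated points, taking intersections at limit stages. -/
noncomputable def cbDeriv {X : Type u} [TopologicalSpace X] (A : Set X) (γ : Ordinal.{v}) :
    Set X :=
  Ordinal.limitRecOn γ A (fun _ ih => { x ∈ ih | AccPt x (𝓟 ih) })
    (fun o _ ih => ⋂ (o' : Ordinal.{v}) (h : o' < o), ih o' h)

/-- `S` generates a free abelian subgroup of `G` with `S` as a free basis: any two elements of
the generated subgroup commute and no nontrivial product of powers of pairwise distinct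
elements of `S` is the identity. -/
def IsFreeAbelianBasis {G : Type*} [Group G] (S : Set G) : Prop :=
  (∀ x ∈ Subgroup.closure S, ∀ y ∈ Subgroup.closure S, x * y = y * x) ∧
  ∀ n : ℕ, 1 ≤ n → ∀ s : Fin n → G, (∀ i, s i ∈ S) → Function.Injective s →
    ∀ k : Fin n → ℤ, (∀ i, k i ≠ 0) → (List.ofFn fun i => s i ^ k i).prod ≠ 1

section Construction
open Metric


section
variable {G : Type*} [Group G] [MetricSpace G]

/-- Safety condition at level `L`: products over points of the closed balls of any
injective tuple of nodes, with bounded nonzero exponents, avoid `1`. -/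
def SafeAt (L : ℕ) (f : (Fin L → Bool) → G × ℝ) : Prop :=
  ∀ m : ℕ, 1 ≤ m → m ≤ L → ∀ σ : Fin m → (Fin L → Bool), Function.Injective σ →
  ∀ k : Fin m → ℤ, (∀ i, k i ≠ 0) → (∀ i, (k i).natAbs ≤ L) →
  ∀ z : Fin m → G, (∀ i, dist (z i) (f (σ i)).1 ≤ (f (σ i)).2) →
  (List.ofFn fun i => z i ^ k i).prod ≠ 1

def StageInv (H : Subgroup G) (n : ℕ) (f : (Fin n → Bool) → G × ℝ) : Prop :=
  (∀ s, (f s).1 ∈ H) ∧ (∀ s, 0 < (f s).2 ∧ (f s).2 ≤ (1/2 : ℝ)^n) ∧ SafeAt n f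

def Link (n : ℕ) (f : (Fin n → Bool) → G × ℝ) (g : (Fin (n+1) → Bool) → G × ℝ) : Prop :=
  ∀ s : Fin (n+1) → Bool,
    closedBall (g s).1 (g s).2 ⊆ closedBall (f (fun j => s j.castSucc)).1 (f (fun j => s j.castSucc)).2
end


lemma select_fin {A : Type*} [CommGroup A]
    (htf : ∀ a : A, ∀ k : ℤ, k ≠ 0 → a ^ k = 1 → a = 1) (B : ℕ) :
    ∀ (N : ℕ) (W : Fin N → Set A), (∀ j, (W j).Infinite) →
    ∃ z : Fin N → A, (∀ j, z j ∈ W j) ∧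
      ∀ (m : ℕ), 1 ≤ m → ∀ σ : Fin m → Fin N, Function.Injective σ →
      ∀ k : Fin m → ℤ, (∀ i, k i ≠ 0) → (∀ i, (k i).natAbs ≤ B) →
      ∏ i, z (σ i) ^ k i ≠ 1 := by
  intro N
  induction N with
  | zero =>
    intro W _
    refine ⟨fun j => j.elim0, fun j => j.elim0, ?_⟩
    intro m hm σ _ _ _ _
    exact (σ ⟨0, hm⟩).elim0
  | succ N IH =>
    intro W hW
    obtain ⟨z', hz'mem, hz'⟩ := IH (fun j => W j.castSucc) (fun j => hW _)
    -- constraint index type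
    let Cons := Σ m : Fin (N + 2), (Fin m → Fin (N + 1)) × (Fin m → (Finset.Icc (-(B:ℤ)) B : Finset ℤ))
    let bad : Cons → Set A := fun d =>
      {x | (1 ≤ (d.1 : ℕ) ∧ Function.Injective d.2.1 ∧ (∀ i, (d.2.2 i : ℤ) ≠ 0) ∧
              (∃ i, d.2.1 i = Fin.last N)) ∧
           ∏ i, ((Fin.snoc z' x : Fin (N+1) → A) (d.2.1 i)) ^ (d.2.2 i : ℤ) = 1}
    have hbadsub : ∀ d, (bad d).Subsingleton := by
      rintro ⟨m, σ, k⟩ x hx x' hx'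
      obtain ⟨⟨hm, hinj, hk0, i₀, hi₀⟩, hprod⟩ := hx
      obtain ⟨-, hprod'⟩ := hx'
      have key : ∀ y : A, ∏ i, ((Fin.snoc z' y : Fin (N+1) → A) (σ i)) ^ ((k i : ℤ)) =
          y ^ ((k i₀ : ℤ)) * ∏ i ∈ ({i₀}ᶜ : Finset (Fin m)), ((Fin.snoc z' y : Fin (N+1) → A) (σ i)) ^ ((k i : ℤ)) := by
        intro y
        rw [Fintype.prod_eq_mul_prod_compl i₀]
        congr 1
        rw [show σ i₀ = Fin.last N from hi₀, Fin.snoc_last]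
      have hsnoc : ∀ (j : Fin (N+1)) (hj : j ≠ Fin.last N) (y : A),
          (Fin.snoc z' y : Fin (N+1) → A) j = z' (j.castPred hj) := by
        intro j hj y
        induction j using Fin.lastCases with
        | last => exact absurd rfl hj
        | cast j => rw [Fin.snoc_castSucc, Fin.castPred_castSucc]
      have hrest : ∀ y y' : A, ∏ i ∈ ({i₀}ᶜ : Finset (Fin m)), ((Fin.snoc z' y : Fin (N+1) → A) (σ i)) ^ ((k i : ℤ)) =
          ∏ i ∈ ({i₀}ᶜ : Finset (Fin m)), ((Fin.snoc z' y' : Fin (N+1) → A) (σ i)) ^ ((k i : ℤ)) := by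
        intro y y'
        refine Finset.prod_congr rfl ?_
        intro i hi
        have hne : σ i ≠ Fin.last N := by
          intro hcon
          exact (Finset.mem_compl.mp hi) (Finset.mem_singleton.mpr (hinj (hcon.trans hi₀.symm)))
        rw [hsnoc _ hne, hsnoc _ hne]
      have heq : x ^ ((k i₀ : ℤ)) = x' ^ ((k i₀ : ℤ)) := by
        have e1 := (key x).symm.trans hprod
        have e2 := (key x').symm.trans hprod'
        rw [hrest x x'] at e1
        have := e1.trans e2.symm
        exact mul_right_cancel this
      have : (x / x') ^ ((k i₀ : ℤ)) = 1 := by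
        rw [div_zpow, heq, div_self']
      exact div_eq_one.mp (htf _ _ (hk0 i₀) this)
    have hbadfin : (⋃ d, bad d).Finite := Set.finite_iUnion (fun d => (hbadsub d).finite)
    obtain ⟨x, hxW, hxbad⟩ : ∃ x, x ∈ W (Fin.last N) ∧ x ∉ ⋃ d, bad d := by
      obtain ⟨x, hx⟩ := ((hW (Fin.last N)).diff hbadfin).nonempty
      exact ⟨x, hx.1, hx.2⟩
    refine ⟨Fin.snoc z' x, ?_, ?_⟩
    · intro j
      induction j using Fin.lastCases with
      | last => rwa [Fin.snoc_last]
      | cast j => rw [Fin.snoc_castSucc]; exact hz'mem j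
    · intro m hm σ hinj k hk0 hkB hprod
      by_cases hlast : ∃ i, σ i = Fin.last N
      · have hmlt : m < N + 2 := by
          have := Fintype.card_le_of_injective σ hinj
          simp at this; omega
        have hmem : ∀ i, k i ∈ Finset.Icc (-(B:ℤ)) B := by
          intro i
          have := hkB i
          rw [Finset.mem_Icc]
          omega
        refine hxbad (Set.mem_iUnion.mpr ⟨⟨⟨m, hmlt⟩, σ, fun i => ⟨k i, hmem i⟩⟩, ?_⟩)
        exact ⟨⟨hm, hinj, fun i => hk0 i, hlast⟩, hprod⟩
      · push_neg at hlast
        have hσ : ∀ i, σ i ≠ Fin.last N := hlast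
        set σ' : Fin m → Fin N := fun i => (σ i).castPred (hσ i) with hσ'
        have hσ'inj : Function.Injective σ' := by
          intro a b hab
          apply hinj
          have := congrArg Fin.castSucc hab
          rwa [Fin.castSucc_castPred, Fin.castSucc_castPred] at this
        have hsnoc : ∀ (j : Fin (N+1)) (hj : j ≠ Fin.last N) (y : A),
            (Fin.snoc z' y : Fin (N+1) → A) j = z' (j.castPred hj) := by
          intro j hj y
          induction j using Fin.lastCases with
          | last => exact absurd rfl hj
          | cast j => rw [Fin.snoc_castSucc, Fin.castPred_castSucc]
        refine hz' m hm σ' hσ'inj k hk0 hkB ?_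
        rw [← hprod]
        refine Finset.prod_congr rfl (fun i _ => ?_)
        congr 1
        exact (hsnoc _ (hσ i) x).symm

/-- transport of `select_fin` to an arbitrary fintype index -/
lemma select {A : Type*} [CommGroup A]
    (htf : ∀ a : A, ∀ k : ℤ, k ≠ 0 → a ^ k = 1 → a = 1) (B : ℕ)
    {ι : Type*} [Fintype ι] (W : ι → Set A) (hW : ∀ j, (W j).Infinite) :
    ∃ z : ι → A, (∀ j, z j ∈ W j) ∧
      ∀ (m : ℕ), 1 ≤ m → ∀ σ : Fin m → ι, Function.Injective σ →
      ∀ k : Fin m → ℤ, (∀ i, k i ≠ 0) → (∀ i, (k i).natAbs ≤ B) →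
      ∏ i, z (σ i) ^ k i ≠ 1 := by
  classical
  obtain ⟨e⟩ : Nonempty (ι ≃ Fin (Fintype.card ι)) := ⟨Fintype.equivFin ι⟩
  obtain ⟨z', hz'mem, hz'⟩ := select_fin htf B (Fintype.card ι) (fun j => W (e.symm j))
    (fun j => hW _)
  refine ⟨fun j => z' (e j), fun j => by simpa using hz'mem (e j), ?_⟩
  intro m hm σ hσ k hk0 hkB
  have := hz' m hm (fun i => e (σ i)) (fun a b hab => hσ (e.injective hab)) k hk0 hkB
  simpa using this

open Metric in
/-- an accumulation point of S: every open nbhd meets S in an infinite set -/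
lemma acc_infinite {X : Type*} [TopologicalSpace X] [T1Space X] {S : Set X} {x : X}
    (hx : AccPt x (Filter.principal S)) {U : Set X} (hU : IsOpen U) (hxU : x ∈ U) :
    (U ∩ S).Infinite := by
  intro hfin
  have hT : ((U ∩ S) \ {x}).Finite := hfin.diff
  have hV : IsOpen (U \ ((U ∩ S) \ {x})) := hU.sdiff hT.isClosed
  have hxV : x ∈ U \ ((U ∩ S) \ {x}) := ⟨hxU, by simp⟩
  obtain ⟨y, ⟨hyV, hyS⟩, hyx⟩ := accPt_iff_nhds.mp hx _ (hV.mem_nhds hxV)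
  exact hyV.2 ⟨⟨hyV.1, hyS⟩, hyx⟩

section Step
variable {G : Type u_1} [Group G] [MetricSpace G] [IsTopologicalGroup G]

/-- constraint index type at level L -/
abbrev LevelCon (L : ℕ) : Type :=
  Σ m : Fin (L + 1), (Fin m → (Fin L → Bool)) × (Fin m → (Finset.Icc (-(L:ℤ)) L : Finset ℤ))

def conSet (L : ℕ) (d : LevelCon L) : Set ((Fin L → Bool) → G) :=
  if 1 ≤ (d.1 : ℕ) ∧ Function.Injective d.2.1 ∧ (∀ i, (d.2.2 i : ℤ) ≠ 0) then
    {w | (List.ofFn fun i => (w (d.2.1 i)) ^ ((d.2.2 i : ℤ))).prod ≠ 1}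
  else Set.univ

lemma conSet_open (L : ℕ) (d : LevelCon L) : IsOpen (conSet (G := G) L d) := by
  classical
  rw [conSet]
  split
  · have hcont : Continuous fun (w : (Fin L → Bool) → G) =>
        (List.ofFn fun i => (w (d.2.1 i)) ^ ((d.2.2 i : ℤ))).prod := by
      have : ∀ w : (Fin L → Bool) → G, (List.ofFn fun i => (w (d.2.1 i)) ^ ((d.2.2 i : ℤ))).prod
          = ((List.finRange (d.1 : ℕ)).map fun i => (w (d.2.1 i)) ^ ((d.2.2 i : ℤ))).prod := by
        intro w; rw [← List.ofFn_eq_map]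
      simp only [this]
      exact continuous_list_prod _ (fun i _ =>
        ((continuous_apply (d.2.1 i)).zpow _))
    have : {w : (Fin L → Bool) → G | (List.ofFn fun i => (w (d.2.1 i)) ^ ((d.2.2 i : ℤ))).prod ≠ 1}
        = (fun w : (Fin L → Bool) → G => (List.ofFn fun i => (w (d.2.1 i)) ^ ((d.2.2 i : ℤ))).prod) ⁻¹' {1}ᶜ := rfl
    rw [this]
    exact (isOpen_compl_singleton).preimage hcont
  · exact isOpen_univ

lemma step_exists (H : Subgroup G)
    (hcomm : ∀ x ∈ H, ∀ y ∈ H, x * y = y * x)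
    (htf : ∀ x ∈ H, ∀ k : ℤ, k ≠ 0 → x ^ k = 1 → x = 1)
    (hacc : ∀ x ∈ (H : Set G), AccPt x (Filter.principal (H : Set G)))
    (n : ℕ) (f : (Fin n → Bool) → G × ℝ) (hf : StageInv H n f) :
    ∃ g : (Fin (n+1) → Bool) → G × ℝ, StageInv H (n+1) g ∧ Link n f g := by
  classical
  obtain ⟨hfH, hfr, _⟩ := hf
  letI : CommGroup H :=
    { (inferInstance : Group H) with
      mul_comm := fun a b => Subtype.ext (hcomm a a.2 b b.2) }
  have htfH : ∀ a : H, ∀ k : ℤ, k ≠ 0 → a ^ k = 1 → a = 1 := by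
    intro a k hk ha
    have : (a : G) ^ k = 1 := by
      have := congrArg (Subtype.val) ha
      simpa using this
    exact Subtype.ext (htf a a.2 k hk this)
  -- the parent map and open balls
  set par : (Fin (n+1) → Bool) → (Fin n → Bool) := fun s => (fun j => s j.castSucc) with hpar
  set U : (Fin (n+1) → Bool) → Set G := fun s => ball (f (par s)).1 (f (par s)).2 with hU
  have hUopen : ∀ s, IsOpen (U s) := fun s => isOpen_ball
  have hUinf : ∀ s, ({a : H | (a : G) ∈ U s}).Infinite := by
    intro s
    have h1 : (U s ∩ (H : Set G)).Infinite :=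
      acc_infinite (hacc _ (hfH (par s))) (hUopen s) (mem_ball_self (hfr (par s)).1)
    have h2 : (U s ∩ (H : Set G)) ⊆ Set.range (Subtype.val : H → G) := by
      rintro x ⟨-, hx⟩; exact ⟨⟨x, hx⟩, rfl⟩
    have := h1.preimage (f := (Subtype.val : H → G)) h2
    apply Set.Infinite.mono _ this
    intro a ha
    exact ha.1
  -- select centers
  obtain ⟨c, hcmem, hcind⟩ := select htfH (n+1) (fun s => {a : H | (a : G) ∈ U s}) hUinf
  set cG : (Fin (n+1) → Bool) → G := fun s => (c s : G) with hcG
  -- centers satisfy all constraints in G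
  have hcenter : ∀ m : ℕ, 1 ≤ m → ∀ σ : Fin m → (Fin (n+1) → Bool), Function.Injective σ →
      ∀ k : Fin m → ℤ, (∀ i, k i ≠ 0) → (∀ i, (k i).natAbs ≤ n+1) →
      (List.ofFn fun i => (cG (σ i)) ^ (k i)).prod ≠ 1 := by
    intro m hm σ hσ k hk0 hkB
    have hH := hcind m hm σ hσ k hk0 hkB
    have : (List.ofFn fun i => (cG (σ i)) ^ (k i)).prod
        = ((∏ i, (c (σ i)) ^ (k i) : H) : G) := by
      rw [← List.prod_ofFn (f := fun i => (c (σ i)) ^ (k i))]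
      calc (List.ofFn fun i => (cG (σ i)) ^ (k i)).prod
          = ((List.ofFn fun i => (c (σ i)) ^ (k i)).map H.subtype).prod := by
            rw [List.map_ofFn]
            have hfe : (fun i => (↑(c (σ i)) : G) ^ k i) = (Subtype.val ∘ fun i => c (σ i) ^ k i) := by
              funext i
              rw [Function.comp_apply, SubgroupClass.coe_zpow]
            rw [hfe]; rfl
        _ = ((List.ofFn fun i => (c (σ i)) ^ (k i)).prod : H) := (map_list_prod H.subtype _).symm
    rw [this]
    intro hcon
    exact hH (by exact_mod_cast hcon)
  -- good set of assignments is open and contains cG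
  set GD : Set ((Fin (n+1) → Bool) → G) := ⋂ d : LevelCon (n+1), conSet (n+1) d with hGD
  have hGDopen : IsOpen GD := isOpen_iInter_of_finite (fun d => conSet_open _ d)
  have hcGmem : cG ∈ GD := by
    refine Set.mem_iInter.mpr (fun d => ?_)
    rw [conSet]
    split
    · next hrel =>
      exact hcenter d.1 hrel.1 d.2.1 hrel.2.1 (fun i => (d.2.2 i : ℤ)) hrel.2.2
        (fun i => by
          have h2 := (d.2.2 i).2
          rw [Finset.mem_Icc] at h2
          show ((d.2.2 i : ℤ)).natAbs ≤ n+1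
          omega)
    · trivial
  obtain ⟨ε, hε, hball⟩ := Metric.isOpen_iff.mp hGDopen cG hcGmem
  -- radii
  set r : (Fin (n+1) → Bool) → ℝ := fun s =>
    min (ε/3) (min ((1/2 : ℝ)^(n+1)) (((f (par s)).2 - dist (cG s) (f (par s)).1)/2)) with hr
  have hslack : ∀ s, 0 < (f (par s)).2 - dist (cG s) (f (par s)).1 := by
    intro s
    have : dist (cG s) (f (par s)).1 < (f (par s)).2 := by
      have := (hcmem s)
      simpa [hU, mem_ball] using this
    linarith
  have hrpos : ∀ s, 0 < r s := by
    intro s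
    refine lt_min (by linarith) (lt_min (by positivity) (by linarith [hslack s]))
  refine ⟨fun s => (cG s, r s), ⟨fun s => (c s).2, fun s => ⟨hrpos s, ?_⟩, ?_⟩, ?_⟩
  · exact le_trans (min_le_right _ _) (min_le_left _ _)
  · -- SafeAt n+1
    intro m hm hmL σ hσ k hk0 hkB z hz
    set w : (Fin (n+1) → Bool) → G := fun t => if h : ∃ i, σ i = t then z h.choose else cG t with hw
    have hwdist : dist w cG < ε := by
      rw [dist_pi_lt_iff hε]
      intro t
      by_cases h : ∃ i, σ i = t
      · simp only [hw, dif_pos h]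
        have : dist (z h.choose) (cG (σ h.choose)) ≤ r (σ h.choose) := hz h.choose
        rw [h.choose_spec] at this
        calc dist (z h.choose) (cG t) ≤ r t := this
          _ ≤ ε/3 := min_le_left _ _
          _ < ε := by linarith
      · simp only [hw, dif_neg h, dist_self]; exact hε
    have hwGD : w ∈ GD := hball (by rwa [mem_ball])
    have hwcon := Set.mem_iInter.mp hwGD
      ⟨⟨m, Nat.lt_succ_of_le hmL⟩, σ, fun i => ⟨k i, by
        rw [Finset.mem_Icc]
        have := hkB i
        omega⟩⟩
    rw [conSet, if_pos ⟨hm, hσ, fun i => hk0 i⟩] at hwcon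
    have hwσ : ∀ i, w (σ i) = z i := by
      intro i
      have h : ∃ i', σ i' = σ i := ⟨i, rfl⟩
      simp only [hw, dif_pos h]
      exact congrArg z (hσ h.choose_spec)
    intro hcon
    apply hwcon
    show (List.ofFn fun i => (w (σ i)) ^ (k i)).prod = 1
    have hlist : (List.ofFn fun i => (w (σ i)) ^ (k i)) = (List.ofFn fun i => z i ^ k i) := by
      congr 1
      funext i
      rw [hwσ i]
    rw [hlist]
    exact hcon
  · -- Link
    intro s
    refine closedBall_subset_closedBall' ?_
    have h1 : r s ≤ ((f (par s)).2 - dist (cG s) (f (par s)).1)/2 :=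
      le_trans (min_le_right _ _) (min_le_right _ _)
    have := hslack s
    simp only []
    linarith
end Step

section MainAux
universe u_v
variable {G : Type u_v} [Group G] [MetricSpace G] [IsTopologicalGroup G]

lemma depRec {α : ℕ → Type*} (Inv : ∀ n, α n → Prop) (Lnk : ∀ n, α n → α (n+1) → Prop)
    (h0 : ∃ a, Inv 0 a) (hstep : ∀ n a, Inv n a → ∃ b, Inv (n+1) b ∧ Lnk n a b) :
    ∃ F : ∀ n, α n, (∀ n, Inv n (F n)) ∧ ∀ n, Lnk n (F n) (F (n+1)) := by
  classical
  let T : ∀ n, {a : α n // Inv n a} := fun n => Nat.rec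
    ⟨h0.choose, h0.choose_spec⟩
    (fun n p => ⟨(hstep n p.1 p.2).choose, (hstep n p.1 p.2).choose_spec.1⟩) n
  exact ⟨fun n => (T n).1, fun n => (T n).2,
    fun n => (hstep n (T n).1 (T n).2).choose_spec.2⟩

theorem main_aux [CompleteSpace G] (H : Subgroup G)
    (hcomm : ∀ x ∈ H, ∀ y ∈ H, x * y = y * x)
    (htf : ∀ x ∈ H, ∀ k : ℤ, k ≠ 0 → x ^ k = 1 → x = 1)
    (hne : (H : Set G).Nonempty)
    (hacc : ∀ x ∈ (H : Set G), AccPt x (Filter.principal (H : Set G))) :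
    ∃ P : Set G,
      (P.Nonempty ∧ (∃ m : MetricSpace P, m.toUniformSpace.toTopologicalSpace =
          (inferInstance : TopologicalSpace P) ∧ @CompleteSpace P m.toUniformSpace) ∧
        ∀ x ∈ P, AccPt x (Filter.principal P)) ∧
      ((∀ x ∈ Subgroup.closure P, ∀ y ∈ Subgroup.closure P, x * y = y * x) ∧
        ∀ n : ℕ, 1 ≤ n → ∀ s : Fin n → G, (∀ i, s i ∈ P) → Function.Injective s →
        ∀ k : Fin n → ℤ, (∀ i, k i ≠ 0) → (List.ofFn fun i => s i ^ k i).prod ≠ 1) := by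
  classical
  -- base stage
  have hbase : ∃ f : (Fin 0 → Bool) → G × ℝ, StageInv H 0 f := by
    refine ⟨fun _ => (hne.choose, 1), fun s => hne.choose_spec, fun s => by norm_num, ?_⟩
    intro m hm hm0
    omega
  obtain ⟨F, hInv, hLink⟩ := depRec (StageInv H) Link hbase (step_exists H hcomm htf hacc)
  -- branches
  set node : (ℕ → Bool) → ∀ n : ℕ, (Fin n → Bool) := fun b n j => b (j : ℕ) with hnode
  set x : (ℕ → Bool) → ℕ → G := fun b n => (F n (node b n)).1 with hx
  set ρ : (ℕ → Bool) → ℕ → ℝ := fun b n => (F n (node b n)).2 with hρ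
  have hρpos : ∀ b n, 0 < ρ b n := fun b n => ((hInv n).2.1 _).1
  have hρle : ∀ b n, ρ b n ≤ (1/2 : ℝ)^n := fun b n => ((hInv n).2.1 _).2
  have hnest : ∀ b n, closedBall (x b (n+1)) (ρ b (n+1)) ⊆ closedBall (x b n) (ρ b n) :=
    fun b n => hLink n (node b (n+1))
  have hchain : ∀ b n m, n ≤ m → closedBall (x b m) (ρ b m) ⊆ closedBall (x b n) (ρ b n) := by
    intro b n m hnm
    induction m, hnm using Nat.le_induction with
    | base => exact subset_rfl
    | succ m hnm ih => exact (hnest b m).trans ih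
  have hxball : ∀ b n m, n ≤ m → x b m ∈ closedBall (x b n) (ρ b n) :=
    fun b n m hnm => hchain b n m hnm (mem_closedBall_self (hρpos b m).le)
  have hcauchy : ∀ b, CauchySeq (x b) := by
    intro b
    refine cauchySeq_of_le_geometric (1/2) 1 (by norm_num) (fun n => ?_)
    have := hxball b n (n+1) (Nat.le_succ n)
    rw [mem_closedBall] at this
    rw [dist_comm, one_mul]
    exact this.trans (hρle b n)
  choose Y hY using fun b => cauchySeq_tendsto_of_complete (hcauchy b)
  have hYball : ∀ b n, Y b ∈ closedBall (x b n) (ρ b n) := by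
    intro b n
    refine Metric.isClosed_closedBall.mem_of_tendsto (hY b) ?_
    rw [eventually_atTop]
    exact ⟨n, fun m hm => hxball b n m hm⟩
  have hYclos : ∀ b, Y b ∈ closure (H : Set G) := by
    intro b
    refine mem_closure_of_tendsto (hY b) (Eventually.of_forall (fun n => ?_))
    exact (hInv n).1 _
  -- the key independence property of limits
  have hkey : ∀ m : ℕ, 1 ≤ m → ∀ b : Fin m → (ℕ → Bool), (∀ i j, i ≠ j → b i ≠ b j) →
      ∀ k : Fin m → ℤ, (∀ i, k i ≠ 0) → (List.ofFn fun i => Y (b i) ^ k i).prod ≠ 1 := by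
    intro m hm b hb k hk0
    have hdec : ∀ (p : Fin m × Fin m), p.1 ≠ p.2 → ∃ t, b p.1 t ≠ b p.2 t := by
      intro p hp
      exact Function.ne_iff.mp (hb p.1 p.2 hp)
    set q : Fin m × Fin m → ℕ := fun p =>
      if h : p.1 = p.2 then 0 else Nat.find (hdec p h) with hq
    set n : ℕ := max (max m (Finset.univ.sup fun i => (k i).natAbs))
      ((Finset.univ.sup q) + 1) with hn
    have hσinj : Function.Injective (fun i => node (b i) n) := by
      intro i j hij
      by_contra hij'
      have ht := Nat.find_spec (hdec (i, j) hij')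
      have htlt : Nat.find (hdec (i, j) hij') < n := by
        have h1 : q (i, j) = Nat.find (hdec (i, j) hij') := dif_neg hij'
        have h2 : q (i, j) ≤ Finset.univ.sup q := Finset.le_sup (Finset.mem_univ _)
        have h3 : Finset.univ.sup q + 1 ≤ n := le_max_right _ _
        omega
      have := congrFun hij ⟨_, htlt⟩
      exact ht this
    have := (hInv n).2.2 m hm
      (le_trans (le_max_left m _) (le_max_left _ _)) (fun i => node (b i) n) hσinj k hk0
      (fun i => by
        have h1 : (k i).natAbs ≤ Finset.univ.sup fun i => (k i).natAbs :=
          Finset.le_sup (f := fun i => (k i).natAbs) (Finset.mem_univ i)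
        have h2 : (Finset.univ.sup fun i => (k i).natAbs) ≤ n :=
          le_trans (le_max_right m _) (le_max_left _ _)
        omega)
      (fun i => Y (b i))
      (fun i => mem_closedBall.mp (hYball (b i) n))
    exact this
  have hYinj : Function.Injective Y := by
    intro b b' hbb'
    by_contra hne'
    set bb : Fin 2 → (ℕ → Bool) := fun i => if (i : ℕ) = 0 then b else b' with hbbdef
    set kk : Fin 2 → ℤ := fun i => if (i : ℕ) = 0 then 1 else -1 with hkkdef
    have hpair : ∀ i j : Fin 2, i ≠ j → bb i ≠ bb j := by
      intro i j hij
      have hvij : (i : ℕ) ≠ (j : ℕ) := fun h => hij (Fin.ext h)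
      by_cases hi : (i : ℕ) = 0 <;> by_cases hj : (j : ℕ) = 0 <;>
        simp only [hbbdef, hi, hj, if_pos, if_neg, if_true, if_false, reduceIte]
      · omega
      · exact hne'
      · exact fun h => hne' h.symm
      · omega
    have hkk0 : ∀ i, kk i ≠ 0 := by
      intro i
      by_cases hi : (i : ℕ) = 0 <;> simp only [hkkdef, hi, if_true, if_false, reduceIte] <;> norm_num
    have := hkey 2 (by norm_num) bb hpair kk hkk0
    apply this
    have e0 : bb 0 = b := by simp [hbbdef]
    have e1 : bb 1 = b' := by simp [hbbdef]
    have k0 : kk 0 = 1 := by simp [hkkdef]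
    have k1 : kk 1 = -1 := by simp [hkkdef]
    rw [List.ofFn_succ, List.ofFn_succ, List.ofFn_zero]
    simp only [Fin.succ_zero_eq_one, e0, e1, k0, k1, List.prod_cons, List.prod_nil]
    rw [hbb']
    group
  -- continuity of Y
  have hYcont : Continuous Y := by
    rw [continuous_iff_continuousAt]
    intro b
    rw [ContinuousAt, Metric.tendsto_nhds]
    intro ε hε
    obtain ⟨n, hn⟩ := exists_pow_lt_of_lt_one (half_pos hε) (by norm_num : (1/2 : ℝ) < 1)
    have hV : {b' : ℕ → Bool | node b' n = node b n} ∈ nhds b := by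
      have : {b' : ℕ → Bool | node b' n = node b n} = ⋂ j : Fin n, {b' | b' (j : ℕ) = b (j : ℕ)} := by
        ext b'
        simp only [Set.mem_setOf_eq, Set.mem_iInter]
        constructor
        · intro h j; exact congrFun h j
        · intro h; funext j; exact h j
      rw [this]
      refine (isOpen_iInter_of_finite (fun j => ?_)).mem_nhds (by simp)
      show IsOpen ((fun b' : ℕ → Bool => b' ((j : Fin n) : ℕ)) ⁻¹' {y | y = b ((j : Fin n) : ℕ)})
      exact (isOpen_discrete _).preimage (continuous_apply _)
    refine Filter.mem_of_superset hV ?_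
    intro b' hb'
    have h1 : Y b' ∈ closedBall (x b n) (ρ b n) := by
      have hthis := hYball b' n
      have e1 : x b' n = x b n := congrArg (fun t => (F n t).1) hb'
      have e2 : ρ b' n = ρ b n := congrArg (fun t => (F n t).2) hb'
      rwa [e1, e2] at hthis
    have h2 : Y b ∈ closedBall (x b n) (ρ b n) := hYball b n
    rw [mem_closedBall] at h1 h2
    calc dist (Y b') (Y b) ≤ dist (Y b') (x b n) + dist (x b n) (Y b) := dist_triangle _ _ _
      _ ≤ ρ b n + ρ b n := by rw [dist_comm (x b n)]; exact add_le_add h1 h2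
      _ ≤ (1/2:ℝ)^n + (1/2:ℝ)^n := add_le_add (hρle b n) (hρle b n)
      _ < ε/2 + ε/2 := by linarith
      _ = ε := by ring
  -- the perfect set
  refine ⟨Set.range Y, ⟨⟨Y (fun _ => false), Set.mem_range_self _⟩, ?_, ?_⟩, ?_, ?_⟩
  · -- completely metrizable
    have hPcompact : IsCompact (Set.range Y) := isCompact_range hYcont
    have hPclosed : IsClosed (Set.range Y) := hPcompact.isClosed
    exact ⟨Subtype.metricSpace, rfl, hPclosed.completeSpace_coe⟩
  · -- no isolated points
    rintro _ ⟨b, rfl⟩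
    rw [accPt_iff_nhds]
    intro U hU
    obtain ⟨ε, hε, hballU⟩ := Metric.mem_nhds_iff.mp hU
    obtain ⟨n, hn⟩ := exists_pow_lt_of_lt_one (by positivity : (0:ℝ) < ε/2) (by norm_num : (1/2 : ℝ) < 1)
    set b' : ℕ → Bool := fun t => if t = n then !(b n) else b t with hb'
    have hagree : node b' n = node b n := by
      funext j
      have hj : (j : ℕ) ≠ n := Nat.ne_of_lt j.2
      show (if (j : ℕ) = n then !(b n) else b (j : ℕ)) = b (j : ℕ)
      rw [if_neg hj]
    have hbne : b' ≠ b := by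
      intro h
      have := congrFun h n
      simp [hb'] at this
    refine ⟨Y b', ⟨?_, Set.mem_range_self _⟩, fun h => hbne (hYinj h)⟩
    apply hballU
    rw [mem_ball]
    have h1 : Y b' ∈ closedBall (x b n) (ρ b n) := by
      have hthis := hYball b' n
      have e1 : x b' n = x b n := congrArg (fun t => (F n t).1) hagree
      have e2 : ρ b' n = ρ b n := congrArg (fun t => (F n t).2) hagree
      rwa [e1, e2] at hthis
    have h2 : Y b ∈ closedBall (x b n) (ρ b n) := hYball b n
    rw [mem_closedBall] at h1 h2
    calc dist (Y b') (Y b) ≤ dist (Y b') (x b n) + dist (x b n) (Y b) := dist_triangle _ _ _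
      _ ≤ ρ b n + ρ b n := by rw [dist_comm (x b n)]; exact add_le_add h1 h2
      _ ≤ (1/2:ℝ)^n + (1/2:ℝ)^n := add_le_add (hρle b n) (hρle b n)
      _ < ε/2 + ε/2 := by linarith
      _ = ε := by ring
  · -- commutation
    have hcl : ∀ a ∈ closure (H : Set G), ∀ c ∈ closure (H : Set G), a * c = c * a := by
      have step1 : ∀ y ∈ H, ∀ a ∈ closure (H : Set G), a * y = y * a := by
        intro y hy
        have : closure (H : Set G) ⊆ {a | a * y = y * a} := by
          refine closure_minimal ?_ (isClosed_eq (continuous_mul_right y) (continuous_mul_left y))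
          intro a ha
          exact hcomm a ha y hy
        exact fun a ha => this ha
      intro a ha
      have : closure (H : Set G) ⊆ {c | a * c = c * a} := by
        refine closure_minimal ?_ (isClosed_eq (continuous_mul_left a) (continuous_mul_right a))
        intro y hy
        exact step1 y hy a ha
      exact fun c hc => this hc
    have hsub : Subgroup.closure (Set.range Y) ≤ H.topologicalClosure := by
      rw [Subgroup.closure_le]
      rintro _ ⟨b, rfl⟩
      exact hYclos b
    intro a ha c hc
    exact hcl a (hsub ha) c (hsub hc)
  · -- free basis
    intro m hm s hs hsinj k hk0
    have hbex : ∀ i, ∃ b, Y b = s i := fun i => hs i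
    choose b hb using hbex
    have hbdist : ∀ i j, i ≠ j → b i ≠ b j := by
      intro i j hij hbij
      exact hsinj.ne hij (by rw [← hb i, ← hb j, hbij])
    have := hkey m hm b hbdist k hk0
    have hlist : (List.ofFn fun i => Y (b i) ^ k i) = (List.ofFn fun i => s i ^ k i) := by
      congr 1
      funext i
      rw [hb i]
    rwa [hlist] at this
end MainAux
end Construction

theorem statement9 {G : Type u} [Group G] [TopologicalSpace G] [IsTopologicalGroup G]
    (hG : CompletelyMetrizable G)
    (h : ∃ H : Subgroup G, (∀ x ∈ H, ∀ y ∈ H, x * y = y * x) ∧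
      (∃ ι : Type u, Nonempty (H ≃* Multiplicative (FreeAbelianGroup ι))) ∧
      DenseInItselfSet (H : Set G)) :
    ∃ P : Set G, IsPerfectSet P ∧ IsFreeAbelianBasis P := by
  classical
  obtain ⟨mG, hmG, hcomp⟩ := hG
  subst hmG
  letI : MetricSpace G := mG
  haveI : CompleteSpace G := hcomp
  obtain ⟨H, hcomm, ⟨ι, ⟨e⟩⟩, hdi⟩ := h
  obtain ⟨hne, hacc⟩ : (H : Set G).Nonempty ∧
      ∀ x ∈ (H : Set G), AccPt x (Filter.principal (H : Set G)) := hdi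
  have htf : ∀ x ∈ H, ∀ k : ℤ, k ≠ 0 → x ^ k = 1 → x = 1 := by
    intro x hx k hk hxk
    have ha : (⟨x, hx⟩ : H) ^ k = 1 := by
      apply Subtype.ext
      rw [SubgroupClass.coe_zpow]
      exact hxk
    have hb : (e ⟨x, hx⟩) ^ k = 1 := by rw [← map_zpow, ha, map_one]
    have hc : k • (Multiplicative.toAdd (e ⟨x, hx⟩)) = 0 := by
      rw [← toAdd_zpow, hb]
      rfl
    have hd : Multiplicative.toAdd (e ⟨x, hx⟩) = 0 := by
      have h1 := congrArg (FreeAbelianGroup.equivFinsupp ι) hc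
      rw [map_zsmul, map_zero] at h1
      have hfz : FreeAbelianGroup.equivFinsupp ι (Multiplicative.toAdd (e ⟨x, hx⟩)) = 0 := by
        ext a
        have h2 := DFunLike.congr_fun h1 a
        rw [Finsupp.smul_apply, Finsupp.coe_zero, Pi.zero_apply, smul_eq_mul] at h2
        rcases mul_eq_zero.mp h2 with h | h
        · exact absurd h hk
        · simpa using h
      have := (FreeAbelianGroup.equivFinsupp ι).injective (hfz.trans (map_zero _).symm)
      exact this
    have he1 : e ⟨x, hx⟩ = 1 := by
      have := congrArg Multiplicative.ofAdd hd
      simpa using this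
    exact congrArg Subtype.val (e.injective (he1.trans (map_one e).symm))
  obtain ⟨P, hperf, hbasis⟩ := main_aux H hcomm htf hne hacc
  refine ⟨P, ?_, ?_⟩
  · show P.Nonempty ∧ CompletelyMetrizable P ∧ ∀ x ∈ P, AccPt x (Filter.principal P)
    exact ⟨hperf.1, hperf.2.1, hperf.2.2⟩
  · show (∀ x ∈ Subgroup.closure P, ∀ y ∈ Subgroup.closure P, x * y = y * x) ∧ _
    exact hbasis
end

section
/- Let G be a completely metrizable topological group. If G has a torsion-free subgroup which is dense-in-itself, then G contains a torsion-free subgroup generated by a perfect set, i.e. there exists a perfect set P ⊆ G such that the subgroup generated by P is torsion-free. -/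
open Set Filter Cardinal FirstOrder

universe u v

/-- A monoid is torsion-free if no nontrivial elements have finite order
(the old Mathlib `Monoid.IsTorsionFree`, removed since). -/
def Monoid.IsTorsionFree (G : Type*) [Monoid G] : Prop :=
  ∀ g : G, g ≠ 1 → ¬IsOfFinOrder g


open Metric Topology

section Statement13Dev

set_option linter.unusedSectionVars false

variable {G : Type u} [Group G] [MetricSpace G] [CompleteSpace G] [IsTopologicalGroup G]

/-- Generic recursion-with-links principle. -/
lemma nat_rec_chain {α : Type*} (P : ℕ → α → Prop) (L : ℕ → α → α → Prop)
    (h0 : ∃ a, P 0 a) (hs : ∀ m a, P m a → ∃ b, P (m+1) b ∧ L m a b) :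
    ∃ f : ℕ → α, (∀ m, P m (f m)) ∧ ∀ m, L m (f m) (f (m+1)) := by
  classical
  choose b hb hl using hs
  refine ⟨fun m => Nat.rec h0.choose
    (fun m a => if h : P m a then b m a h else a) m, ?_⟩
  set f : ℕ → α := fun m => Nat.rec h0.choose
    (fun m a => if h : P m a then b m a h else a) m with hf
  have hP : ∀ m, P m (f m) := by
    intro m
    induction m with
    | zero => exact h0.choose_spec
    | succ m ih =>
      have : f (m+1) = if h : P m (f m) then b m (f m) h else f m := rfl
      rw [this, dif_pos ih]
      exact hb m (f m) ih
  refine ⟨hP, fun m => ?_⟩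
  have : f (m+1) = if h : P m (f m) then b m (f m) h else f m := rfl
  rw [this, dif_pos (hP m)]
  exact hl m (f m) (hP m)

lemma pure_eq_of' {α : Type*} (i : α) : (pure i : FreeGroup α) = FreeGroup.of i := rfl

lemma cont_lift (n : ℕ) (w : FreeGroup (Fin n)) :
    Continuous fun x : Fin n → G => FreeGroup.lift x w := by
  induction w using FreeGroup.induction_on with
  | C1 => simpa using continuous_const
  | of i => simpa [pure_eq_of', FreeGroup.lift_apply_of] using continuous_apply i
  | inv_of i _ => simp only [map_inv, FreeGroup.lift_apply_of]; exact (continuous_apply i).inv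
  | mul u v hu hv => simp only [map_mul]; exact hu.mul hv

lemma lift_mem (H : Subgroup G) (n : ℕ) (x : Fin n → G) (hx : ∀ i, x i ∈ H)
    (w : FreeGroup (Fin n)) : FreeGroup.lift x w ∈ H := by
  induction w using FreeGroup.induction_on with
  | C1 => simpa using H.one_mem
  | of i => simpa [pure_eq_of', FreeGroup.lift_apply_of] using hx i
  | inv_of i _ => rw [map_inv]; exact H.inv_mem (by simpa [pure_eq_of', FreeGroup.lift_apply_of] using hx i)
  | mul u v hu hv => simpa using H.mul_mem hu hv

lemma tf_elt {H : Subgroup G} (htf : Monoid.IsTorsionFree ↥H) {g : G} (hg : g ∈ H)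
    {k : ℕ} (hk : k ≠ 0) (h1 : g ^ k = 1) : g = 1 := by
  by_contra hne
  have hne' : (⟨g, hg⟩ : ↥H) ≠ 1 := by
    simp only [ne_eq, Subtype.ext_iff]; exact hne
  refine htf ⟨g, hg⟩ hne' ?_
  refine isOfFinOrder_iff_pow_eq_one.mpr ⟨k, Nat.pos_of_ne_zero hk, ?_⟩
  ext; simpa using h1

lemma acc_closure {X : Type*} [TopologicalSpace X] {S : Set X}
    (hS : ∀ x ∈ S, AccPt x (𝓟 S)) : ∀ a ∈ closure S, AccPt a (𝓟 S) := by
  intro a ha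
  by_cases h : a ∈ S
  · exact hS a h
  · rw [accPt_iff_nhds]
    intro U hU
    obtain ⟨y, hyU, hyS⟩ := mem_closure_iff_nhds.mp ha U hU
    exact ⟨y, ⟨hyU, hyS⟩, fun hya => h (hya ▸ hyS)⟩

lemma subgroup_list {G' : Type*} [Group G'] {s : Set G'} {x : G'}
    (hx : x ∈ Subgroup.closure s) :
    ∃ l : List G', (∀ y ∈ l, y ∈ s ∨ y⁻¹ ∈ s) ∧ l.prod = x := by
  have hx' : x ∈ Submonoid.closure (s ∪ s⁻¹) := by
    have h2 := Subgroup.closure_toSubmonoid s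
    have hmem : x ∈ (Subgroup.closure s).toSubmonoid := hx
    rwa [h2] at hmem
  obtain ⟨l, hl, hp⟩ := Submonoid.exists_list_of_mem_closure hx'
  refine ⟨l, fun y hy => ?_, hp⟩
  rcases hl y hy with h | h
  · exact Or.inl h
  · exact Or.inr (Set.mem_inv.mp h)

def myInv (K : Set G) (m : ℕ) (c : (ℕ → Bool) → Set G) : Prop :=
  (∀ σ, IsOpen (c σ)) ∧ (∀ σ, (c σ ∩ K).Nonempty) ∧
  (∀ σ τ, (∀ i < m, σ i = τ i) → c σ = c τ) ∧
  (∀ σ, Metric.diam (c σ) ≤ (1/2 : ℝ)^m) ∧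
  (∀ σ, Bornology.IsBounded (c σ)) ∧
  (∀ σ τ, ¬(∀ i < m, σ i = τ i) → c σ ∩ c τ = ∅)

def myLink (K : Set G) (R : (n : ℕ) × (FreeGroup (Fin n) × ℕ)) (m : ℕ)
    (c c' : (ℕ → Bool) → Set G) : Prop :=
  (∀ σ, closure (c' σ) ⊆ c σ) ∧
  ∀ t : Fin R.1 → (ℕ → Bool), (∀ i j, i ≠ j → ∃ l, l < m + 1 ∧ t i l ≠ t j l) →
    ∀ x : Fin R.1 → G, (∀ i, x i ∈ c' (t i) ∩ K) →
      (FreeGroup.lift x R.2.1) ^ (R.2.2 + 1) = 1 → FreeGroup.lift x R.2.1 = 1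

lemma shrink {H : Subgroup G} (htf : Monoid.IsTorsionFree ↥H)
    (n : ℕ) (w : FreeGroup (Fin n)) (k : ℕ) (hk : k ≠ 0)
    (U : Fin n → Set G) (hUo : ∀ i, IsOpen (U i))
    (hUne : ∀ i, (U i ∩ closure (H : Set G)).Nonempty) :
    ∃ V : Fin n → Set G, (∀ i, IsOpen (V i)) ∧ (∀ i, V i ⊆ U i) ∧
      (∀ i, (V i ∩ closure (H : Set G)).Nonempty) ∧
      ∀ x : Fin n → G, (∀ i, x i ∈ V i ∩ closure (H : Set G)) →
        (FreeGroup.lift x w) ^ k = 1 → FreeGroup.lift x w = 1 := by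
  classical
  by_cases hcase : ∃ y : Fin n → G,
      (∀ i, y i ∈ U i ∩ closure (H : Set G)) ∧ (FreeGroup.lift y w) ^ k ≠ 1
  · obtain ⟨y, hy, hyk⟩ := hcase
    have hW : IsOpen {x : Fin n → G | (FreeGroup.lift x w) ^ k ≠ 1} := by
      have : Continuous fun x : Fin n → G => (FreeGroup.lift x w) ^ k :=
        (cont_lift n w).pow k
      exact isOpen_compl_singleton.preimage this
    obtain ⟨I, u, hu, hsub⟩ := isOpen_pi_iff.mp hW y hyk
    refine ⟨fun i => U i ∩ (if i ∈ I then u i else univ), ?_, ?_, ?_, ?_⟩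
    · intro i
      refine (hUo i).inter ?_
      split
      · exact (hu i ‹_›).1
      · exact isOpen_univ
    · exact fun i => inter_subset_left
    · intro i
      refine ⟨y i, ⟨(hy i).1, ?_⟩, (hy i).2⟩
      split
      · exact (hu i ‹_›).2
      · trivial
    · intro x hx hxk
      exfalso
      have : x ∈ (I : Set (Fin n)).pi u := by
        intro i hi
        have := (hx i).1.2
        rwa [if_pos (Finset.mem_coe.mp hi)] at this
      exact hsub this hxk
  · push_neg at hcase
    refine ⟨U, hUo, fun i => subset_rfl, hUne, ?_⟩
    intro x hx _
    have hxc : ∀ i, x i ∈ closure (U i ∩ (H : Set G)) := by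
      intro i
      exact (hUo i).inter_closure ⟨(hx i).1, (hx i).2⟩
    have hxpi : x ∈ closure (Set.pi univ fun i => U i ∩ (H : Set G)) := by
      rw [closure_pi_set]
      exact fun i _ => hxc i
    have hclosed : IsClosed {z : Fin n → G | FreeGroup.lift z w = 1} :=
      isClosed_singleton.preimage (cont_lift n w)
    have hsub : (Set.pi univ fun i => U i ∩ (H : Set G)) ⊆
        {z : Fin n → G | FreeGroup.lift z w = 1} := by
      intro y hy
      have hyH : ∀ i, y i ∈ H := fun i => (hy i (mem_univ i)).2
      have h1 : (FreeGroup.lift y w) ^ k = 1 :=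
        hcase y fun i => ⟨(hy i (mem_univ i)).1, subset_closure (hyH i)⟩
      exact tf_elt htf (lift_mem H n y hyH w) hk h1
    exact closure_minimal hsub hclosed hxpi

lemma fold {H : Subgroup G} (htf : Monoid.IsTorsionFree ↥H)
    (n : ℕ) (w : FreeGroup (Fin n)) (k : ℕ) (hk : k ≠ 0)
    {ι : Type} [DecidableEq ι] (ts : List ((Fin n → ι)))
    (d : ι → Set G) (hdo : ∀ s, IsOpen (d s))
    (hdne : ∀ s, (d s ∩ closure (H : Set G)).Nonempty) :
    ∃ d' : ι → Set G, (∀ s, IsOpen (d' s)) ∧ (∀ s, d' s ⊆ d s) ∧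
      (∀ s, (d' s ∩ closure (H : Set G)).Nonempty) ∧
      ∀ t ∈ ts, Function.Injective t →
        ∀ x : Fin n → G, (∀ i, x i ∈ d' (t i) ∩ closure (H : Set G)) →
          (FreeGroup.lift x w) ^ k = 1 → FreeGroup.lift x w = 1 := by
  classical
  induction ts generalizing d with
  | nil => exact ⟨d, hdo, fun s => subset_rfl, hdne, fun t ht => absurd ht List.not_mem_nil⟩
  | cons t ts ih =>
    obtain ⟨d₁, hd₁o, hd₁sub, hd₁ne, hd₁kill⟩ := ih d hdo hdne
    by_cases hinj : Function.Injective t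
    · obtain ⟨V, hVo, hVsub, hVne, hVkill⟩ :=
        shrink htf n w k hk (fun i => d₁ (t i)) (fun i => hd₁o _) (fun i => hd₁ne _)
      refine ⟨fun s => if h : ∃ i, t i = s then V h.choose else d₁ s, ?_, ?_, ?_, ?_⟩
      · intro s
        dsimp only
        split
        · exact hVo _
        · exact hd₁o s
      · intro s
        dsimp only
        split
        · next h =>
            refine (hVsub h.choose).trans ?_
            rw [h.choose_spec]
            exact hd₁sub s
        · exact hd₁sub s
      · intro s
        dsimp only
        split
        · exact hVne _
        · exact hd₁ne s
      · intro t' ht' ht'inj x hx hxk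
        rcases List.mem_cons.mp ht' with rfl | hmem
        · refine hVkill x ?_ hxk
          intro i
          have hex : ∃ j, t' j = t' i := ⟨i, rfl⟩
          have := hx i
          dsimp only at this
          rw [dif_pos hex] at this
          have : x i ∈ V hex.choose ∩ closure (H : Set G) := this
          have heq : hex.choose = i := ht'inj hex.choose_spec
          rwa [heq] at this
        · refine hd₁kill t' hmem ht'inj x ?_ hxk
          intro i
          have := hx i
          dsimp only at this
          split at this
          · next h =>
              refine ⟨?_, this.2⟩
              have := (hVsub h.choose) this.1
              rwa [h.choose_spec] at this
          · exact this
    · refine ⟨d₁, hd₁o, hd₁sub, hd₁ne, ?_⟩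
      intro t' ht' ht'inj
      rcases List.mem_cons.mp ht' with rfl | hmem
      · exact absurd ht'inj hinj
      · exact hd₁kill t' hmem ht'inj

lemma step {H : Subgroup G} (htf : Monoid.IsTorsionFree ↥H)
    (hacc : ∀ x ∈ (H : Set G), AccPt x (𝓟 (H : Set G)))
    (R : (n : ℕ) × (FreeGroup (Fin n) × ℕ)) (m : ℕ) (c : (ℕ → Bool) → Set G)
    (hc : myInv (closure (H : Set G)) m c) :
    ∃ c', myInv (closure (H : Set G)) (m+1) c' ∧ myLink (closure (H : Set G)) R m c c' := by
  classical
  obtain ⟨hco, hcne, hcdep, hcdiam, hcbdd, hcdisj⟩ := hc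
  have haccK : ∀ a ∈ closure (H : Set G), AccPt a (𝓟 (H : Set G)) := acc_closure hacc
  -- the canonical extension of a finite prefix
  set ext : (Fin m → Bool) → (ℕ → Bool) :=
    fun p i => if h : i < m then p ⟨i, h⟩ else false with hext
  -- choose two disjoint small balls inside each parent set, centered in closure H
  have hsplit : ∀ p : Fin m → Bool, ∃ z : G × G × ℝ,
      0 < z.2.2 ∧ z.1 ∈ closure (H : Set G) ∧ z.2.1 ∈ closure (H : Set G) ∧
      closure (ball z.1 z.2.2) ⊆ c (ext p) ∧ closure (ball z.2.1 z.2.2) ⊆ c (ext p) ∧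
      Disjoint (ball z.1 z.2.2) (ball z.2.1 z.2.2) ∧ z.2.2 ≤ (1/2 : ℝ)^(m+2) := by
    intro p
    obtain ⟨a, haU, haK⟩ := hcne (ext p)
    have hU : IsOpen (c (ext p)) := hco (ext p)
    have hUn : c (ext p) ∈ 𝓝 a := hU.mem_nhds haU
    obtain ⟨b, ⟨hbU, hbH⟩, hba⟩ := accPt_iff_nhds.mp (haccK a haK) _ hUn
    obtain ⟨ra, hra0, hraU⟩ := nhds_basis_closedBall.mem_iff.mp hUn
    obtain ⟨rb, hrb0, hrbU⟩ := nhds_basis_closedBall.mem_iff.mp (hU.mem_nhds hbU)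
    have hdab : 0 < dist a b := dist_pos.mpr (Ne.symm hba)
    set r : ℝ := min (min ra rb) (min (dist a b / 3) ((1/2 : ℝ)^(m+2))) with hr
    have hr0 : 0 < r := by
      refine lt_min (lt_min hra0 hrb0) (lt_min (by linarith) (by positivity))
    refine ⟨(a, b, r), hr0, haK, subset_closure hbH, ?_, ?_, ?_, ?_⟩
    · refine (closure_ball_subset_closedBall).trans ?_
      refine (closedBall_subset_closedBall ?_).trans hraU
      exact (min_le_left _ _).trans (min_le_left _ _)
    · refine (closure_ball_subset_closedBall).trans ?_
      refine (closedBall_subset_closedBall ?_).trans hrbU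
      exact (min_le_left _ _).trans (min_le_right _ _)
    · refine ball_disjoint_ball ?_
      have h3 : r ≤ dist a b / 3 := (min_le_right _ _).trans (min_le_left _ _)
      linarith
    · exact (min_le_right _ _).trans (min_le_right _ _)
  choose z hz0 hz1 hz2 hz3 hz4 hz5 hz6 using hsplit
  -- level m+1 initial sets
  set d₀ : (Fin (m+1) → Bool) → Set G := fun s =>
    if s (Fin.last m) then ball (z (Fin.init s)).2.1 (z (Fin.init s)).2.2
    else ball (z (Fin.init s)).1 (z (Fin.init s)).2.2 with hd₀
  have hd₀o : ∀ s, IsOpen (d₀ s) := by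
    intro s; simp only [hd₀]; split <;> exact isOpen_ball
  have hd₀ne : ∀ s, (d₀ s ∩ closure (H : Set G)).Nonempty := by
    intro s; simp only [hd₀]; split
    · exact ⟨_, mem_ball_self (hz0 _), hz2 _⟩
    · exact ⟨_, mem_ball_self (hz0 _), hz1 _⟩
  have hd₀cl : ∀ s, closure (d₀ s) ⊆ c (ext (Fin.init s)) := by
    intro s; simp only [hd₀]; split
    · exact hz4 _
    · exact hz3 _
  obtain ⟨d', hd'o, hd'sub, hd'ne, hd'kill⟩ :=
    fold htf R.1 R.2.1 (R.2.2 + 1) (Nat.succ_ne_zero _)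
      ((Finset.univ : Finset (Fin R.1 → (Fin (m+1) → Bool))).toList) d₀ hd₀o hd₀ne
  -- the new level
  have hcl : ∀ σ : ℕ → Bool, closure (d' (fun i : Fin (m+1) => σ i)) ⊆ c σ := by
    intro σ
    have h1 : closure (d' (fun i : Fin (m+1) => σ i)) ⊆
        closure (d₀ (fun i : Fin (m+1) => σ i)) := closure_mono (hd'sub _)
    have h2 := hd₀cl (fun i : Fin (m+1) => σ i)
    have h3 : c (ext (Fin.init (fun i : Fin (m+1) => σ i))) = c σ := by
      refine hcdep _ σ ?_
      intro i hi
      simp only [hext, Fin.init]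
      rw [dif_pos hi]
      simp
    exact h1.trans (h2.trans (le_of_eq h3))
  have hsubc : ∀ σ : ℕ → Bool, d' (fun i : Fin (m+1) => σ i) ⊆ c σ :=
    fun σ x hx => hcl σ (subset_closure hx)
  refine ⟨fun σ => d' (fun i : Fin (m+1) => σ i), ⟨fun σ => hd'o _, fun σ => hd'ne _,
    ?_, ?_, ?_, ?_⟩, hcl, ?_⟩
  · -- dependence on first m+1 bits
    intro σ τ h
    have heq : (fun i : Fin (m+1) => σ i) = fun i : Fin (m+1) => τ i :=
      funext fun i => h i i.isLt
    exact congrArg d' heq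
  · -- diameter
    intro σ
    have hbd : Bornology.IsBounded (d₀ (fun i : Fin (m+1) => σ i)) := by
      simp only [hd₀]; split <;> exact isBounded_ball
    refine (Metric.diam_mono (hd'sub _) hbd).trans ?_
    have h2 : (2:ℝ) * (z (Fin.init (fun i : Fin (m+1) => σ i))).2.2 ≤ (1/2:ℝ)^(m+1) := by
      have := hz6 (Fin.init (fun i : Fin (m+1) => σ i))
      rw [show ((1:ℝ)/2)^(m+1) = 2 * ((1/2:ℝ))^(m+2) by ring]
      linarith
    simp only [hd₀]
    split
    · exact (diam_ball (le_of_lt (hz0 _))).trans h2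
    · exact (diam_ball (le_of_lt (hz0 _))).trans h2
  · -- boundedness
    intro σ
    refine Bornology.IsBounded.subset ?_ (hd'sub _)
    simp only [hd₀]; split <;> exact isBounded_ball
  · -- disjointness
    intro σ τ hne
    by_cases hm : ∀ i < m, σ i = τ i
    · have hmm : σ m ≠ τ m := by
        intro heq
        apply hne
        intro i hi
        rcases Nat.lt_succ_iff_lt_or_eq.mp hi with h | h
        · exact hm i h
        · rw [h]; exact heq
      have hinit : Fin.init (fun i : Fin (m+1) => σ i) = Fin.init (fun i : Fin (m+1) => τ i) := by
        funext i
        simp only [Fin.init]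
        exact hm _ (by simpa using i.isLt)
      have hdisj : Disjoint (d₀ (fun i : Fin (m+1) => σ i)) (d₀ (fun i : Fin (m+1) => τ i)) := by
        simp only [hd₀, Fin.val_last, ← hinit]
        rcases Bool.dichotomy (σ m) with hb | hb <;> rcases Bool.dichotomy (τ m) with hb' | hb'
        · exact absurd (hb.trans hb'.symm) hmm
        · simp only [hb, hb', Bool.false_eq_true, if_false, if_true]
          exact hz5 _
        · simp only [hb, hb', Bool.false_eq_true, if_false, if_true]
          exact (hz5 _).symm
        · exact absurd (hb.trans hb'.symm) hmm
      exact disjoint_iff_inter_eq_empty.mp (hdisj.mono (hd'sub _) (hd'sub _))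
    · refine Set.subset_empty_iff.mp ?_
      rw [← hcdisj σ τ hm]
      exact inter_subset_inter (hsubc σ) (hsubc τ)
  · -- the killing property
    intro t hpair x hx hk1
    have ht'inj : Function.Injective (fun i => (fun j : Fin (m+1) => t i j)) := by
      intro i j hij
      by_contra hne2
      obtain ⟨l, hl, hne3⟩ := hpair i j hne2
      exact hne3 (congrFun hij ⟨l, hl⟩)
    exact hd'kill _ (Finset.mem_toList.mpr (Finset.mem_univ _)) ht'inj x hx hk1

lemma main {H : Subgroup G} (htf : Monoid.IsTorsionFree ↥H)
    (hne : (H : Set G).Nonempty)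
    (hacc : ∀ x ∈ (H : Set G), AccPt x (𝓟 (H : Set G))) :
    ∃ P : Set G, IsPerfectSet P ∧ Monoid.IsTorsionFree ↥(Subgroup.closure P) := by
  classical
  have hcnt : ∀ n : ℕ, Countable (FreeGroup (Fin n)) :=
    fun n => FreeGroup.toWord_injective.countable
  obtain ⟨ρ, hρ⟩ := exists_surjective_nat ((n : ℕ) × (FreeGroup (Fin n) × ℕ))
  obtain ⟨x₀, hx₀⟩ := hne
  have h0 : ∃ c : (ℕ → Bool) → Set G, myInv (closure (H : Set G)) 0 c := by
    refine ⟨fun _ => ball x₀ (1/4), fun _ => isOpen_ball,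
      fun _ => ⟨x₀, mem_ball_self (by norm_num), subset_closure hx₀⟩,
      fun _ _ _ => rfl, fun _ => (diam_ball (by norm_num)).trans (by norm_num),
      fun _ => isBounded_ball, fun σ τ h => ?_⟩
    exact absurd (fun i hi => absurd hi (Nat.not_lt_zero i)) h
  obtain ⟨cc, hInv, hLink⟩ := nat_rec_chain (myInv (closure (H : Set G)))
    (fun m c c' => myLink (closure (H : Set G)) (ρ (Nat.unpair m).1) m c c') h0
    (fun m c hc => step htf hacc (ρ (Nat.unpair m).1) m c hc)
  have hBo : ∀ m (σ : ℕ → Bool), IsOpen (cc m σ) := fun m => (hInv m).1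
  have hBne : ∀ m (σ : ℕ → Bool), (cc m σ ∩ closure (H : Set G)).Nonempty :=
    fun m => (hInv m).2.1
  have hBdep : ∀ m (σ τ : ℕ → Bool), (∀ i < m, σ i = τ i) → cc m σ = cc m τ :=
    fun m => (hInv m).2.2.1
  have hBdiam : ∀ m (σ : ℕ → Bool), Metric.diam (cc m σ) ≤ (1/2 : ℝ)^m :=
    fun m => (hInv m).2.2.2.1
  have hBbdd : ∀ m (σ : ℕ → Bool), Bornology.IsBounded (cc m σ) :=
    fun m => (hInv m).2.2.2.2.1
  have hBdisj : ∀ m (σ τ : ℕ → Bool), ¬(∀ i < m, σ i = τ i) → cc m σ ∩ cc m τ = ∅ :=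
    fun m => (hInv m).2.2.2.2.2
  have hBcl : ∀ m (σ : ℕ → Bool), closure (cc (m+1) σ) ⊆ cc m σ := fun m => (hLink m).1
  have hBsub : ∀ m (σ : ℕ → Bool), cc (m+1) σ ⊆ cc m σ :=
    fun m σ x hx => hBcl m σ (subset_closure hx)
  have hchain : ∀ (m m' : ℕ), m ≤ m' → ∀ σ : ℕ → Bool, cc m' σ ⊆ cc m σ := by
    intro m m' h
    induction h with
    | refl => exact fun σ => subset_rfl
    | step h ih => exact fun σ => (hBsub _ σ).trans (ih σ)
  have hlim : ∀ σ : ℕ → Bool, ∃ p : G,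
      (∀ m, p ∈ closure (cc m σ)) ∧ p ∈ closure (H : Set G) := by
    intro σ
    choose u hu using fun m => hBne m σ
    have hcauchy : CauchySeq u := by
      refine cauchySeq_of_le_geometric (1/2 : ℝ) 1 (by norm_num) ?_
      intro n
      have h1 : u n ∈ cc n σ := (hu n).1
      have h2 : u (n+1) ∈ cc n σ := hBsub n σ (hu (n+1)).1
      calc dist (u n) (u (n+1)) ≤ Metric.diam (cc n σ) :=
            dist_le_diam_of_mem (hBbdd n σ) h1 h2
        _ ≤ (1/2 : ℝ)^n := hBdiam n σ
        _ = 1 * (1/2 : ℝ)^n := by ring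
    obtain ⟨p, hp⟩ := cauchySeq_tendsto_of_complete hcauchy
    refine ⟨p, fun m => ?_, ?_⟩
    · refine mem_closure_of_tendsto hp ?_
      filter_upwards [eventually_ge_atTop m] with n hn
      exact hchain m n hn σ (hu n).1
    · exact isClosed_closure.mem_of_tendsto hp (Eventually.of_forall fun n => (hu n).2)
  choose f hfcl hfK using hlim
  have hfmem : ∀ m (σ : ℕ → Bool), f σ ∈ cc m σ := fun m σ => hBcl m σ (hfcl σ (m+1))
  have hinj : Function.Injective f := by
    intro σ τ h
    by_contra hne2
    obtain ⟨i, hi⟩ : ∃ i, σ i ≠ τ i := by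
      by_contra hc
      push_neg at hc
      exact hne2 (funext hc)
    have hdis := hBdisj (i+1) σ τ (fun hall => hi (hall i (Nat.lt_succ_self i)))
    have hmem : f σ ∈ cc (i+1) σ ∩ cc (i+1) τ := ⟨hfmem (i+1) σ, h ▸ hfmem (i+1) τ⟩
    rw [hdis] at hmem
    exact hmem
  have hdist : ∀ (m : ℕ) (σ τ : ℕ → Bool), (∀ i < m, σ i = τ i) →
      dist (f σ) (f τ) ≤ (1/2 : ℝ)^m := by
    intro m σ τ h
    have h1 : f σ ∈ closure (cc m σ) := hfcl σ m
    have h2 : f τ ∈ closure (cc m σ) := by rw [hBdep m σ τ h]; exact hfcl τ m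
    calc dist (f σ) (f τ) ≤ Metric.diam (closure (cc m σ)) :=
          dist_le_diam_of_mem (hBbdd m σ).closure h1 h2
      _ = Metric.diam (cc m σ) := Metric.diam_closure _
      _ ≤ (1/2 : ℝ)^m := hBdiam m σ
  have hcont : Continuous f := by
    rw [continuous_iff_continuousAt]
    intro σ
    rw [ContinuousAt, Metric.tendsto_nhds]
    intro ε hε
    obtain ⟨m, hm⟩ := exists_pow_lt_of_lt_one hε (by norm_num : (1/2 : ℝ) < 1)
    have hopenC : IsOpen {τ : ℕ → Bool | ∀ i < m, τ i = σ i} := by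
      have heq : {τ : ℕ → Bool | ∀ i < m, τ i = σ i} =
          ⋂ i ∈ Finset.range m, {τ : ℕ → Bool | τ i = σ i} := by
        ext τ
        simp [Finset.mem_range]
      rw [heq]
      refine isOpen_biInter_finset fun i _ => ?_
      have : {τ : ℕ → Bool | τ i = σ i} = (fun τ : ℕ → Bool => τ i) ⁻¹' {σ i} := by
        ext τ; simp
      rw [this]
      exact IsOpen.preimage (continuous_apply i) (isOpen_discrete ({σ i} : Set Bool))
    filter_upwards [hopenC.mem_nhds (fun i _ => rfl)] with τ hτ
    calc dist (f τ) (f σ) ≤ (1/2 : ℝ)^m := hdist m τ σ (fun i hi => hτ i hi)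
      _ < ε := hm
  have hPc : IsCompact (Set.range f) := isCompact_range hcont
  have hPcl : IsClosed (Set.range f) := hPc.isClosed
  -- the key independence property
  have hstar : ∀ (n : ℕ) (w : FreeGroup (Fin n)) (k : ℕ), k ≠ 0 →
      ∀ x : Fin n → G, Function.Injective x → (∀ i, x i ∈ Set.range f) →
      (FreeGroup.lift x w) ^ k = 1 → FreeGroup.lift x w = 1 := by
    intro n w k hk x hxinj hxP hxk
    choose σ hσ using hxP
    have hσinj : Function.Injective σ := by
      intro i j h
      apply hxinj
      rw [← hσ i, ← hσ j, h]
    have hdiff : ∀ i j, i ≠ j → ∃ l, σ i l ≠ σ j l := by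
      intro i j hij
      by_contra hcon
      push_neg at hcon
      exact hij (hσinj (funext hcon))
    set L : ℕ := (Finset.univ : Finset (Fin n × Fin n)).sup
      (fun q => if h : q.1 ≠ q.2 then (hdiff q.1 q.2 h).choose else 0) with hL
    have hLd : ∀ i j, i ≠ j → ∃ l, l < L + 1 ∧ σ i l ≠ σ j l := by
      intro i j h
      refine ⟨(hdiff i j h).choose, ?_, (hdiff i j h).choose_spec⟩
      have hle : (if h' : (i, j).1 ≠ (i, j).2 then (hdiff (i, j).1 (i, j).2 h').choose else 0)
          ≤ L := Finset.le_sup (f := fun q : Fin n × Fin n =>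
            if h : q.1 ≠ q.2 then (hdiff q.1 q.2 h).choose else 0) (Finset.mem_univ (i, j))
      rw [dif_pos h] at hle
      exact Nat.lt_succ_of_le hle
    obtain ⟨j0, hj0⟩ := hρ ⟨n, (w, k - 1)⟩
    set m := Nat.pair j0 (L + 1) with hm
    have hm1 : (Nat.unpair m).1 = j0 := by rw [hm, Nat.unpair_pair]
    have hmL : L + 1 ≤ m := Nat.right_le_pair _ _
    have hlink := (hLink m).2
    rw [hm1, hj0] at hlink
    have hk' : k - 1 + 1 = k := Nat.succ_pred_eq_of_pos (Nat.pos_of_ne_zero hk)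
    refine ?_
    have := hlink σ ?_ x ?_ ?_
    · exact this
    · intro i j hij
      obtain ⟨l, hl, hne2⟩ := hLd i j hij
      exact ⟨l, by omega, hne2⟩
    · intro i
      exact ⟨hσ i ▸ hfmem (m+1) (σ i), hσ i ▸ hfK (σ i)⟩
    · rw [hk']
      exact hxk
  refine ⟨Set.range f, ⟨⟨f (fun _ => false), mem_range_self _⟩, ?_, ?_⟩, ?_⟩
  · -- completely metrizable
    exact ⟨inferInstance, rfl, hPcl.completeSpace_coe⟩
  · -- no isolated points
    intro x hx
    obtain ⟨σ, rfl⟩ := hx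
    rw [accPt_iff_nhds]
    intro U hU
    obtain ⟨ε, hε, hball⟩ := Metric.mem_nhds_iff.mp hU
    obtain ⟨m, hm⟩ := exists_pow_lt_of_lt_one hε (by norm_num : (1/2 : ℝ) < 1)
    set τ : ℕ → Bool := fun i => if i = m then !(σ i) else σ i with hτ
    have hτσ : τ ≠ σ := by
      intro h
      have hc := congrFun h m
      simp [hτ] at hc
    have hdτ : dist (f τ) (f σ) ≤ (1/2 : ℝ)^m := by
      refine hdist m τ σ ?_
      intro i hi
      simp only [hτ]
      rw [if_neg (Nat.ne_of_lt hi)]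
    refine ⟨f τ, ⟨hball (mem_ball.mpr (lt_of_le_of_lt hdτ hm)), mem_range_self _⟩,
      fun h => hτσ (hinj h)⟩
  · -- torsion-freeness of the generated subgroup
    intro g hg1 hgord
    obtain ⟨k, hk0, hgk⟩ := isOfFinOrder_iff_pow_eq_one.mp hgord
    have haP : (g : G) ∈ Subgroup.closure (Set.range f) := g.2
    have hak : (g : G) ^ k = 1 := by
      have := congrArg (Subtype.val) hgk
      simpa using this
    obtain ⟨l, hl, hlp⟩ := subgroup_list haP
    set nf : G → G := fun y => if y ∈ Set.range f then y else y⁻¹ with hnf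
    set T : Finset G := (l.map nf).toFinset with hT
    set n := T.card with hn
    set e : {y // y ∈ T} ≃ Fin n := T.equivFin with he
    set x : Fin n → G := fun i => (e.symm i : G) with hx
    have hnfP : ∀ y : G, y ∈ Set.range f → nf y = y := by
      intro y hy; simp only [hnf]; rw [if_pos hy]
    have hnfN : ∀ y : G, y ∉ Set.range f → nf y = y⁻¹ := by
      intro y hy; simp only [hnf]; rw [if_neg hy]
    have hxinj : Function.Injective x := by
      intro i j h
      exact e.symm.injective (Subtype.coe_injective h)
    have hxP : ∀ i, x i ∈ Set.range f := by
      intro i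
      obtain ⟨y, hyl, hy⟩ := List.mem_map.mp (List.mem_toFinset.mp (e.symm i).2)
      have hxi : x i = nf y := by rw [hx]; exact hy.symm
      rw [hxi]
      by_cases hyP : y ∈ Set.range f
      · rwa [hnfP y hyP]
      · rw [hnfN y hyP]
        rcases hl y hyl with h | h
        · exact absurd h hyP
        · exact h
    have hmemT : ∀ y ∈ l, nf y ∈ T :=
      fun y hy => List.mem_toFinset.mpr (List.mem_map_of_mem hy)
    set w : FreeGroup (Fin n) := (l.attach.map (fun q =>
      if q.1 ∈ Set.range f then FreeGroup.of (e ⟨nf q.1, hmemT q.1 q.2⟩)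
      else (FreeGroup.of (e ⟨nf q.1, hmemT q.1 q.2⟩))⁻¹)).prod with hw
    have hlift : FreeGroup.lift x w = (g : G) := by
      rw [hw, map_list_prod, List.map_map]
      have hmc : (l.attach.map ((FreeGroup.lift x) ∘ (fun q =>
          if q.1 ∈ Set.range f then FreeGroup.of (e ⟨nf q.1, hmemT q.1 q.2⟩)
          else (FreeGroup.of (e ⟨nf q.1, hmemT q.1 q.2⟩))⁻¹))) =
          l.attach.map (fun q => (q.1 : G)) := by
        refine List.map_congr_left ?_
        intro q hq
        simp only [Function.comp_apply]
        by_cases hyP : q.1 ∈ Set.range f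
        · rw [if_pos hyP, FreeGroup.lift_apply_of]
          have hxe : x (e ⟨nf q.1, hmemT q.1 q.2⟩) = nf q.1 := by
            rw [hx]
            simp [Equiv.symm_apply_apply]
          rw [hxe, hnfP q.1 hyP]
        · rw [if_neg hyP, map_inv, FreeGroup.lift_apply_of]
          have hxe : x (e ⟨nf q.1, hmemT q.1 q.2⟩) = nf q.1 := by
            rw [hx]
            simp [Equiv.symm_apply_apply]
          rw [hxe, hnfN q.1 hyP, inv_inv]
      rw [hmc]
      rw [show (fun q : {y // y ∈ l} => (q.1 : G)) = Subtype.val from rfl,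
        List.attach_map_subtype_val]
      exact hlp
    have ha1 : (g : G) = 1 := by
      rw [← hlift]
      exact hstar n w k hk0.ne' x hxinj hxP (by rw [hlift]; exact hak)
    exact hg1 (Subtype.ext (by simpa using ha1))

end Statement13Dev

theorem statement13 {G : Type u} [Group G] [TopologicalSpace G] [IsTopologicalGroup G]
    (hG : CompletelyMetrizable G)
    (h : ∃ H : Subgroup G, Monoid.IsTorsionFree ↥H ∧ DenseInItselfSet (H : Set G)) :
    ∃ P : Set G, IsPerfectSet P ∧ Monoid.IsTorsionFree ↥(Subgroup.closure P) := by
  obtain ⟨m, rfl, hcomp⟩ := hG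
  letI : MetricSpace G := m
  letI : CompleteSpace G := hcomp
  obtain ⟨H, htf, hne, hacc⟩ := h
  exact main htf hne hacc
end

section
/- Let F ⊆ {2,3,4,…} be a finite set of integers, let κ be an infinite cardinal, and let G be a completely metrizable topological group of weight ≤ κ. If for every ordinal γ < κ⁺ there exists a set S_γ ⊆ G of Cantor–Bendixson rank ≥ γ generating a subgroup in which the order of every nonidentity element belongs to F, then there exists a perfect set P ⊆ G such that in the subgroup generated by P the order of every nonidentity element belongs to F. -/
open Set Filter Cardinal FirstOrder

universe u v

theorem statement15 (F : Finset ℕ) (hF : ∀ k ∈ F, 2 ≤ k)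
    (κ : Cardinal.{u}) (hκ : ℵ₀ ≤ κ)
    {G : Type u} [Group G] [TopologicalSpace G] [IsTopologicalGroup G]
    (hG : CompletelyMetrizable G) (hw : topWeight G ≤ κ)
    (h : ∀ γ : Ordinal.{u}, γ < (Order.succ κ).ord → ∃ S : Set G,
      (∀ γ' : Ordinal.{u}, γ' < γ → (cbDeriv S γ').Nonempty) ∧
      ∀ g ∈ Subgroup.closure S, g ≠ 1 → orderOf g ∈ F) :
    ∃ P : Set G, IsPerfectSet P ∧ ∀ g ∈ Subgroup.closure P, g ≠ 1 → orderOf g ∈ F := by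
  classical
  -- T1 from metrizability
  have ht1 : T1Space G := by
    obtain ⟨m, hm, -⟩ := hG
    have : @T1Space G m.toUniformSpace.toTopologicalSpace := by
      letI := m; infer_instance
    rwa [hm] at this
  -- apply h at γ = 2
  have h2 : (2 : Ordinal.{u}) < (Order.succ κ).ord := by
    calc (2 : Ordinal.{u}) = ((2 : ℕ) : Ordinal.{u}) := by norm_num
      _ < Ordinal.omega0 := Ordinal.nat_lt_omega0 2
      _ = Cardinal.ord ℵ₀ := (Cardinal.ord_aleph0).symm
      _ ≤ (Order.succ κ).ord := Cardinal.ord_le_ord.2 (hκ.trans (Order.le_succ κ))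
  obtain ⟨S, hS, hord⟩ := h 2 h2
  have e1 : cbDeriv S (1 : Ordinal.{u}) = {x ∈ S | AccPt x (𝓟 S)} := by
    have h1 : (1 : Ordinal.{u}) = Order.succ 0 := by simp
    rw [cbDeriv, h1, Ordinal.limitRecOn_succ, Ordinal.limitRecOn_zero]
  have hS1 : (cbDeriv S (1 : Ordinal.{u})).Nonempty := hS 1 (by norm_num)
  rw [e1] at hS1
  obtain ⟨x₀, hx₀S, hx₀acc⟩ := hS1
  set H : Subgroup G := (Subgroup.closure S).topologicalClosure with hH
  set P : Set G := (H : Set G) with hPdef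
  have hSP : S ⊆ P := fun x hx =>
    Subgroup.le_topologicalClosure _ (Subgroup.subset_closure hx)
  have hx₀H : x₀ ∈ H := hSP hx₀S
  -- the divisor-closed part of F
  set F₀ : Finset ℕ := F.filter (fun k => ∀ d ∈ Nat.divisors k, 2 ≤ d → d ∈ F) with hF₀
  -- every element of ⟨S⟩ satisfies g ^ k = 1 for some k ∈ insert 1 F₀
  have claimA : ∀ g ∈ Subgroup.closure S, ∃ k ∈ insert 1 F₀, g ^ k = 1 := by
    intro g hg
    by_cases hg1 : g = 1
    · exact ⟨1, Finset.mem_insert_self _ _, by simp [hg1]⟩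
    · have hkF : orderOf g ∈ F := hord g hg hg1
      have hk2 : 2 ≤ orderOf g := hF _ hkF
      have hk0 : orderOf g ≠ 0 := by omega
      refine ⟨orderOf g, Finset.mem_insert_of_mem ?_, pow_orderOf_eq_one g⟩
      rw [hF₀, Finset.mem_filter]
      refine ⟨hkF, fun d hd hd2 => ?_⟩
      obtain ⟨hdvd, -⟩ := Nat.mem_divisors.1 hd
      have hnd0 : orderOf g / d ≠ 0 := by
        have := Nat.div_pos (Nat.le_of_dvd (by omega) hdvd) (by omega)
        omega
      have hdd : orderOf g / d ∣ orderOf g := Nat.div_dvd_of_dvd hdvd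
      have hop : orderOf (g ^ (orderOf g / d)) = d := by
        rw [orderOf_pow' _ hnd0, Nat.gcd_eq_right hdd, Nat.div_div_self hdvd hk0]
      have hne : g ^ (orderOf g / d) ≠ 1 := by
        intro hc
        rw [hc, orderOf_one] at hop
        omega
      have := hord _ (pow_mem hg _) hne
      rwa [hop] at this
  -- the closed set of elements killed by some k ∈ insert 1 F₀
  have hCclosed : IsClosed {g : G | ∃ k ∈ insert 1 F₀, g ^ k = 1} := by
    have : {g : G | ∃ k ∈ insert 1 F₀, g ^ k = 1}
        = ⋃ k ∈ (insert 1 F₀ : Finset ℕ), {g : G | g ^ k = 1} := by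
      ext g; simp
    rw [this]
    refine Set.Finite.isClosed_biUnion (Finset.finite_toSet _) (fun k _ => ?_)
    exact IsClosed.preimage (continuous_pow k) isClosed_singleton
  have hPC : P ⊆ {g : G | ∃ k ∈ insert 1 F₀, g ^ k = 1} := by
    rw [hPdef, hH, Subgroup.topologicalClosure_coe]
    exact closure_minimal claimA hCclosed
  refine ⟨P, ⟨⟨1, H.one_mem⟩, ?_, ?_⟩, ?_⟩
  · -- completely metrizable
    obtain ⟨m, hm, hcomp⟩ := hG
    have hPcl : IsClosed P := by
      rw [hPdef]; exact Subgroup.isClosed_topologicalClosure _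
    refine ⟨@Subtype.metricSpace G (· ∈ P) m, ?_, ?_⟩
    · show (UniformSpace.comap Subtype.val m.toUniformSpace).toTopologicalSpace = _
      rw [UniformSpace.toTopologicalSpace_comap, hm]
      rfl
    · rw [← hm] at hPcl
      exact @IsClosed.completeSpace_coe G m.toUniformSpace hcomp P hPcl
  · -- no isolated points
    intro y hy
    have hx₀P : AccPt x₀ (𝓟 P) := hx₀acc.mono (principal_mono.2 hSP)
    have ha : y * x₀⁻¹ ∈ H := H.mul_mem hy (H.inv_mem hx₀H)
    have hmap := hx₀P.map (f := fun z => (y * x₀⁻¹) * z)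
      (continuous_mul_left _).continuousAt (mul_right_injective _)
    rw [Filter.map_principal] at hmap
    have himg : (fun z => (y * x₀⁻¹) * z) '' P = P := by
      ext z
      constructor
      · rintro ⟨w, hw, rfl⟩
        exact H.mul_mem ha hw
      · intro hz
        exact ⟨(y * x₀⁻¹)⁻¹ * z, H.mul_mem (H.inv_mem ha) hz, by group⟩
    rw [himg] at hmap
    simpa only [inv_mul_cancel_right] using hmap
  · -- orders
    intro g hg hg1
    rw [hPdef, Subgroup.closure_eq] at hg
    obtain ⟨k, hk, hgk⟩ := hPC hg
    rcases Finset.mem_insert.1 hk with hk1 | hkF₀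
    · subst hk1
      rw [pow_one] at hgk
      exact absurd hgk hg1
    · rw [hF₀, Finset.mem_filter] at hkF₀
      obtain ⟨hkF, hdiv⟩ := hkF₀
      have hk2 : 2 ≤ k := hF _ hkF
      have hdvd : orderOf g ∣ k := orderOf_dvd_of_pow_eq_one hgk
      have ho0 : orderOf g ≠ 0 := by
        intro hc
        rw [hc, zero_dvd_iff] at hdvd
        omega
      have ho1 : orderOf g ≠ 1 := fun hc => hg1 (orderOf_eq_one_iff.1 hc)
      exact hdiv _ (Nat.mem_divisors.2 ⟨hdvd, by omega⟩) (by omega)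
end

section
/- Let F ⊆ {2,3,4,…} be a finite set of integers and let G be a completely metrizable topological group. If G has a dense-in-itself subgroup in which the order of every nonidentity element belongs to F, then there exists a perfect set P ⊆ G such that in the subgroup generated by P the order of every nonidentity element belongs to F. -/
open Set Filter Cardinal FirstOrder

universe u v

namespace S16

open Set Filter Metric Topology

variable {G : Type u} [Group G]

/-- Evaluate a word (list of index/sign pairs) at an assignment. -/
def evalWord {ι : Type*} (p : List (ι × Bool)) (x : ι → G) : G :=
  (p.map (fun ib => if ib.2 then x ib.1 else (x ib.1)⁻¹)).prod

lemma evalWord_mem (H : Subgroup G) {ι : Type*} (p : List (ι × Bool)) (x : ι → G)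
    (hx : ∀ i, x i ∈ H) : evalWord p x ∈ H := by
  induction p with
  | nil => simpa [evalWord] using H.one_mem
  | cons a t ih =>
    rw [evalWord, List.map_cons, List.prod_cons]
    refine H.mul_mem ?_ ih
    split
    · exact hx a.1
    · exact H.inv_mem (hx a.1)

lemma evalWord_map {ι κ : Type*} (f : ι → κ) (p : List (ι × Bool)) (x : κ → G) :
    evalWord (p.map (fun ib => (f ib.1, ib.2))) x = evalWord p (x ∘ f) := by
  simp only [evalWord, List.map_map]
  rfl

lemma continuous_evalWord [TopologicalSpace G] [IsTopologicalGroup G] {ι : Type*}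
    (p : List (ι × Bool)) : Continuous (fun x : ι → G => evalWord p x) := by
  induction p with
  | nil => simpa [evalWord] using continuous_const
  | cons a t ih =>
    simp only [evalWord, List.map_cons, List.prod_cons]
    have h1 : Continuous fun x : ι → G => (if a.2 then x a.1 else (x a.1)⁻¹) := by
      split
      · exact continuous_apply a.1
      · exact (continuous_apply a.1).inv
    exact h1.mul ih

variable [MetricSpace G] [IsTopologicalGroup G]

/-- Approximate a point of `(closure H)^k` lying in an open set by a box of closed balls with
centers in `H`, contained in the open set. -/
lemma approx (H : Subgroup G) {k : ℕ} (U : Set (Fin k → G)) (hU : IsOpen U)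
    (u : Fin k → G) (hu : u ∈ U) (huK : ∀ i, u i ∈ closure (H : Set G)) :
    ∃ (y : Fin k → G) (ε : ℝ), 0 < ε ∧ (∀ i, y i ∈ H) ∧
      ∀ x : Fin k → G, (∀ i, x i ∈ closedBall (y i) ε) → x ∈ U := by
  obtain ⟨δ, hδ, hball⟩ := Metric.isOpen_iff.mp hU u hu
  have hy : ∀ i, ∃ b ∈ (H : Set G), dist (u i) b < δ / 4 := fun i =>
    Metric.mem_closure_iff.mp (huK i) _ (by positivity)
  choose y hyH hyd using hy
  refine ⟨y, δ / 4, by positivity, hyH, fun x hx => hball ?_⟩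
  rw [mem_ball, dist_pi_lt_iff hδ]
  intro i
  have h1 : dist (x i) (y i) ≤ δ / 4 := hx i
  have h2 : dist (y i) (u i) < δ / 4 := by rw [dist_comm]; exact hyd i
  calc dist (x i) (u i) ≤ dist (x i) (y i) + dist (y i) (u i) := dist_triangle _ _ _
    _ < δ := by linarith

/-- The core topological lemma: bad-order sets are nowhere dense, so any box of balls centered
at `H` contains a sub-box of closed balls centered at `H` on which (within `closure H`) the word
never has order `d`. -/
lemma core (H : Subgroup G) (F : Finset ℕ)
    (horder : ∀ g ∈ H, g ≠ 1 → orderOf g ∈ F)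
    {k : ℕ} (q : List (Fin k × Bool)) (d : ℕ) (hd2 : 2 ≤ d) (hdF : d ∉ F)
    (z : Fin k → G) (ρ : Fin k → ℝ) (hz : ∀ i, z i ∈ H) (hρ : ∀ i, 0 < ρ i) :
    ∃ (y : Fin k → G) (ε : ℝ), 0 < ε ∧ (∀ i, y i ∈ H) ∧
      (∀ i, closedBall (y i) ε ⊆ ball (z i) (ρ i)) ∧
      ∀ x : Fin k → G, (∀ i, x i ∈ closedBall (y i) ε) →
        (∀ i, x i ∈ closure (H : Set G)) → orderOf (evalWord q x) ≠ d := by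
  classical
  set K : Set G := closure (H : Set G) with hK
  set box : Set (Fin k → G) := {x | ∀ i, x i ∈ ball (z i) (ρ i)} with hboxdef
  have hbox : IsOpen box := by
    have : box = ⋂ i, (fun x : Fin k → G => x i) ⁻¹' ball (z i) (ρ i) := by
      ext x; simp [hboxdef]
    rw [this]
    exact isOpen_iInter_of_finite fun i => isOpen_ball.preimage (continuous_apply i)
  -- helper to go from "all boxes land in U" to per-coordinate ball inclusion
  have coordsub : ∀ (y : Fin k → G) (ε : ℝ), 0 < ε →
      (∀ x : Fin k → G, (∀ i, x i ∈ closedBall (y i) ε) → x ∈ box) →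
      ∀ i, closedBall (y i) ε ⊆ ball (z i) (ρ i) := by
    intro y ε hε hcon i w hw
    have hx : ∀ i', (Function.update y i w) i' ∈ closedBall (y i') ε := by
      intro i'
      rcases eq_or_ne i' i with rfl | hne
      · simpa using hw
      · rw [Function.update_of_ne hne]
        exact mem_closedBall_self hε.le
    have := hcon _ hx i
    simpa using this
  by_cases h1 : ∃ u : Fin k → G, u ∈ box ∧ (∀ i, u i ∈ K) ∧ (evalWord q u) ^ d ≠ 1
  · obtain ⟨u, hub, huK, hu1⟩ := h1
    have hUopen : IsOpen (box ∩ {x : Fin k → G | (evalWord q x) ^ d ≠ 1}) := by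
      refine hbox.inter ?_
      have : {x : Fin k → G | (evalWord q x) ^ d ≠ 1}
          = (fun x : Fin k → G => (evalWord q x) ^ d) ⁻¹' {1}ᶜ := rfl
      rw [this]
      exact isOpen_compl_singleton.preimage ((continuous_evalWord q).pow d)
    obtain ⟨y, ε, hε, hyH, hcon⟩ := approx H _ hUopen u ⟨hub, hu1⟩ huK
    refine ⟨y, ε, hε, hyH, coordsub y ε hε (fun x hx => (hcon x hx).1), ?_⟩
    intro x hx _ hord
    exact (hcon x hx).2 (hord ▸ pow_orderOf_eq_one (evalWord q x))
  · set A : Set (Fin k → G) := {x | x ∈ box ∧ (∀ i, x i ∈ K) ∧ orderOf (evalWord q x) = d}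
      with hA
    by_cases h2 : ∃ u : Fin k → G, u ∈ box ∧ (∀ i, u i ∈ K) ∧ u ∉ closure A
    · obtain ⟨u, hub, huK, hu1⟩ := h2
      have hUopen : IsOpen (box ∩ (closure A)ᶜ) := hbox.inter isClosed_closure.isOpen_compl
      obtain ⟨y, ε, hε, hyH, hcon⟩ := approx H _ hUopen u ⟨hub, hu1⟩ huK
      refine ⟨y, ε, hε, hyH, coordsub y ε hε (fun x hx => (hcon x hx).1), ?_⟩
      intro x hx hxK hord
      exact (hcon x hx).2 (subset_closure ⟨(hcon x hx).1, hxK, hord⟩)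
    · exfalso
      push_neg at h1 h2
      have hzbox : z ∈ box := fun i => mem_ball_self (hρ i)
      have hzK : ∀ i, z i ∈ K := fun i => subset_closure (hz i)
      have hzcl : z ∈ closure A := h2 z hzbox hzK
      have hAne : A.Nonempty := by
        rcases A.eq_empty_or_nonempty with hAe | hAe
        · rw [hAe, closure_empty] at hzcl; exact absurd hzcl (Set.notMem_empty z)
        · exact hAe
      obtain ⟨a, hab, haK, hao⟩ := hAne
      have hd0 : d ≠ 0 := by omega
      set U' : Set (Fin k → G) :=
        box ∩ ⋂ e' ∈ d.properDivisors, {x | (evalWord q x) ^ e' ≠ 1} with hU'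
      have hU'open : IsOpen U' := by
        refine hbox.inter (isOpen_biInter_finset fun e' _ => ?_)
        have : {x : Fin k → G | (evalWord q x) ^ e' ≠ 1}
            = (fun x : Fin k → G => (evalWord q x) ^ e') ⁻¹' {1}ᶜ := rfl
        rw [this]
        exact isOpen_compl_singleton.preimage ((continuous_evalWord q).pow e')
      have haU' : a ∈ U' := by
        refine ⟨hab, ?_⟩
        simp only [Set.mem_iInter]
        intro e' he' hpow
        rw [Nat.mem_properDivisors] at he'
        have hdvd : orderOf (evalWord q a) ∣ e' := orderOf_dvd_iff_pow_eq_one.mpr hpow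
        rw [hao] at hdvd
        have he'0 : e' ≠ 0 := by
          rintro rfl
          exact hd0 (Nat.eq_zero_of_zero_dvd he'.1)
        exact absurd (Nat.le_of_dvd (Nat.pos_of_ne_zero he'0) hdvd) (by omega)
      obtain ⟨y, ε, hε, hyH, hcon⟩ := approx H _ hU'open a haU' haK
      have hyself : ∀ i, y i ∈ closedBall (y i) ε := fun i => mem_closedBall_self hε.le
      have hyU' : y ∈ U' := hcon y hyself
      have hyK : ∀ i, y i ∈ K := fun i => subset_closure (hyH i)
      have hEyH : evalWord q y ∈ H := evalWord_mem H q y hyH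
      have hEyd : (evalWord q y) ^ d = 1 := h1 y hyU'.1 hyK
      have ho : orderOf (evalWord q y) = d := by
        have hodvd : orderOf (evalWord q y) ∣ d := orderOf_dvd_iff_pow_eq_one.mpr hEyd
        by_contra hne
        have holt : orderOf (evalWord q y) < d :=
          lt_of_le_of_ne (Nat.le_of_dvd (Nat.pos_of_ne_zero hd0) hodvd) hne
        have hmem : orderOf (evalWord q y) ∈ d.properDivisors :=
          Nat.mem_properDivisors.mpr ⟨hodvd, holt⟩
        have := hyU'.2
        simp only [Set.mem_iInter] at this
        exact this _ hmem (pow_orderOf_eq_one _)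
      have hne1 : evalWord q y ≠ 1 := by
        intro h
        rw [h, orderOf_one] at ho
        omega
      exact hdF (ho ▸ horder _ hEyH hne1)

/-- A task: ensure word `p` evaluated compatibly along `τ` never has order `d`. -/
structure MTask where
  n : ℕ
  p : List (Fin n × Bool)
  d : ℕ
  τ : Fin n → List Bool

variable (F : Finset ℕ) in
/-- Task `t` is achieved by ball data `(c, r)`. -/
def Achieved (Hs : Set G) (c : List Bool → G) (r : List Bool → ℝ) (t : MTask) : Prop :=
  2 ≤ t.d → t.d ∉ F → ∀ x : Fin t.n → G,
    (∀ i, x i ∈ closedBall (c (t.τ i)) (r (t.τ i))) →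
    (∀ i, x i ∈ closure Hs) → (∀ i i', t.τ i = t.τ i' → x i = x i') →
    orderOf (evalWord t.p x) ≠ t.d

lemma single (H : Subgroup G) (F : Finset ℕ)
    (horder : ∀ g ∈ H, g ≠ 1 → orderOf g ∈ F)
    (c : List Bool → G) (r : List Bool → ℝ)
    (hcH : ∀ s, c s ∈ H) (hrp : ∀ s, 0 < r s) (t : MTask) :
    ∃ (c' : List Bool → G) (r' : List Bool → ℝ),
      (∀ s, c' s ∈ H) ∧ (∀ s, 0 < r' s) ∧ (∀ s, r' s ≤ r s) ∧
      (∀ s, closedBall (c' s) (r' s) ⊆ closedBall (c s) (r s)) ∧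
      Achieved F (H : Set G) c' r' t := by
  classical
  obtain ⟨n, p, d, τ⟩ := t
  by_cases hd : 2 ≤ d ∧ d ∉ F
  swap
  · exact ⟨c, r, hcH, hrp, fun s => le_refl _, fun s => subset_rfl,
      fun h2 hf => absurd ⟨h2, hf⟩ hd⟩
  obtain ⟨hd2, hdF⟩ := hd
  -- representative function
  set e : Fin n → Fin n := fun i => (Finset.univ.filter (fun i' => τ i' = τ i)).min'
    ⟨i, by simp⟩ with he
  have hmem : ∀ i, e i ∈ Finset.univ.filter (fun i' => τ i' = τ i) :=
    fun i => Finset.min'_mem _ _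
  have he1 : ∀ i, τ (e i) = τ i := fun i => (Finset.mem_filter.mp (hmem i)).2
  have he2 : ∀ i i', τ i = τ i' → e i = e i' := by
    intro i i' h
    have : (Finset.univ.filter (fun i'' => τ i'' = τ i))
        = (Finset.univ.filter (fun i'' => τ i'' = τ i')) := by
      apply Finset.filter_congr
      intro i'' _
      simp [h]
    simp only [he]
    congr 1
  have hee : ∀ i, e (e i) = e i := fun i => he2 _ _ (he1 i)
  obtain ⟨y, ε, hε, hyH, hsubball, hav⟩ := core H F horder
    (p.map (fun ib => (e ib.1, ib.2))) d hd2 hdF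
    (fun i => c (τ i)) (fun i => r (τ i)) (fun i => hcH _) (fun i => hrp _)
  refine ⟨fun s => if h : ∃ i, τ i = s then y (e h.choose) else c s,
    fun s => if ∃ i, τ i = s then min ε (r s) else r s,
    ?_, ?_, ?_, ?_, ?_⟩
  · intro s
    dsimp only
    split
    · exact hyH _
    · exact hcH s
  · intro s
    dsimp only
    split
    · exact lt_min hε (hrp s)
    · exact hrp s
  · intro s
    dsimp only
    split
    · exact min_le_right _ _
    · exact le_refl _
  · intro s
    dsimp only
    by_cases h : ∃ i, τ i = s
    · rw [dif_pos h, if_pos h]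
      have h1 : closedBall (y (e h.choose)) (min ε (r s)) ⊆ closedBall (y (e h.choose)) ε :=
        closedBall_subset_closedBall (min_le_left _ _)
      have h2 : closedBall (y (e h.choose)) ε ⊆ ball (c (τ (e h.choose))) (r (τ (e h.choose))) :=
        hsubball _
      rw [he1, h.choose_spec] at h2
      exact h1.trans (h2.trans ball_subset_closedBall)
    · rw [dif_neg h, if_neg h]
  · intro _ _ x hx hxK hcompat
    dsimp only at hx hxK hcompat ⊢
    have hx' : ∀ i, x i ∈ closedBall (y (e i)) ε := by
      intro i
      have hex : ∃ i', τ i' = τ i := ⟨i, rfl⟩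
      have h1 := hx i
      rw [dif_pos hex, if_pos hex] at h1
      have h2 : e hex.choose = e i := he2 _ _ hex.choose_spec
      rw [h2] at h1
      exact closedBall_subset_closedBall (min_le_left _ _) h1
    set x'' : Fin n → G := fun i => if e i = i then x i else y i with hx''
    have hx''ball : ∀ i, x'' i ∈ closedBall (y i) ε := by
      intro i
      simp only [hx'']
      split
      · rename_i h
        have := hx' i
        rwa [h] at this
      · exact mem_closedBall_self hε.le
    have hx''K : ∀ i, x'' i ∈ closure (H : Set G) := by
      intro i
      simp only [hx'']
      split
      · exact hxK i
      · exact subset_closure (hyH i)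
    have := hav x'' hx''ball hx''K
    rw [evalWord_map] at this
    have hxe : x'' ∘ e = x := by
      funext i
      have h1 : x'' (e i) = x (e i) := by
        simp only [hx'']
        rw [if_pos (hee i)]
      rw [Function.comp_apply, h1]
      exact hcompat (e i) i (he1 i)
    rwa [hxe] at this

lemma fold (H : Subgroup G) (F : Finset ℕ)
    (horder : ∀ g ∈ H, g ≠ 1 → orderOf g ∈ F)
    (L : List MTask) (c : List Bool → G) (r : List Bool → ℝ)
    (hcH : ∀ s, c s ∈ H) (hrp : ∀ s, 0 < r s) :
    ∃ (c' : List Bool → G) (r' : List Bool → ℝ),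
      (∀ s, c' s ∈ H) ∧ (∀ s, 0 < r' s) ∧ (∀ s, r' s ≤ r s) ∧
      (∀ s, closedBall (c' s) (r' s) ⊆ closedBall (c s) (r s)) ∧
      ∀ t ∈ L, Achieved F (H : Set G) c' r' t := by
  induction L generalizing c r with
  | nil => exact ⟨c, r, hcH, hrp, fun s => le_refl _, fun s => subset_rfl, by simp⟩
  | cons t L ih =>
    obtain ⟨c1, r1, h1H, h1p, h1le, h1sub, h1av⟩ := single H F horder c r hcH hrp t
    obtain ⟨c2, r2, h2H, h2p, h2le, h2sub, h2av⟩ := ih c1 r1 h1H h1p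
    refine ⟨c2, r2, h2H, h2p, fun s => (h2le s).trans (h1le s),
      fun s => (h2sub s).trans (h1sub s), ?_⟩
    intro t' ht'
    rcases List.mem_cons.mp ht' with rfl | ht'
    · intro ha hb x hx hxK hcompat
      exact h1av ha hb x (fun i => h2sub _ (hx i)) hxK hcompat
    · exact h2av t' ht'

/-- The invariant for stage `m` of the Cantor scheme. -/
def Good (H : Subgroup G) (F : Finset ℕ) (e : ℕ → Σ n : ℕ, List (Fin n × Bool) × ℕ)
    (m : ℕ) (c : List Bool → G) (r : List Bool → ℝ) : Prop :=
  (∀ s, c s ∈ H) ∧ (∀ s, 0 < r s) ∧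
  (∀ s : List Bool, s.length = m → r s ≤ (1/2 : ℝ)^m) ∧
  (∀ s t : List Bool, s.length = m → t.length = m → s ≠ t →
    Disjoint (closedBall (c s) (r s)) (closedBall (c t) (r t))) ∧
  (∀ j < m, ∀ τ : Fin (e j).1 → List Bool, (∀ i, (τ i).length = m) →
    2 ≤ (e j).2.2 → (e j).2.2 ∉ F →
    ∀ x : Fin (e j).1 → G, (∀ i, x i ∈ closedBall (c (τ i)) (r (τ i))) →
      (∀ i, x i ∈ closure (H : Set G)) → (∀ i i', τ i = τ i' → x i = x i') →
      orderOf (evalWord (e j).2.1 x) ≠ (e j).2.2)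

lemma ofFn_cast {α : Type*} {M : ℕ} (s : List α) (h : s.length = M) :
    List.ofFn (fun t : Fin M => s.get (Fin.cast h.symm t)) = s := by
  subst h
  exact List.ofFn_get s

lemma step (H : Subgroup G) (F : Finset ℕ) (e : ℕ → Σ n : ℕ, List (Fin n × Bool) × ℕ)
    (hacc : ∀ x ∈ (H : Set G), AccPt x (𝓟 (H : Set G)))
    (horder : ∀ g ∈ H, g ≠ 1 → orderOf g ∈ F)
    (m : ℕ) (c : List Bool → G) (r : List Bool → ℝ) (hg : Good H F e m c r) :
    ∃ c' r', Good H F e (m+1) c' r' ∧ ∀ s : List Bool, s.length = m+1 →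
      closedBall (c' s) (r' s) ⊆ closedBall (c s.tail) (r s.tail) := by
  classical
  obtain ⟨hcH, hrp, hrb, hdj, _⟩ := hg
  have hsp : ∀ t : List Bool, ∃ h', h' ∈ H ∧ h' ≠ c t ∧ dist h' (c t) < r t / 2 := by
    intro t
    have h1 := (accPt_iff_nhds (x := c t) (C := (H : Set G))).mp (hacc (c t) (hcH t))
    obtain ⟨y, ⟨hy1, hy2⟩, hy3⟩ := h1 (ball (c t) (r t / 2))
      (ball_mem_nhds _ (by have := hrp t; linarith))
    exact ⟨y, hy2, hy3, mem_ball.mp hy1⟩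
  choose hp hpH hpne hpd using hsp
  set c1 : List Bool → G := fun s => if s.headI then hp s.tail else c s.tail with hc1
  set r1 : List Bool → ℝ := fun s => if s = [] then r [] else
    min ((1/2 : ℝ)^(m+1)) (dist (hp s.tail) (c s.tail) / 3) with hr1
  have hD : ∀ t, 0 < dist (hp t) (c t) := fun t => dist_pos.mpr (hpne t)
  have hc1H : ∀ s, c1 s ∈ H := by
    intro s
    simp only [hc1]
    split
    · exact hpH _
    · exact hcH _
  have hr1p : ∀ s, 0 < r1 s := by
    intro s
    simp only [hr1]
    split
    · exact hrp []
    · exact lt_min (by positivity) (by have := hD s.tail; linarith)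
  have hr1le : ∀ (b : Bool) (t : List Bool), r1 (b :: t) ≤ dist (hp t) (c t) / 3 := by
    intro b t
    simp only [hr1, if_neg (List.cons_ne_nil b t), List.tail_cons]
    exact min_le_right _ _
  have hr1le2 : ∀ (b : Bool) (t : List Bool), r1 (b :: t) ≤ (1/2 : ℝ)^(m+1) := by
    intro b t
    simp only [hr1, if_neg (List.cons_ne_nil b t), List.tail_cons]
    exact min_le_left _ _
  have hlink1 : ∀ s : List Bool, s.length = m+1 →
      closedBall (c1 s) (r1 s) ⊆ closedBall (c s.tail) (r s.tail) := by
    intro s hs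
    rcases s with _ | ⟨b, t⟩
    · simp at hs
    · have hrt := hrp t
      have hDt := hD t
      have hDt2 := hpd t
      have hle := hr1le b t
      rw [List.tail_cons]
      apply closedBall_subset_closedBall'
      cases b
      · have : c1 (false :: t) = c t := by simp [hc1]
        rw [this, dist_self]
        linarith
      · have : c1 (true :: t) = hp t := by simp [hc1]
        rw [this]
        linarith
  have hdj1 : ∀ s t₂ : List Bool, s.length = m+1 → t₂.length = m+1 → s ≠ t₂ →
      Disjoint (closedBall (c1 s) (r1 s)) (closedBall (c1 t₂) (r1 t₂)) := by
    intro s s' hs hs' hne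
    rcases s with _ | ⟨b, t⟩
    · simp at hs
    rcases s' with _ | ⟨b', t'⟩
    · simp at hs'
    by_cases ht : t = t'
    · subst ht
      have hbb : b ≠ b' := by
        intro h
        exact hne (by rw [h])
      have h1 : closedBall (c1 (b :: t)) (r1 (b :: t))
          ⊆ closedBall (c1 (b :: t)) (dist (hp t) (c t) / 3) :=
        closedBall_subset_closedBall (hr1le b t)
      have h2 : closedBall (c1 (b' :: t)) (r1 (b' :: t))
          ⊆ closedBall (c1 (b' :: t)) (dist (hp t) (c t) / 3) :=
        closedBall_subset_closedBall (hr1le b' t)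
      refine Disjoint.mono h1 h2 ?_
      have hDt := hD t
      have hcf : c1 (false :: t) = c t := by simp [hc1]
      have hct : c1 (true :: t) = hp t := by simp [hc1]
      cases b <;> cases b'
      · exact absurd rfl hbb
      · rw [hcf, hct]
        apply closedBall_disjoint_closedBall
        linarith [dist_comm (c t) (hp t)]
      · rw [hcf, hct]
        apply closedBall_disjoint_closedBall
        linarith [dist_comm (c t) (hp t)]
      · exact absurd rfl hbb
    · have h1 := hlink1 (b :: t) hs
      have h2 := hlink1 (b' :: t') hs'
      rw [List.tail_cons] at h1 h2
      have lt1 : t.length = m := by simpa using hs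
      have lt2 : t'.length = m := by simpa using hs'
      exact Disjoint.mono h1 h2 (hdj t t' lt1 lt2 ht)
  -- now handle all constraints j ≤ m at level m+1
  set L : List MTask := (List.range (m+1)).flatMap (fun j =>
    (Finset.univ : Finset (Fin (e j).1 → (Fin (m+1) → Bool))).toList.map
      (fun w => ⟨(e j).1, (e j).2.1, (e j).2.2, fun i => List.ofFn (w i)⟩)) with hL
  obtain ⟨c2, r2, h2H, h2p, h2le, h2sub, h2av⟩ := fold H F horder L c1 r1 hc1H hr1p
  refine ⟨c2, r2, ⟨h2H, h2p, ?_, ?_, ?_⟩, fun s hs => (h2sub s).trans (hlink1 s hs)⟩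
  · intro s hs
    rcases s with _ | ⟨b, t⟩
    · simp at hs
    · exact (h2le _).trans (hr1le2 b t)
  · intro s t hs ht hne
    exact Disjoint.mono (h2sub s) (h2sub t) (hdj1 s t hs ht hne)
  · intro j hj τ hlen hd2 hdF x hx hxK hcompat
    have hmem : (⟨(e j).1, (e j).2.1, (e j).2.2, τ⟩ : MTask) ∈ L := by
      rw [hL]
      apply List.mem_flatMap.mpr
      refine ⟨j, List.mem_range.mpr hj, List.mem_map.mpr
        ⟨fun i u => (τ i).get (Fin.cast (hlen i).symm u),
          Finset.mem_toList.mpr (Finset.mem_univ _), ?_⟩⟩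
      exact congrArg (MTask.mk (e j).1 (e j).2.1 (e j).2.2)
        (funext fun i => ofFn_cast (τ i) (hlen i))
    exact h2av _ hmem hd2 hdF x hx hxK hcompat

/-- Generic dependent chain construction. -/
lemma chain_exists {S : Type*} (P : ℕ → S → Prop) (R : ℕ → S → S → Prop) (s0 : S)
    (h0 : P 0 s0) (hstep : ∀ m s, P m s → ∃ s', P (m+1) s' ∧ R m s s') :
    ∃ f : ℕ → S, ∀ m, P m (f m) ∧ R m (f m) (f (m+1)) := by
  choose! g hg1 hg2 using hstep
  refine ⟨fun m => Nat.rec s0 (fun m ih => g m ih) m, ?_⟩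
  have hP : ∀ m, P m (Nat.rec s0 (fun m ih => g m ih) m) := by
    intro m
    induction m with
    | zero => exact h0
    | succ m ih => exact hg1 m _ ih
  exact fun m => ⟨hP m, hg2 m _ (hP m)⟩

/-- Restriction of a branch to its first `m` values (most recent first). -/
def res (σ : ℕ → Bool) : ℕ → List Bool
  | 0 => []
  | m+1 => σ m :: res σ m

lemma res_length (σ : ℕ → Bool) (m : ℕ) : (res σ m).length = m := by
  induction m with
  | zero => rfl
  | succ m ih => simp [res, ih]

lemma res_tail (σ : ℕ → Bool) (m : ℕ) : (res σ (m+1)).tail = res σ m := rfl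

lemma res_eq_iff (σ σ' : ℕ → Bool) (m : ℕ) :
    res σ m = res σ' m ↔ ∀ t < m, σ t = σ' t := by
  induction m with
  | zero => simp [res]
  | succ m ih =>
    constructor
    · intro h t ht
      have h' : σ m :: res σ m = σ' m :: res σ' m := h
      injection h' with h1 h2
      rcases Nat.lt_succ_iff_lt_or_eq.mp ht with h3 | rfl
      · exact ih.mp h2 t h3
      · exact h1
    · intro h
      show σ m :: res σ m = σ' m :: res σ' m
      rw [ih.mpr (fun t ht => h t (by omega)), h m (by omega)]

theorem aux {G : Type u} [Group G] [MetricSpace G] [CompleteSpace G] [IsTopologicalGroup G]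
    (F : Finset ℕ) (hF : ∀ k ∈ F, 2 ≤ k)
    (h : ∃ H : Subgroup G, DenseInItselfSet (H : Set G) ∧
      ∀ g ∈ H, g ≠ 1 → orderOf g ∈ F) :
    ∃ P : Set G, IsPerfectSet P ∧ ∀ g ∈ Subgroup.closure P, g ≠ 1 → orderOf g ∈ F := by
  classical
  obtain ⟨H, ⟨hne, hacc⟩, horder⟩ := h
  obtain ⟨h0, h0H⟩ := hne
  obtain ⟨e, hesurj⟩ := exists_surjective_nat (Σ n : ℕ, List (Fin n × Bool) × ℕ)
  have good0 : Good H F e 0 (fun _ => h0) (fun _ => 1) := by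
    refine ⟨fun _ => h0H, fun _ => one_pos, fun s hs => by norm_num, ?_, ?_⟩
    · intro s t hs ht hne'
      exact absurd (by rw [List.length_eq_zero_iff.mp hs, List.length_eq_zero_iff.mp ht]) hne'
    · intro j hj
      omega
  obtain ⟨f, hf⟩ := chain_exists (S := (List Bool → G) × (List Bool → ℝ))
    (fun m cr => Good H F e m cr.1 cr.2)
    (fun m cr cr' => ∀ s : List Bool, s.length = m+1 →
      closedBall (cr'.1 s) (cr'.2 s) ⊆ closedBall (cr.1 s.tail) (cr.2 s.tail))
    (⟨fun _ => h0, fun _ => 1⟩)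
    good0
    (fun m cr hcr => by
      obtain ⟨c', r', hg, hl⟩ := step H F e hacc horder m cr.1 cr.2 hcr
      exact ⟨⟨c', r'⟩, hg, hl⟩)
  have hfg : ∀ m, Good H F e m (f m).1 (f m).2 := fun m => (hf m).1
  have hlink : ∀ m, ∀ s : List Bool, s.length = m+1 →
      closedBall ((f (m+1)).1 s) ((f (m+1)).2 s)
        ⊆ closedBall ((f m).1 s.tail) ((f m).2 s.tail) :=
    fun m => (hf m).2
  set xs : (ℕ → Bool) → ℕ → G := fun σ m => (f m).1 (res σ m) with hxs
  have hsubm : ∀ (σ : ℕ → Bool) (m m' : ℕ), m ≤ m' →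
      closedBall ((f m').1 (res σ m')) ((f m').2 (res σ m'))
        ⊆ closedBall ((f m).1 (res σ m)) ((f m).2 (res σ m)) := by
    intro σ m m' hm
    induction m', hm using Nat.le_induction with
    | base => exact subset_rfl
    | succ m' hm ih =>
      refine subset_trans ?_ ih
      have := hlink m' (res σ (m'+1)) (res_length σ (m'+1))
      rwa [res_tail] at this
  have hcauchy : ∀ σ, CauchySeq (xs σ) := by
    intro σ
    apply cauchySeq_of_le_geometric (1/2 : ℝ) 1 (by norm_num)
    intro n
    rw [one_mul]
    have h1 : xs σ (n+1) ∈ closedBall ((f n).1 (res σ n)) ((f n).2 (res σ n)) := by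
      have := hlink n (res σ (n+1)) (res_length σ (n+1))
      rw [res_tail] at this
      exact this (mem_closedBall_self ((hfg (n+1)).2.1 _).le)
    have h2 := (hfg n).2.2.1 (res σ n) (res_length σ n)
    rw [mem_closedBall] at h1
    calc dist (xs σ n) (xs σ (n+1)) = dist (xs σ (n+1)) (xs σ n) := dist_comm _ _
      _ ≤ (f n).2 (res σ n) := h1
      _ ≤ (1/2)^n := h2
  have hlimex : ∀ σ, ∃ l, Tendsto (xs σ) atTop (𝓝 l) :=
    fun σ => cauchySeq_tendsto_of_complete (hcauchy σ)
  choose φ hφ using hlimex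
  have hmemball : ∀ σ m, φ σ ∈ closedBall ((f m).1 (res σ m)) ((f m).2 (res σ m)) := by
    intro σ m
    refine (Metric.isClosed_closedBall (x := (f m).1 (res σ m)) (ε := (f m).2 (res σ m))).mem_of_tendsto (hφ σ) ?_
    filter_upwards [eventually_ge_atTop m] with m' hm'
    exact hsubm σ m m' hm' (mem_closedBall_self ((hfg m').2.1 _).le)
  have hφK : ∀ σ, φ σ ∈ closure (H : Set G) := by
    intro σ
    refine isClosed_closure.mem_of_tendsto (hφ σ) (Eventually.of_forall fun m => ?_)
    exact subset_closure ((hfg m).1 _)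
  have hφdist : ∀ σ σ' m, res σ m = res σ' m → dist (φ σ) (φ σ') ≤ 2 * (1/2 : ℝ)^m := by
    intro σ σ' m hres
    have h1 := hmemball σ m
    have h2 := hmemball σ' m
    rw [hres] at h1
    have hb := (hfg m).2.2.1 (res σ' m) (res_length σ' m)
    rw [mem_closedBall] at h1 h2
    calc dist (φ σ) (φ σ')
        ≤ dist (φ σ) ((f m).1 (res σ' m)) + dist ((f m).1 (res σ' m)) (φ σ') :=
          dist_triangle _ _ _
      _ ≤ (1/2)^m + (1/2)^m := by
          rw [dist_comm ((f m).1 (res σ' m)) (φ σ')]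
          exact add_le_add (h1.trans hb) (h2.trans hb)
      _ = 2 * (1/2)^m := by ring
  have hφinj : Function.Injective φ := by
    intro σ σ' hEq
    by_contra hneq
    obtain ⟨t, ht⟩ := Function.ne_iff.mp hneq
    have hres : res σ (t+1) ≠ res σ' (t+1) := by
      intro hcontra
      exact ht ((res_eq_iff σ σ' (t+1)).mp hcontra t (by omega))
    have hdisj := (hfg (t+1)).2.2.2.1 (res σ (t+1)) (res σ' (t+1))
      (res_length _ _) (res_length _ _) hres
    exact (Set.disjoint_left.mp hdisj (hmemball σ (t+1))) (hEq ▸ hmemball σ' (t+1))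
  set C : Set G := Set.range φ with hC
  have hcont : Continuous φ := by
    rw [continuous_iff_continuousAt]
    intro σ
    rw [ContinuousAt, Metric.tendsto_nhds]
    intro ε hε
    obtain ⟨m, hm⟩ := exists_pow_lt_of_lt_one (show (0:ℝ) < ε/2 by linarith)
      (show (1/2 : ℝ) < 1 by norm_num)
    have hev : ∀ᶠ σ' in 𝓝 σ, ∀ t ∈ Finset.range m, σ' t = σ t := by
      rw [eventually_all_finset]
      intro t _
      have hopen : IsOpen {σ' : ℕ → Bool | σ' t = σ t} := by
        have heq : {σ' : ℕ → Bool | σ' t = σ t}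
            = (fun σ' : ℕ → Bool => σ' t) ⁻¹' {σ t} := rfl
        rw [heq]
        exact (isOpen_discrete ({σ t} : Set Bool)).preimage (continuous_apply t)
      exact hopen.mem_nhds rfl
    filter_upwards [hev] with σ' hσ'
    have hres : res σ' m = res σ m :=
      (res_eq_iff _ _ m).mpr (fun t ht => hσ' t (Finset.mem_range.mpr ht))
    calc dist (φ σ') (φ σ) ≤ 2 * (1/2)^m := hφdist σ' σ m hres
      _ < ε := by linarith
  have hcompact : IsCompact C := isCompact_range hcont
  have hclosed : IsClosed C := hcompact.isClosed
  set N : ℕ := F.lcm id with hN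
  have hN0 : N ≠ 0 := by
    intro hcontra
    rw [hN] at hcontra
    have h2 := Finset.lcm_eq_zero_iff.mp hcontra
    have h2 : (0 : ℕ) ∈ F := by
      obtain ⟨x0, hx0, hx00⟩ := h2
      exact (show x0 = 0 from hx00) ▸ hx0
    exact absurd (hF 0 h2) (by omega)
  have htor : ∀ g ∈ closure (H : Set G), g ^ N = 1 := by
    intro g hg
    have hsubset : closure (H : Set G) ⊆ {g : G | g ^ N = 1} := by
      apply closure_minimal
      · intro a ha
        by_cases ha1 : a = 1
        · simp [ha1]
        · have hdvd : orderOf a ∣ N := Finset.dvd_lcm (horder a ha ha1)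
          exact orderOf_dvd_iff_pow_eq_one.mp hdvd
      · have heq : {g : G | g ^ N = 1} = (fun g : G => g ^ N) ⁻¹' {1} := rfl
        rw [heq]
        exact isClosed_singleton.preimage (continuous_pow N)
    exact hsubset hg
  refine ⟨C, ⟨⟨φ (fun _ => false), Set.mem_range_self _⟩,
    ⟨inferInstance, rfl, hclosed.completeSpace_coe⟩, ?_⟩, ?_⟩
  · rintro x ⟨σ, rfl⟩
    rw [accPt_iff_nhds]
    intro U hU
    obtain ⟨ε, hε, hball⟩ := Metric.mem_nhds_iff.mp hU
    obtain ⟨m, hm⟩ := exists_pow_lt_of_lt_one (show (0:ℝ) < ε/2 by linarith)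
      (show (1/2:ℝ) < 1 by norm_num)
    set σ' : ℕ → Bool := fun t => if t = m then !(σ t) else σ t with hσ'
    have hres : res σ' m = res σ m :=
      (res_eq_iff _ _ _).mpr (fun t ht => by simp [hσ', Nat.ne_of_lt ht])
    have hne2 : σ' ≠ σ := by
      intro hcontra
      have := congrFun hcontra m
      simp [hσ'] at this
    refine ⟨φ σ', ⟨hball ?_, Set.mem_range_self _⟩, fun hcontra => hne2 (hφinj hcontra)⟩
    rw [mem_ball]
    calc dist (φ σ') (φ σ) ≤ 2 * (1/2)^m := hφdist σ' σ m hres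
      _ < ε := by linarith
  · intro g hg hg1
    by_contra hgF
    have hCK : C ⊆ (H.topologicalClosure : Set G) := by
      rintro _ ⟨σ, rfl⟩
      exact hφK σ
    have hgK : g ∈ closure (H : Set G) :=
      (Subgroup.closure_le H.topologicalClosure).mpr hCK hg
    set d : ℕ := orderOf g with hd
    have hdN : d ∣ N := orderOf_dvd_iff_pow_eq_one.mpr (htor g hgK)
    have hd0 : d ≠ 0 := by
      intro hcontra
      rw [hcontra] at hdN
      exact hN0 (Nat.eq_zero_of_zero_dvd hdN)
    have hd1 : d ≠ 1 := fun hcontra => hg1 (orderOf_eq_one_iff.mp hcontra)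
    have hd2 : 2 ≤ d := by omega
    have hgsub : g ∈ Submonoid.closure (C ∪ C⁻¹) := by
      rw [← Subgroup.closure_toSubmonoid]
      exact hg
    obtain ⟨l, hl, hlprod⟩ := Submonoid.exists_list_of_mem_closure hgsub
    have hchoice : ∀ i : Fin l.length, ∃ (σi : ℕ → Bool) (b : Bool),
        l.get i = if b then φ σi else (φ σi)⁻¹ := by
      intro i
      have hmem := hl (l.get i) (l.get_mem i)
      rcases hmem with hmem | hmem
      · obtain ⟨σi, hσi⟩ := hmem
        refine ⟨σi, true, ?_⟩
        rw [if_pos rfl]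
        exact hσi.symm
      · rw [Set.mem_inv] at hmem
        obtain ⟨σi, hσi⟩ := hmem
        refine ⟨σi, false, ?_⟩
        simp only [Bool.false_eq_true, if_false]
        rw [hσi, inv_inv]
    choose σs bs hsb using hchoice
    set p : List (Fin l.length × Bool) := (List.finRange l.length).map (fun i => (i, bs i))
      with hp
    set x : Fin l.length → G := fun i => φ (σs i) with hx
    have hgx : evalWord p x = g := by
      rw [← hlprod, hp, evalWord, List.map_map]
      have heq : ((fun ib : Fin l.length × Bool => if ib.2 then x ib.1 else (x ib.1)⁻¹)
          ∘ (fun i => (i, bs i))) = fun i => l.get i := by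
        funext i
        simp only [Function.comp_apply]
        rw [hsb i]
      rw [heq, ← List.ofFn_eq_map, List.ofFn_get]
    obtain ⟨j, hj⟩ := hesurj ⟨l.length, p, d⟩
    have hTex : ∀ i i' : Fin l.length, ∃ t, σs i ≠ σs i' → σs i t ≠ σs i' t := by
      intro i i'
      by_cases hss : σs i = σs i'
      · exact ⟨0, fun h' => absurd hss h'⟩
      · obtain ⟨t, ht⟩ := Function.ne_iff.mp hss
        exact ⟨t, fun _ => ht⟩
    choose T hT using hTex
    set M : ℕ := j + 1 +
      (Finset.univ : Finset (Fin l.length × Fin l.length)).sup (fun q => T q.1 q.2) with hM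
    have hjM : j < M := by
      rw [hM]
      omega
    have hcon := (hfg M).2.2.2.2 j hjM
    rw [hj] at hcon
    have hfinal := hcon (fun i => res (σs i) M) (fun i => res_length _ _) hd2 hgF x
      (fun i => hmemball (σs i) M) (fun i => hφK (σs i)) ?_
    · exact hfinal (by rw [hgx])
    · intro i i' hττ
      by_cases hss : σs i = σs i'
      · rw [hx]
        simp only
        rw [hss]
      · exfalso
        have hTlt : T i i' < M := by
          have hle : T i i' ≤ (Finset.univ : Finset (Fin l.length × Fin l.length)).sup
              (fun q => T q.1 q.2) :=
            Finset.le_sup (f := fun q : Fin l.length × Fin l.length => T q.1 q.2)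
              (Finset.mem_univ (i, i'))
          omega
        exact hT i i' hss ((res_eq_iff _ _ M).mp hττ (T i i') hTlt)

end S16

theorem statement16 (F : Finset ℕ) (hF : ∀ k ∈ F, 2 ≤ k)
    {G : Type u} [Group G] [TopologicalSpace G] [IsTopologicalGroup G]
    (hG : CompletelyMetrizable G)
    (h : ∃ H : Subgroup G, DenseInItselfSet (H : Set G) ∧
      ∀ g ∈ H, g ≠ 1 → orderOf g ∈ F) :
    ∃ P : Set G, IsPerfectSet P ∧ ∀ g ∈ Subgroup.closure P, g ≠ 1 → orderOf g ∈ F := by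
  obtain ⟨m, hm, hc⟩ := hG
  subst hm
  letI : MetricSpace G := m
  letI : CompleteSpace G := hc
  exact S16.aux F hF h
end

section
/- Let κ be an infinite cardinal and let G be a completely metrizable topological group of weight ≤ κ. If for every ordinal γ < κ⁺ there exists a set S_γ ⊆ G of Cantor–Bendixson rank ≥ γ generating a CA-subgroup of G, then G has a perfectly generated CA-subgroup, i.e. there exists a perfect set P ⊆ G such that the subgroup generated by P is a CA-group. -/
open Set Filter Cardinal FirstOrder Topology
set_option linter.unusedSectionVars false
set_option maxHeartbeats 1000000

universe u v

/-- A group is a CA-group if the centralizer of every nonidentity element is abelian. -/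
def IsCAGroup (H : Type*) [Group H] : Prop :=
  ∀ h : H, h ≠ 1 → ∀ a ∈ Subgroup.centralizer ({h} : Set H),
    ∀ b ∈ Subgroup.centralizer ({h} : Set H), a * b = b * a


section Words
variable {G : Type*} [Group G]

/-- abstract words -/
abbrev Wd := List (ℕ × Bool)

def evalW (v : ℕ → G) (w : Wd) : G :=
  (w.map fun p => if p.2 then v p.1 else (v p.1)⁻¹).prod

@[simp] lemma evalW_nil (v : ℕ → G) : evalW v ([] : Wd) = 1 := rfl

lemma evalW_cons (v : ℕ → G) (p : ℕ × Bool) (w : Wd) :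
    evalW v (p :: w) = (if p.2 then v p.1 else (v p.1)⁻¹) * evalW v w := by
  simp [evalW]

lemma evalW_append (v : ℕ → G) (w₁ w₂ : Wd) :
    evalW v (w₁ ++ w₂) = evalW v w₁ * evalW v w₂ := by
  simp [evalW]

def invW (w : Wd) : Wd := (w.reverse).map fun p => (p.1, !p.2)

lemma evalW_invW (v : ℕ → G) (w : Wd) : evalW v (invW w) = (evalW v w)⁻¹ := by
  induction w with
  | nil => simp [invW]
  | cons p w ih =>
      have : invW (p :: w) = invW w ++ [(p.1, !p.2)] := by simp [invW]
      rw [this, evalW_append, ih, evalW_cons, evalW_cons, evalW_nil]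
      cases hb : p.2 <;> simp [mul_inv_rev]

def commW (w₁ w₂ : Wd) : Wd := w₁ ++ w₂ ++ invW w₁ ++ invW w₂

open scoped commutatorElement in
lemma evalW_commW_eq_one_iff (v : ℕ → G) (w₁ w₂ : Wd) :
    evalW v (commW w₁ w₂) = 1 ↔ evalW v w₁ * evalW v w₂ = evalW v w₂ * evalW v w₁ := by
  rw [commW, evalW_append, evalW_append, evalW_append, evalW_invW, evalW_invW]
  have : evalW v w₁ * evalW v w₂ * (evalW v w₁)⁻¹ * (evalW v w₂)⁻¹ = ⁅evalW v w₁, evalW v w₂⁆ := rfl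
  rw [this, commutatorElement_eq_one_iff_mul_comm]

lemma evalW_congr {v v' : ℕ → G} (w : Wd) (h : ∀ p ∈ w, v p.1 = v' p.1) :
    evalW v w = evalW v' w := by
  induction w with
  | nil => rfl
  | cons p w ih =>
      rw [evalW_cons, evalW_cons, h p (List.mem_cons_self),
        ih fun q hq => h q (List.mem_cons_of_mem _ hq)]

lemma evalW_mem {H : Subgroup G} {v : ℕ → G} (w : Wd) (h : ∀ p ∈ w, v p.1 ∈ H) :
    evalW v w ∈ H := by
  induction w with
  | nil => exact H.one_mem
  | cons p w ih =>
      rw [evalW_cons]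
      refine H.mul_mem ?_ (ih fun q hq => h q (List.mem_cons_of_mem _ hq))
      have := h p (List.mem_cons_self)
      cases hb : p.2 <;> simp [this, H.inv_mem this]

lemma continuous_evalW [TopologicalSpace G] [IsTopologicalGroup G] (w : Wd) :
    Continuous fun v : ℕ → G => evalW v w := by
  induction w with
  | nil => simpa [evalW] using continuous_const
  | cons p w ih =>
      have h1 : Continuous fun v : ℕ → G => (if p.2 then v p.1 else (v p.1)⁻¹) := by
        cases p.2
        · simp only [Bool.false_eq_true, if_false]; exact (continuous_apply p.1).inv
        · simpa using (continuous_apply p.1)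
      simp only [evalW_cons]; exact h1.mul ih

def varsBound (w : Wd) : ℕ := (w.map Prod.fst).foldr max 0 + 1

lemma lt_varsBound {w : Wd} {p : ℕ × Bool} (hp : p ∈ w) : p.1 < varsBound w := by
  have : p.1 ≤ (w.map Prod.fst).foldr max 0 := by
    induction w with
    | nil => cases hp
    | cons q w ih =>
        rcases List.mem_cons.mp hp with h | h
        · subst h; exact le_max_left _ _
        · exact le_trans (ih h) (le_max_right _ _)
  simp only [varsBound]
  omega

end Words

section Fusion
variable {G : Type*} [Group G] [MetricSpace G]

/-- agreement of two branches below level L -/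
def agr (L : ℕ) (b b' : ℕ → Bool) : Prop := ∀ j < L, b j = b' j

lemma agr_refl (L : ℕ) (b : ℕ → Bool) : agr L b b := fun _ _ => rfl
lemma agr_symm {L b b'} (h : agr L b b') : agr L b' b := fun j hj => (h j hj).symm
lemma agr_trans {L b b' b''} (h : agr L b b') (h' : agr L b' b'') : agr L b b'' :=
  fun j hj => (h j hj).trans (h' j hj)
lemma agr_mono {L L' b b'} (h : agr L' b b') (hle : L ≤ L') : agr L b b' :=
  fun j hj => h j (lt_of_lt_of_le hj hle)

structure Pos (G : Type*) [Group G] [MetricSpace G] (H : Subgroup G) where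
  L : ℕ
  x : (ℕ → Bool) → G
  r : (ℕ → Bool) → ℝ
  xmem : ∀ b, x b ∈ H
  rpos : ∀ b, 0 < r b
  xcompat : ∀ b b', agr L b b' → x b = x b'
  rcompat : ∀ b b', agr L b b' → r b = r b'
  disj : ∀ b b', ¬ agr L b b' → r b + r b' < dist (x b) (x b')

variable {H : Subgroup G}

/-- quantitative nesting of positions -/
def PExt (p q : Pos G H) : Prop :=
  p.L ≤ q.L ∧ ∀ b, dist (q.x b) (p.x b) + q.r b ≤ p.r b

lemma PExt.refl (p : Pos G H) : PExt p p :=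
  ⟨le_refl _, fun b => by simp [dist_self]⟩

lemma PExt.trans {p q s : Pos G H} (h1 : PExt p q) (h2 : PExt q s) : PExt p s := by
  refine ⟨h1.1.trans h2.1, fun b => ?_⟩
  have t1 := h1.2 b
  have t2 := h2.2 b
  have := dist_triangle (s.x b) (q.x b) (p.x b)
  linarith

lemma PExt.rle {p q : Pos G H} (h : PExt p q) (b : ℕ → Bool) : q.r b ≤ p.r b := by
  have := h.2 b
  have := dist_nonneg (x := q.x b) (y := p.x b)
  linarith

lemma PExt.dist_le {p q : Pos G H} (h : PExt p q) (b : ℕ → Bool) :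
    dist (q.x b) (p.x b) ≤ p.r b := by
  have := h.2 b
  have := (q.rpos b).le
  linarith

/-- shrink all radii by capping with ε -/
def shrink_s18 (p : Pos G H) (ε : ℝ) (hε : 0 < ε) : Pos G H where
  L := p.L
  x := p.x
  r := fun b => min (p.r b) ε
  xmem := p.xmem
  rpos := fun b => lt_min (p.rpos b) hε
  xcompat := p.xcompat
  rcompat := fun b b' h => by rw [p.rcompat b b' h]
  disj := fun b b' h => by
    have := p.disj b b' h
    have h1 : min (p.r b) ε ≤ p.r b := min_le_left _ _
    have h2 : min (p.r b') ε ≤ p.r b' := min_le_left _ _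
    linarith

lemma ext_shrink (p : Pos G H) (ε : ℝ) (hε : 0 < ε) : PExt p (shrink_s18 p ε hε) :=
  ⟨le_refl _, fun b => by simp [shrink_s18, dist_self]⟩

@[simp] lemma shrink_L (p : Pos G H) (ε hε) : (shrink_s18 p ε hε).L = p.L := rfl
@[simp] lemma shrink_x (p : Pos G H) (ε hε) : (shrink_s18 p ε hε).x = p.x := rfl
lemma shrink_r_le (p : Pos G H) (ε hε) (b) : (shrink_s18 p ε hε).r b ≤ ε := min_le_right _ _



section Choice
variable (hres : ∀ y : G, y ∈ H → ∀ ε : ℝ, 0 < ε → ∃ z, z ∈ (H : Set G) ∧ z ≠ y ∧ dist z y < ε)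

noncomputable def zfun (y : G) (hy : y ∈ H) (ε : ℝ) (hε : 0 < ε) : G :=
  (hres y hy ε hε).choose

lemma zfun_mem (y hy ε hε) : zfun hres y hy ε hε ∈ H := (hres y hy ε hε).choose_spec.1
lemma zfun_ne (y hy ε hε) : zfun hres y hy ε hε ≠ y := (hres y hy ε hε).choose_spec.2.1
lemma zfun_dist (y hy ε hε) : dist (zfun hres y hy ε hε) y < ε := (hres y hy ε hε).choose_spec.2.2

lemma zfun_congr {y y' : G} {hy hy' ε ε' hε hε'} (h1 : y = y') (h2 : ε = ε') :
    zfun hres y hy ε hε = zfun hres y' hy' ε' hε' := by subst h1; subst h2; rfl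

/-- split every cone of `p` in two, with radii capped by `(2⁻¹)^n` -/
noncomputable def splitPos (p : Pos G H) (n : ℕ) : Pos G H where
  L := p.L + 1
  x := fun b => if b p.L then
      zfun hres (p.x b) (p.xmem b) (p.r b / 4) (by have := p.rpos b; linarith)
    else p.x b
  r := fun b => min (min
      (dist (zfun hres (p.x b) (p.xmem b) (p.r b / 4) (by have := p.rpos b; linarith)) (p.x b) / 4)
      (p.r b / 4)) ((2⁻¹ : ℝ)^n)
  xmem := by
    intro b; split
    · exact zfun_mem hres _ _ _ _
    · exact p.xmem b
  rpos := by
    intro b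
    have h1 : (0:ℝ) < dist (zfun hres (p.x b) (p.xmem b) (p.r b / 4)
        (by have := p.rpos b; linarith)) (p.x b) := dist_pos.mpr (zfun_ne hres _ _ _ _)
    have h2 := p.rpos b
    have h3 : (0:ℝ) < (2⁻¹:ℝ)^n := by positivity
    exact lt_min (lt_min (by linarith) (by linarith)) h3
  xcompat := by
    intro b b' hagr
    have hL : agr p.L b b' := agr_mono hagr (Nat.le_succ _)
    have hx : p.x b = p.x b' := p.xcompat b b' hL
    have hr : p.r b = p.r b' := p.rcompat b b' hL
    have hbit : b p.L = b' p.L := hagr p.L (Nat.lt_succ_self _)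
    rw [hbit]
    split
    · exact zfun_congr hres hx (by rw [hr])
    · exact hx
  rcompat := by
    intro b b' hagr
    have hL : agr p.L b b' := agr_mono hagr (Nat.le_succ _)
    have hx : p.x b = p.x b' := p.xcompat b b' hL
    have hr : p.r b = p.r b' := p.rcompat b b' hL
    rw [zfun_congr hres hx (by rw [hr] : p.r b / 4 = p.r b' / 4), hx, hr]
  disj := by
    intro b b' hnagr
    by_cases hL : agr p.L b b'
    · -- same class below p.L, bits at p.L differ
      have hx : p.x b = p.x b' := p.xcompat b b' hL
      have hr : p.r b = p.r b' := p.rcompat b b' hL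
      have hbit : b p.L ≠ b' p.L := by
        intro he
        exact hnagr (fun j hj => by
          rcases Nat.lt_succ_iff_lt_or_eq.mp hj with h | h
          · exact hL j h
          · subst h; exact he)
      have hz : zfun hres (p.x b') (p.xmem b') (p.r b' / 4) (by have := p.rpos b'; linarith)
          = zfun hres (p.x b) (p.xmem b) (p.r b / 4) (by have := p.rpos b; linarith) :=
        zfun_congr hres hx.symm (by rw [hr])
      have hm : (min (min
          (dist (zfun hres (p.x b') (p.xmem b') (p.r b' / 4) (by have := p.rpos b'; linarith)) (p.x b') / 4)
          (p.r b' / 4)) ((2⁻¹ : ℝ)^n)) = (min (min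
          (dist (zfun hres (p.x b) (p.xmem b) (p.r b / 4) (by have := p.rpos b; linarith)) (p.x b) / 4)
          (p.r b / 4)) ((2⁻¹ : ℝ)^n)) := by rw [hz, ← hx, ← hr]
      rw [hm]
      set z := zfun hres (p.x b) (p.xmem b) (p.r b / 4) (by have := p.rpos b; linarith) with hzdef
      set m := min (min (dist z (p.x b) / 4) (p.r b / 4)) ((2⁻¹ : ℝ)^n) with hmdef
      have hρ : (0:ℝ) < dist z (p.x b) := dist_pos.mpr (zfun_ne hres _ _ _ _)
      have hm4 : m ≤ dist z (p.x b) / 4 := le_trans (min_le_left _ _) (min_le_left _ _)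
      cases h1 : b p.L
      · have h2 : b' p.L = true := by
          cases h2 : b' p.L
          · exact absurd (h1.trans h2.symm) hbit
          · rfl
        rw [h2, hz]
        simp only [Bool.false_eq_true, if_false, if_true]
        rw [dist_comm]
        linarith
      · have h2 : b' p.L = false := by
          cases h2 : b' p.L
          · rfl
          · exact absurd (h1.trans h2.symm) hbit
        rw [h2]
        simp only [Bool.false_eq_true, if_false, if_true]
        rw [← hx]
        linarith
    · -- different classes below p.L : use old disjointness
      have hD := p.disj b b' hL
      have hzb : dist (zfun hres (p.x b) (p.xmem b) (p.r b / 4)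
          (by have := p.rpos b; linarith)) (p.x b) < p.r b / 4 := zfun_dist hres _ _ _ _
      have hzb' : dist (zfun hres (p.x b') (p.xmem b') (p.r b' / 4)
          (by have := p.rpos b'; linarith)) (p.x b') < p.r b' / 4 := zfun_dist hres _ _ _ _
      have hminb : min (min
          (dist (zfun hres (p.x b) (p.xmem b) (p.r b / 4) (by have := p.rpos b; linarith)) (p.x b) / 4)
          (p.r b / 4)) ((2⁻¹ : ℝ)^n) ≤ p.r b / 4 :=
        le_trans (min_le_left _ _) (min_le_right _ _)
      have hminb' : min (min
          (dist (zfun hres (p.x b') (p.xmem b') (p.r b' / 4) (by have := p.rpos b'; linarith)) (p.x b') / 4)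
          (p.r b' / 4)) ((2⁻¹ : ℝ)^n) ≤ p.r b' / 4 :=
        le_trans (min_le_left _ _) (min_le_right _ _)
      have hrb := p.rpos b
      have hrb' := p.rpos b'
      set X := (if b p.L then zfun hres (p.x b) (p.xmem b) (p.r b / 4)
          (by have := p.rpos b; linarith) else p.x b) with hXdef
      set Y := (if b' p.L then zfun hres (p.x b') (p.xmem b') (p.r b' / 4)
          (by have := p.rpos b'; linarith) else p.x b') with hYdef
      have hd1 : dist X (p.x b) ≤ p.r b / 4 := by
        rw [hXdef]; split
        · linarith
        · rw [dist_self]; linarith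
      have hd2 : dist Y (p.x b') ≤ p.r b' / 4 := by
        rw [hYdef]; split
        · linarith
        · rw [dist_self]; linarith
      have htri : dist (p.x b) (p.x b') ≤ dist (p.x b) X + dist X Y + dist Y (p.x b') :=
        dist_triangle4 _ _ _ _
      have hcomm : dist (p.x b) X = dist X (p.x b) := dist_comm _ _
      linarith

lemma splitPos_L (p : Pos G H) (n : ℕ) : (splitPos hres p n).L = p.L + 1 := rfl

lemma splitPos_r_le (p : Pos G H) (n : ℕ) (b) : (splitPos hres p n).r b ≤ (2⁻¹:ℝ)^n :=
  min_le_right _ _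

lemma ext_splitPos (p : Pos G H) (n : ℕ) : PExt p (splitPos hres p n) := by
  refine ⟨Nat.le_succ _, fun b => ?_⟩
  show dist (if b p.L then _ else p.x b) (p.x b) + min (min _ (p.r b / 4)) ((2⁻¹:ℝ)^n) ≤ p.r b
  have hzb : dist (zfun hres (p.x b) (p.xmem b) (p.r b / 4)
      (by have := p.rpos b; linarith)) (p.x b) < p.r b / 4 := zfun_dist hres _ _ _ _
  have hmin : min (min
      (dist (zfun hres (p.x b) (p.xmem b) (p.r b / 4) (by have := p.rpos b; linarith)) (p.x b) / 4)
      (p.r b / 4)) ((2⁻¹ : ℝ)^n) ≤ p.r b / 4 :=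
    le_trans (min_le_left _ _) (min_le_right _ _)
  have := p.rpos b
  split
  · linarith
  · rw [dist_self, zero_add]
    linarith

end Choice

section Flatten

/-- replace each cone by a selected subcone of a finer position -/
def flatten (p q : Pos G H) (hE : PExt p q) (d : (ℕ → Bool) → (ℕ → Bool))
    (hd1 : ∀ b, agr p.L (d b) b) (hd2 : ∀ b b', agr p.L b b' → d b = d b') : Pos G H where
  L := p.L
  x := fun b => q.x (d b)
  r := fun b => q.r (d b)
  xmem := fun b => q.xmem (d b)
  rpos := fun b => q.rpos (d b)
  xcompat := fun b b' h => by rw [hd2 b b' h]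
  rcompat := fun b b' h => by rw [hd2 b b' h]
  disj := by
    intro b b' h
    refine q.disj (d b) (d b') (fun hq => h ?_)
    have h1 : agr p.L (d b) (d b') := agr_mono hq hE.1
    exact agr_trans (agr_trans (agr_symm (hd1 b)) h1) (hd1 b')

lemma ext_flatten (p q : Pos G H) (hE : PExt p q) (d hd1 hd2) :
    PExt p (flatten p q hE d hd1 hd2) := by
  refine ⟨le_refl _, fun b => ?_⟩
  show dist (q.x (d b)) (p.x b) + q.r (d b) ≤ p.r b
  have h1 : p.x b = p.x (d b) := p.xcompat b (d b) (agr_symm (hd1 b))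
  have h2 : p.r b = p.r (d b) := p.rcompat b (d b) (agr_symm (hd1 b))
  rw [h1, h2]
  exact hE.2 (d b)

@[simp] lemma flatten_L (p q : Pos G H) (hE d hd1 hd2) : (flatten p q hE d hd1 hd2).L = p.L := rfl
lemma flatten_x (p q : Pos G H) (hE d hd1 hd2) (b) :
    (flatten p q hE d hd1 hd2).x b = q.x (d b) := rfl

end Flatten

section Task
variable [IsTopologicalGroup G]

/-- the key dichotomy property: some reachable refinement makes `w` evaluate away from 1
on a selection through the cones `σ`. -/
def Qprop (p : Pos G H) (w : Wd) (σ : ℕ → ℕ → Bool) : Prop :=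
  ∃ q : Pos G H, PExt p q ∧ ∃ d : (ℕ → Bool) → (ℕ → Bool),
    (∀ b, agr p.L (d b) b) ∧ (∀ b b', agr p.L b b' → d b = d b') ∧
    evalW (fun k => q.x (d (σ k))) w ≠ 1

lemma exists_eps (w : Wd) (c₀ : ℕ → G) (h : evalW c₀ w ≠ 1) :
    ∃ ε : ℝ, 0 < ε ∧ ∀ c : ℕ → G, (∀ k, dist (c k) (c₀ k) ≤ ε) → evalW c w ≠ 1 := by
  have hU : IsOpen {v : ℕ → G | evalW v w ≠ 1} := by
    have : {v : ℕ → G | evalW v w ≠ 1} = (fun v : ℕ → G => evalW v w) ⁻¹' ({1}ᶜ) := rfl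
    rw [this]
    exact (continuous_evalW w).isOpen_preimage _ (isClosed_singleton.isOpen_compl)
  obtain ⟨I, u, h1, h2⟩ := (isOpen_pi_iff.mp hU) c₀ h
  have hball : ∀ a : ℕ, ∃ ε : ℝ, 0 < ε ∧ (a ∈ I → Metric.ball (c₀ a) ε ⊆ u a) := by
    intro a
    by_cases ha : a ∈ I
    · obtain ⟨ε, hε, hsub⟩ := Metric.isOpen_iff.mp (h1 a ha).1 (c₀ a) (h1 a ha).2
      exact ⟨ε, hε, fun _ => hsub⟩
    · exact ⟨1, one_pos, fun h => absurd h ha⟩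
  choose f hf1 hf2 using hball
  by_cases hI : I.Nonempty
  · refine ⟨(I.inf' hI f) / 2, ?_, ?_⟩
    · have : 0 < I.inf' hI f := (Finset.lt_inf'_iff hI).mpr (fun a _ => hf1 a)
      linarith
    · intro c hc
      refine h2 ?_
      intro a ha
      refine hf2 a ha ?_
      have h3 : I.inf' hI f ≤ f a := Finset.inf'_le f ha
      have h4 : 0 < I.inf' hI f := (Finset.lt_inf'_iff hI).mpr (fun a _ => hf1 a)
      have := hc a
      exact Metric.mem_ball.mpr (by linarith)
  · refine ⟨1, one_pos, fun c _ => h2 ?_⟩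
    intro a ha
    exact absurd (⟨a, ha⟩) hI

lemma doTask_exists (p : Pos G H) (w : Wd) (σ : ℕ → ℕ → Bool) (ε₀ : ℝ) (hε₀ : 0 < ε₀) :
    ∃ p' : Pos G H, PExt p p' ∧ p'.L = p.L ∧ (∀ b, p'.r b ≤ ε₀) ∧
      ((∀ c : ℕ → G, (∀ k, dist (c k) (p'.x (σ k)) ≤ p'.r (σ k)) → evalW c w ≠ 1) ∨
        ¬ Qprop p w σ) := by
  by_cases hQ : Qprop p w σ
  · obtain ⟨q, hE, d, hd1, hd2, hne⟩ := hQ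
    obtain ⟨ε, hε, hball⟩ := exists_eps w (fun k => q.x (d (σ k))) hne
    set fl := flatten p q hE d hd1 hd2 with hfl
    refine ⟨shrink_s18 fl (min ε ε₀) (lt_min hε hε₀), (ext_flatten p q hE d hd1 hd2).trans
      (ext_shrink _ _ _), rfl, fun b => le_trans (shrink_r_le _ _ _ b) (min_le_right _ _),
      Or.inl ?_⟩
    intro c hc
    refine hball c (fun k => ?_)
    have := hc k
    have h5 : (shrink_s18 fl (min ε ε₀) (lt_min hε hε₀)).r (σ k) ≤ ε :=
      le_trans (shrink_r_le _ _ _ _) (min_le_left _ _)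
    have h6 : (shrink_s18 fl (min ε ε₀) (lt_min hε hε₀)).x (σ k) = q.x (d (σ k)) := rfl
    rw [h6] at this
    linarith
  · exact ⟨shrink_s18 p ε₀ hε₀, ext_shrink _ _ _, rfl, fun b => shrink_r_le _ _ _ b, Or.inr hQ⟩

noncomputable def doTask (p : Pos G H) (w : Wd) (σ : ℕ → ℕ → Bool) (ε₀ : ℝ) (hε₀ : 0 < ε₀) :
    Pos G H := (doTask_exists p w σ ε₀ hε₀).choose

lemma doTask_ext (p : Pos G H) (w σ ε₀ hε₀) : PExt p (doTask p w σ ε₀ hε₀) :=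
  (doTask_exists p w σ ε₀ hε₀).choose_spec.1

lemma doTask_L (p : Pos G H) (w σ ε₀ hε₀) : (doTask p w σ ε₀ hε₀).L = p.L :=
  (doTask_exists p w σ ε₀ hε₀).choose_spec.2.1

lemma doTask_r_le (p : Pos G H) (w σ ε₀ hε₀) (b) : (doTask p w σ ε₀ hε₀).r b ≤ ε₀ :=
  (doTask_exists p w σ ε₀ hε₀).choose_spec.2.2.1 b

lemma doTask_spec (p : Pos G H) (w σ ε₀ hε₀) :
    (∀ c : ℕ → G, (∀ k, dist (c k) ((doTask p w σ ε₀ hε₀).x (σ k)) ≤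
        (doTask p w σ ε₀ hε₀).r (σ k)) → evalW c w ≠ 1) ∨ ¬ Qprop p w σ :=
  (doTask_exists p w σ ε₀ hε₀).choose_spec.2.2.2

end Task

section Stage
variable [IsTopologicalGroup G]

def extTr (Λ K : ℕ) (σh : Fin K → Fin Λ → Bool) : ℕ → ℕ → Bool :=
  fun k j => if hk : k < K then (if hj : j < Λ then σh ⟨k, hk⟩ ⟨j, hj⟩ else false) else false

noncomputable def famList (Λ K : ℕ) : List (Fin K → Fin Λ → Bool) :=
  (Finset.univ : Finset (Fin K → Fin Λ → Bool)).toList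

lemma mem_famList (Λ K : ℕ) (σh : Fin K → Fin Λ → Bool) : σh ∈ famList Λ K :=
  Finset.mem_toList.mpr (Finset.mem_univ _)

noncomputable def stageWork (p : Pos G H) (w : Wd) (m : ℕ) : Pos G H :=
  (famList p.L (varsBound w)).foldl
    (fun q σh => doTask q w (extTr p.L (varsBound w) σh) ((2⁻¹:ℝ)^m) (by positivity))
    (shrink_s18 p ((2⁻¹:ℝ)^m) (by positivity))

def sfun : ℕ → ℕ
  | 0 => 1
  | (k+1) => sfun k + k + 1

lemma sfun_succ (k : ℕ) : sfun (k+1) = sfun k + k + 1 := rfl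

lemma sfun_gt (k : ℕ) : k < sfun k := by
  induction k with
  | zero => simp [sfun]
  | succ k ih => rw [sfun_succ]; omega

lemma sfun_mono : StrictMono sfun := strictMono_nat_of_lt_succ (fun k => by rw [sfun_succ]; omega)

def splitAt (m : ℕ) : Bool := (List.range (m+1)).any (fun k => sfun k = m)

lemma splitAt_iff (m : ℕ) : splitAt m = true ↔ ∃ k, sfun k = m := by
  rw [splitAt, List.any_eq_true]
  constructor
  · rintro ⟨k, _, hk⟩; exact ⟨k, by simpa using hk⟩
  · rintro ⟨k, hk⟩
    refine ⟨k, List.mem_range.mpr ?_, by simpa using hk⟩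
    have := sfun_gt k
    omega

noncomputable def wordOf (n : ℕ) : Wd :=
  ((Encodable.decode (α := Wd) (n - sfun (Nat.findGreatest (fun k => sfun k ≤ n) n) - 1)).getD [])

variable (hres : ∀ y : G, y ∈ H → ∀ ε : ℝ, 0 < ε → ∃ z, z ∈ (H : Set G) ∧ z ≠ y ∧ dist z y < ε)
variable (x₀ : G) (hx₀ : x₀ ∈ H)

noncomputable def pos0 (x₀ : G) (hx₀ : x₀ ∈ H) : Pos G H where
  L := 0
  x := fun _ => x₀
  r := fun _ => 1
  xmem := fun _ => hx₀
  rpos := fun _ => one_pos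
  xcompat := fun _ _ _ => rfl
  rcompat := fun _ _ _ => rfl
  disj := fun b b' h => absurd (fun j hj => absurd hj (Nat.not_lt_zero j)) h

noncomputable def run : ℕ → Pos G H
  | 0 => pos0 x₀ hx₀
  | (n+1) => if splitAt (n+1) then splitPos hres (run n) (n+1)
             else stageWork (run n) (wordOf (n+1)) (n+1)

lemma run_succ (n : ℕ) : run hres x₀ hx₀ (n+1) =
    (if splitAt (n+1) then splitPos hres (run hres x₀ hx₀ n) (n+1)
      else stageWork (run hres x₀ hx₀ n) (wordOf (n+1)) (n+1)) := rfl

lemma foldl_ext {α : Type*} (f : Pos G H → α → Pos G H)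
    (hext : ∀ p a, PExt p (f p a)) (l : List α) (p₀ : Pos G H) :
    PExt p₀ (l.foldl f p₀) := by
  induction l generalizing p₀ with
  | nil => exact PExt.refl p₀
  | cons hd tl ih => exact (hext p₀ hd).trans (ih (f p₀ hd))

lemma foldl_L {α : Type*} (f : Pos G H → α → Pos G H)
    (hL : ∀ p a, (f p a).L = p.L) (l : List α) (p₀ : Pos G H) :
    (l.foldl f p₀).L = p₀.L := by
  induction l generalizing p₀ with
  | nil => rfl
  | cons hd tl ih => rw [List.foldl_cons, ih (f p₀ hd), hL]

lemma foldl_r_le {α : Type*} (f : Pos G H → α → Pos G H) (c : ℝ)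
    (hr : ∀ p a b, (f p a).r b ≤ c) (l : List α) (p₀ : Pos G H) (h₀ : ∀ b, p₀.r b ≤ c) :
    ∀ b, (l.foldl f p₀).r b ≤ c := by
  induction l generalizing p₀ with
  | nil => exact h₀
  | cons hd tl ih => exact ih (f p₀ hd) (fun b => hr p₀ hd b)

lemma foldl_access {α : Type*} (f : Pos G H → α → Pos G H)
    (hext : ∀ p a, PExt p (f p a)) (hL : ∀ p a, (f p a).L = p.L)
    (l : List α) (p₀ : Pos G H) {a : α} (ha : a ∈ l) :
    ∃ p', PExt p₀ p' ∧ p'.L = p₀.L ∧ PExt (f p' a) (l.foldl f p₀) := by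
  induction l generalizing p₀ with
  | nil => cases ha
  | cons hd tl ih =>
      rcases List.mem_cons.mp ha with h | h
      · subst h
        exact ⟨p₀, PExt.refl p₀, rfl, foldl_ext f hext tl (f p₀ a)⟩
      · obtain ⟨p', h1, h2, h3⟩ := ih (f p₀ hd) h
        exact ⟨p', (hext p₀ hd).trans h1, h2.trans (hL p₀ hd), h3⟩

lemma ext_stageWork (p : Pos G H) (w : Wd) (m : ℕ) : PExt p (stageWork p w m) :=
  (ext_shrink p _ (by positivity)).trans
    (foldl_ext _ (fun q σh => doTask_ext q w _ _ _) _ _)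

lemma stageWork_L (p : Pos G H) (w : Wd) (m : ℕ) : (stageWork p w m).L = p.L :=
  (foldl_L _ (fun q σh => doTask_L q w _ _ _) _ _)

lemma stageWork_r_le (p : Pos G H) (w : Wd) (m : ℕ) (b) :
    (stageWork p w m).r b ≤ (2⁻¹:ℝ)^m :=
  foldl_r_le _ _ (fun q σh b => doTask_r_le q w _ _ _ b) _ _
    (fun b => shrink_r_le _ _ _ b) b

lemma run_ext_succ (n : ℕ) : PExt (run hres x₀ hx₀ n) (run hres x₀ hx₀ (n+1)) := by
  rw [run_succ]
  split
  · exact ext_splitPos hres _ _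
  · exact ext_stageWork _ _ _

lemma run_ext {m n : ℕ} (h : m ≤ n) : PExt (run hres x₀ hx₀ m) (run hres x₀ hx₀ n) := by
  induction h with
  | refl => exact PExt.refl _
  | step h ih => exact ih.trans (run_ext_succ hres x₀ hx₀ _)

lemma run_r_le (n : ℕ) (b) : (run hres x₀ hx₀ n).r b ≤ (2⁻¹:ℝ)^n := by
  cases n with
  | zero => show (1:ℝ) ≤ _; norm_num [pos0]
  | succ n =>
      rw [run_succ]
      split
      · exact splitPos_r_le hres _ _ b
      · exact stageWork_r_le _ _ _ b

lemma run_L_mono {m n : ℕ} (h : m ≤ n) : (run hres x₀ hx₀ m).L ≤ (run hres x₀ hx₀ n).L :=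
  (run_ext hres x₀ hx₀ h).1

lemma run_split_L (k : ℕ) : (run hres x₀ hx₀ (sfun k)).L =
    (run hres x₀ hx₀ (sfun k - 1)).L + 1 := by
  have h1 : 1 ≤ sfun k := by have := sfun_gt k; omega
  have h2 : sfun k = (sfun k - 1) + 1 := by omega
  rw [h2, run_succ, if_pos (by rw [splitAt_iff]; exact ⟨k, h2⟩)]
  rw [← h2]
  exact splitPos_L hres _ _

lemma run_L_ge (k : ℕ) : k + 1 ≤ (run hres x₀ hx₀ (sfun k)).L := by
  induction k with
  | zero =>
      rw [run_split_L hres x₀ hx₀ 0]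
      omega
  | succ k ih =>
      rw [run_split_L hres x₀ hx₀ (k+1)]
      have h3 : sfun k ≤ sfun (k+1) - 1 := by
        rw [sfun_succ]; omega
      have := run_L_mono hres x₀ hx₀ h3
      omega

/-- for every word and every threshold there is a stage where that word is processed
with level at least the threshold -/
lemma stage_choose (w : Wd) (L₀ : ℕ) :
    ∃ n : ℕ, splitAt (n+1) = false ∧ wordOf (n+1) = w ∧ L₀ ≤ (run hres x₀ hx₀ n).L := by
  set cw := Encodable.encode w with hcw
  set k₀ := max (L₀ + 1) (cw + 1) with hk₀
  refine ⟨sfun k₀ + cw, ?_, ?_, ?_⟩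
  · have hk₀' : cw + 1 ≤ k₀ := le_max_right _ _
    rw [← Bool.not_eq_true, splitAt_iff]
    rintro ⟨k, hk⟩
    rcases le_or_gt k k₀ with h | h
    · have := sfun_mono.monotone h
      omega
    · have h5 : sfun (k₀+1) ≤ sfun k := sfun_mono.monotone h
      rw [sfun_succ] at h5
      omega
  · have hfg : Nat.findGreatest (fun k => sfun k ≤ sfun k₀ + cw + 1) (sfun k₀ + cw + 1) = k₀ := by
      rw [Nat.findGreatest_eq_iff]
      refine ⟨?_, fun _ => ?_, fun k hk hk2 => ?_⟩
      · have := sfun_gt k₀; omega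
      · omega
      · simp only [not_le]
        have hk₀' : cw + 1 ≤ k₀ := le_max_right _ _
        have h5 : sfun (k₀+1) ≤ sfun k := sfun_mono.monotone hk
        rw [sfun_succ] at h5
        omega
    rw [wordOf, hfg]
    have : sfun k₀ + cw + 1 - sfun k₀ - 1 = cw := by omega
    rw [this, hcw, Encodable.encodek]
    rfl
  · have h1 : sfun k₀ ≤ sfun k₀ + cw := by omega
    have := run_L_mono hres x₀ hx₀ h1
    have := run_L_ge hres x₀ hx₀ k₀
    omega

/-- main access lemma: for every word `w`, threshold `L₀`, and system of branches `τ`,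
some stage processes the instance of `w` at the cones of `τ`. -/
lemma run_access (w : Wd) (L₀ : ℕ) (τ : ℕ → ℕ → Bool) :
    ∃ (n : ℕ) (p : Pos G H) (hh : 0 < ((2⁻¹:ℝ)^(n+1))),
      L₀ ≤ p.L ∧ PExt (run hres x₀ hx₀ n) p ∧ p.L = (run hres x₀ hx₀ n).L ∧
      PExt (doTask p w (extTr p.L (varsBound w)
          (fun k j => τ k j)) ((2⁻¹:ℝ)^(n+1)) hh)
        (run hres x₀ hx₀ (n+1)) := by
  obtain ⟨n, hsp, hw, hL⟩ := stage_choose hres x₀ hx₀ w L₀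
  have hrun : run hres x₀ hx₀ (n+1) = stageWork (run hres x₀ hx₀ n) w (n+1) := by
    show (if splitAt (n+1) then _ else _) = _
    rw [if_neg (by simp [hsp]), hw]
  set Λ := (run hres x₀ hx₀ n).L with hΛ
  set σh : Fin (varsBound w) → Fin Λ → Bool := fun k j => τ k j with hσh
  obtain ⟨p', h1, h2, h3⟩ := foldl_access
    (fun q σh => doTask q w (extTr Λ (varsBound w) σh) ((2⁻¹:ℝ)^(n+1)) (by positivity))
    (fun q σh => doTask_ext q w _ _ _) (fun q σh => doTask_L q w _ _ _)
    (famList Λ (varsBound w)) (shrink_s18 (run hres x₀ hx₀ n) ((2⁻¹:ℝ)^(n+1)) (by positivity))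
    (mem_famList Λ (varsBound w) σh)
  refine ⟨n, p', by positivity, ?_, (ext_shrink _ _ _).trans h1, h2, ?_⟩
  · rw [h2]; exact hL
  · rw [hrun]
    have hpl : p'.L = Λ := h2
    rw [hpl]
    exact h3

section Limit
variable [IsTopologicalGroup G] [CompleteSpace G]
variable (hres : ∀ y : G, y ∈ H → ∀ ε : ℝ, 0 < ε → ∃ z, z ∈ (H : Set G) ∧ z ≠ y ∧ dist z y < ε)
variable (x₀ : G) (hx₀ : x₀ ∈ H)

lemma run_cauchy (b : ℕ → Bool) : CauchySeq (fun n => (run hres x₀ hx₀ n).x b) := by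
  refine cauchySeq_of_le_geometric (2⁻¹ : ℝ) 1 (by norm_num) (fun n => ?_)
  have h1 := (run_ext_succ hres x₀ hx₀ n).2 b
  have h2 := (run hres x₀ hx₀ (n+1)).rpos b
  have h3 := run_r_le hres x₀ hx₀ n b
  rw [dist_comm]
  rw [one_mul]
  linarith

noncomputable def xb (b : ℕ → Bool) : G :=
  (cauchySeq_tendsto_of_complete (run_cauchy hres x₀ hx₀ b)).choose

lemma xb_tendsto (b : ℕ → Bool) :
    Tendsto (fun n => (run hres x₀ hx₀ n).x b) atTop (𝓝 (xb hres x₀ hx₀ b)) :=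
  (cauchySeq_tendsto_of_complete (run_cauchy hres x₀ hx₀ b)).choose_spec

lemma xb_dist (n : ℕ) (b : ℕ → Bool) :
    dist (xb hres x₀ hx₀ b) ((run hres x₀ hx₀ n).x b) ≤ (run hres x₀ hx₀ n).r b := by
  have h1 : Tendsto (fun m => dist ((run hres x₀ hx₀ m).x b) ((run hres x₀ hx₀ n).x b))
      atTop (𝓝 (dist (xb hres x₀ hx₀ b) ((run hres x₀ hx₀ n).x b))) :=
    (xb_tendsto hres x₀ hx₀ b).dist tendsto_const_nhds
  refine le_of_tendsto h1 ?_
  refine eventually_atTop.mpr ⟨n, fun m hm => ?_⟩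
  have h2 := (run_ext hres x₀ hx₀ hm).2 b
  have h3 := (run hres x₀ hx₀ m).rpos b
  linarith

/-- the branch limit lies inside the cone of any intermediate position -/
lemma xb_mem_cone {q : Pos G H} {n : ℕ} (hE : PExt q (run hres x₀ hx₀ n)) (b : ℕ → Bool) :
    dist (xb hres x₀ hx₀ b) (q.x b) ≤ q.r b := by
  have h1 := xb_dist hres x₀ hx₀ n b
  have h2 := hE.2 b
  have h3 := dist_triangle (xb hres x₀ hx₀ b) ((run hres x₀ hx₀ n).x b) (q.x b)
  linarith

lemma xb_close {m : ℕ} {b b' : ℕ → Bool} (h : agr (run hres x₀ hx₀ m).L b b') :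
    dist (xb hres x₀ hx₀ b) (xb hres x₀ hx₀ b') ≤ 2 * (2⁻¹:ℝ)^m := by
  have h1 := xb_dist hres x₀ hx₀ m b
  have h2 := xb_dist hres x₀ hx₀ m b'
  have hx : (run hres x₀ hx₀ m).x b = (run hres x₀ hx₀ m).x b' :=
    (run hres x₀ hx₀ m).xcompat b b' h
  have hr : (run hres x₀ hx₀ m).r b = (run hres x₀ hx₀ m).r b' :=
    (run hres x₀ hx₀ m).rcompat b b' h
  have h3 := dist_triangle (xb hres x₀ hx₀ b) ((run hres x₀ hx₀ m).x b) (xb hres x₀ hx₀ b')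
  have h4 : dist ((run hres x₀ hx₀ m).x b) (xb hres x₀ hx₀ b') =
      dist (xb hres x₀ hx₀ b') ((run hres x₀ hx₀ m).x b') := by rw [hx, dist_comm]
  have h5 := run_r_le hres x₀ hx₀ m b
  have h6 := run_r_le hres x₀ hx₀ m b'
  linarith

lemma xb_ne {m : ℕ} {b b' : ℕ → Bool} (h : ¬ agr (run hres x₀ hx₀ m).L b b') :
    xb hres x₀ hx₀ b ≠ xb hres x₀ hx₀ b' := by
  intro he
  have hd := (run hres x₀ hx₀ m).disj b b' h
  have h1 := xb_dist hres x₀ hx₀ m b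
  have h2 := xb_dist hres x₀ hx₀ m b'
  have h4 : dist ((run hres x₀ hx₀ m).x b) ((run hres x₀ hx₀ m).x b') ≤
      (run hres x₀ hx₀ m).r b + (run hres x₀ hx₀ m).r b' := by
    have h3 := dist_triangle ((run hres x₀ hx₀ m).x b) (xb hres x₀ hx₀ b)
      ((run hres x₀ hx₀ m).x b')
    have h5 : dist ((run hres x₀ hx₀ m).x b) (xb hres x₀ hx₀ b) =
        dist (xb hres x₀ hx₀ b) ((run hres x₀ hx₀ m).x b) := dist_comm _ _
    have h6 : dist (xb hres x₀ hx₀ b) ((run hres x₀ hx₀ m).x b') =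
        dist (xb hres x₀ hx₀ b') ((run hres x₀ hx₀ m).x b') := by rw [he]
    linarith
  linarith

lemma xb_continuous : Continuous (xb hres x₀ hx₀) := by
  rw [continuous_iff_continuousAt]
  intro b
  rw [ContinuousAt, Metric.tendsto_nhds]
  intro ε hε
  obtain ⟨m, hm⟩ : ∃ m : ℕ, 2 * (2⁻¹:ℝ)^m < ε := by
    obtain ⟨m, hm⟩ := exists_pow_lt_of_lt_one (by linarith : (0:ℝ) < ε/2) (by norm_num : (2⁻¹:ℝ) < 1)
    exact ⟨m, by linarith⟩
  set Lm := (run hres x₀ hx₀ m).L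
  have hV : IsOpen {b' : ℕ → Bool | ∀ j < Lm, b' j = b j} := by
    have he : {b' : ℕ → Bool | ∀ j < Lm, b' j = b j} =
        ⋂ j ∈ Finset.range Lm, (fun p : ℕ → Bool => p j) ⁻¹' {b j} := by
      ext b'; simp [Finset.mem_range]
    rw [he]
    exact isOpen_biInter_finset (fun j _ =>
      (continuous_apply j).isOpen_preimage _ (isOpen_discrete _))
  have hbV : b ∈ {b' : ℕ → Bool | ∀ j < Lm, b' j = b j} := fun j _ => rfl
  refine Filter.eventually_of_mem (hV.mem_nhds hbV) (fun b' hb' => ?_)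
  have := xb_close hres x₀ hx₀ (m := m) (b := b') (b' := b) (fun j hj => hb' j hj)
  calc dist (xb hres x₀ hx₀ b') (xb hres x₀ hx₀ b) ≤ 2 * (2⁻¹:ℝ)^m := this
    _ < ε := hm

end Limit

section Perfect
variable [IsTopologicalGroup G] [CompleteSpace G]
variable (hres : ∀ y : G, y ∈ H → ∀ ε : ℝ, 0 < ε → ∃ z, z ∈ (H : Set G) ∧ z ≠ y ∧ dist z y < ε)
variable (x₀ : G) (hx₀ : x₀ ∈ H)

lemma L_unbounded (M : ℕ) : ∃ n, M < (run hres x₀ hx₀ n).L :=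
  ⟨sfun M, by have := run_L_ge hres x₀ hx₀ M; omega⟩

lemma P_accpt (b : ℕ → Bool) :
    AccPt (xb hres x₀ hx₀ b) (𝓟 (Set.range (xb hres x₀ hx₀))) := by
  rw [accPt_iff_nhds]
  intro U hU
  obtain ⟨ε, hε, hball⟩ := Metric.mem_nhds_iff.mp hU
  obtain ⟨m, hm⟩ : ∃ m : ℕ, 2 * (2⁻¹:ℝ)^m < ε := by
    obtain ⟨m, hm⟩ := exists_pow_lt_of_lt_one (by linarith : (0:ℝ) < ε/2)
      (by norm_num : (2⁻¹:ℝ) < 1)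
    exact ⟨m, by linarith⟩
  set Lm := (run hres x₀ hx₀ m).L with hLm
  set b' := fun j => if j = Lm then !(b j) else b j with hb'
  have hagr : agr Lm b' b := by
    intro j hj
    simp only [hb']
    rw [if_neg (Nat.ne_of_lt hj)]
  have hclose : dist (xb hres x₀ hx₀ b') (xb hres x₀ hx₀ b) ≤ 2 * (2⁻¹:ℝ)^m :=
    xb_close hres x₀ hx₀ hagr
  have hne : xb hres x₀ hx₀ b' ≠ xb hres x₀ hx₀ b := by
    obtain ⟨n', hn'⟩ := L_unbounded hres x₀ hx₀ Lm
    refine xb_ne hres x₀ hx₀ (m := n') (fun hagr' => ?_)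
    have := hagr' Lm hn'
    simp only [hb', if_pos rfl] at this
    exact (Bool.not_ne_self (b Lm)) this
  refine ⟨xb hres x₀ hx₀ b', ⟨hball ?_, ⟨b', rfl⟩⟩, hne⟩
  exact Metric.mem_ball.mpr (by linarith)

lemma centers_tendsto (τ : ℕ → ℕ → Bool) (w : Wd) :
    Tendsto (fun m => evalW (fun k => (run hres x₀ hx₀ m).x (τ k)) w) atTop
      (𝓝 (evalW (fun k => xb hres x₀ hx₀ (τ k)) w)) := by
  have h1 : Tendsto (fun m => (fun k => (run hres x₀ hx₀ m).x (τ k))) atTop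
      (𝓝 (fun k => xb hres x₀ hx₀ (τ k))) :=
    tendsto_pi_nhds.mpr (fun k => xb_tendsto hres x₀ hx₀ (τ k))
  exact ((continuous_evalW w).tendsto _).comp h1

lemma key_dichotomy (w : Wd) (L₀ : ℕ) (τ : ℕ → ℕ → Bool)
    (hsep : ∀ k k', k < varsBound w → k' < varsBound w → agr L₀ (τ k) (τ k') → τ k = τ k') :
    (evalW (fun k => xb hres x₀ hx₀ (τ k)) w = 1 ∧
      ∃ N, ∀ m, N ≤ m → evalW (fun k => (run hres x₀ hx₀ m).x (τ k)) w = 1) ∨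
    (evalW (fun k => xb hres x₀ hx₀ (τ k)) w ≠ 1 ∧
      ∃ N, ∀ m, N ≤ m → evalW (fun k => (run hres x₀ hx₀ m).x (τ k)) w ≠ 1) := by
  classical
  obtain ⟨n, p, hh, hL₀, hEp, hpL, hEq⟩ := run_access hres x₀ hx₀ w L₀ τ
  set Kw := varsBound w with hKw
  set Λ := p.L with hΛ
  set σ := extTr Λ Kw (fun k j => τ k j) with hσ
  set q := doTask p w σ ((2⁻¹:ℝ)^(n+1)) hh with hq
  have hqL : q.L = Λ := doTask_L p w σ _ _
  have hσagr : ∀ k, k < Kw → agr Λ (σ k) (τ k) := by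
    intro k hk j hj
    simp only [hσ, extTr]
    rw [dif_pos hk, dif_pos hj]
  have hqx : ∀ k, k < Kw → q.x (σ k) = q.x (τ k) := fun k hk =>
    q.xcompat _ _ (by rw [hqL]; exact hσagr k hk)
  have hqr : ∀ k, k < Kw → q.r (σ k) = q.r (τ k) := fun k hk =>
    q.rcompat _ _ (by rw [hqL]; exact hσagr k hk)
  rcases doTask_spec p w σ ((2⁻¹:ℝ)^(n+1)) hh with hA | hB
  · -- freeze case : word stays away from 1
    right
    constructor
    · -- the limit tuple lies in the frozen cones
      have := hA (fun k => if h : k < Kw then xb hres x₀ hx₀ (τ k) else q.x (σ k)) ?_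
      · refine fun he => this ?_
        rw [← he]
        refine evalW_congr w (fun pq hpq => ?_)
        rw [dif_pos (lt_varsBound hpq)]
      · intro k
        by_cases hk : k < Kw
        · rw [dif_pos hk, ← hq, hqx k hk, hqr k hk]
          exact xb_mem_cone hres x₀ hx₀ hEq (τ k)
        · rw [dif_neg hk, ← hq, dist_self]
          exact (q.rpos _).le
    · refine ⟨n+1, fun m hm => ?_⟩
      have hqm : PExt q (run hres x₀ hx₀ m) := hEq.trans (run_ext hres x₀ hx₀ hm)
      have := hA (fun k => if h : k < Kw then (run hres x₀ hx₀ m).x (τ k) else q.x (σ k)) ?_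
      · refine fun he => this ?_
        rw [← he]
        refine evalW_congr w (fun pq hpq => ?_)
        rw [dif_pos (lt_varsBound hpq)]
      · intro k
        by_cases hk : k < Kw
        · rw [dif_pos hk, ← hq, hqx k hk, hqr k hk]
          have h2 := hqm.2 (τ k)
          have h3 := (run hres x₀ hx₀ m).rpos (τ k)
          linarith
        · rw [dif_neg hk, ← hq, dist_self]
          exact (q.rpos _).le
  · -- no-witness case : word is identically 1 on all future selections
    left
    have hsep' : ∀ k k', k < Kw → k' < Kw → agr Λ (τ k) (τ k') → τ k = τ k' :=
      fun k k' hk hk' ha => hsep k k' hk hk' (agr_mono ha hL₀)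
    set d : (ℕ → Bool) → (ℕ → Bool) := fun b =>
      if hb : ∃ k, k < Kw ∧ agr Λ (τ k) b then τ hb.choose
      else (fun j => if j < Λ then b j else false) with hd
    have hd1 : ∀ b, agr Λ (d b) b := by
      intro b j hj
      simp only [hd]
      split
      · next hb => exact hb.choose_spec.2 j hj
      · dsimp only; rw [if_pos hj]
    have hd2 : ∀ b b', agr Λ b b' → d b = d b' := by
      intro b b' hbb
      simp only [hd]
      by_cases hb : ∃ k, k < Kw ∧ agr Λ (τ k) b
      · have hb' : ∃ k, k < Kw ∧ agr Λ (τ k) b' :=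
          ⟨hb.choose, hb.choose_spec.1, agr_trans hb.choose_spec.2 hbb⟩
        rw [dif_pos hb, dif_pos hb']
        exact hsep' _ _ hb.choose_spec.1 hb'.choose_spec.1
          (agr_trans (agr_trans hb.choose_spec.2 hbb) (agr_symm hb'.choose_spec.2))
      · have hb' : ¬ ∃ k, k < Kw ∧ agr Λ (τ k) b' := by
          rintro ⟨k, hk, hagr⟩
          exact hb ⟨k, hk, agr_trans hagr (agr_symm hbb)⟩
        rw [dif_neg hb, dif_neg hb']
        funext j
        by_cases hj : j < Λ
        · rw [if_pos hj, if_pos hj, hbb j hj]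
        · rw [if_neg hj, if_neg hj]
    have hdσ : ∀ k, k < Kw → d (σ k) = τ k := by
      intro k hk
      have hmatch : ∃ k', k' < Kw ∧ agr Λ (τ k') (σ k) :=
        ⟨k, hk, agr_symm (hσagr k hk)⟩
      simp only [hd]
      rw [dif_pos hmatch]
      exact hsep' _ _ hmatch.choose_spec.1 hk
        (agr_trans hmatch.choose_spec.2 (hσagr k hk))
    have hcenters : ∀ m, n + 1 ≤ m →
        evalW (fun k => (run hres x₀ hx₀ m).x (τ k)) w = 1 := by
      intro m hm
      have hPm : PExt p (run hres x₀ hx₀ m) :=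
        ((doTask_ext p w σ ((2⁻¹:ℝ)^(n+1)) hh).trans hEq).trans (run_ext hres x₀ hx₀ hm)
      have h1 : evalW (fun k => (run hres x₀ hx₀ m).x (d (σ k))) w = 1 := by
        by_contra hne
        exact hB ⟨run hres x₀ hx₀ m, hPm, d, hd1, hd2, hne⟩
      rw [← h1]
      refine evalW_congr w (fun pq hpq => ?_)
      rw [hdσ pq.1 (lt_varsBound hpq)]
    have hlim : evalW (fun k => xb hres x₀ hx₀ (τ k)) w = 1 := by
      have hT := centers_tendsto hres x₀ hx₀ τ w
      have hE : (fun m => evalW (fun k => (run hres x₀ hx₀ m).x (τ k)) w) =ᶠ[atTop]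
          (fun _ => (1:G)) :=
        eventually_atTop.mpr ⟨n+1, fun m hm => hcenters m hm⟩
      exact tendsto_nhds_unique (hT.congr' hE) tendsto_const_nhds
    exact ⟨hlim, n+1, hcenters⟩

section Rep
variable {G₀ : Type*} [Group G₀]

def prodL (l : List (G₀ × Bool)) : G₀ := (l.map fun q => if q.2 then q.1 else q.1⁻¹).prod

@[simp] lemma prodL_nil : prodL ([] : List (G₀ × Bool)) = 1 := rfl

lemma prodL_cons (q : G₀ × Bool) (l : List (G₀ × Bool)) :
    prodL (q :: l) = (if q.2 then q.1 else q.1⁻¹) * prodL l := by simp [prodL]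

lemma prodL_append (l l' : List (G₀ × Bool)) : prodL (l ++ l') = prodL l * prodL l' := by
  simp [prodL]

def invL (l : List (G₀ × Bool)) : List (G₀ × Bool) := (l.reverse).map fun q => (q.1, !q.2)

lemma prodL_invL (l : List (G₀ × Bool)) : prodL (invL l) = (prodL l)⁻¹ := by
  induction l with
  | nil => simp [invL]
  | cons q l ih =>
      have h1 : invL (q :: l) = invL l ++ [(q.1, !q.2)] := by simp [invL]
      rw [h1, prodL_append, ih, prodL_cons]
      cases hb : q.2 <;> simp [hb, mul_inv_rev, prodL_cons]

lemma mem_closure_rep {P : Set G₀} {g : G₀} (hg : g ∈ Subgroup.closure P) :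
    ∃ l : List (G₀ × Bool), (∀ q ∈ l, q.1 ∈ P) ∧ prodL l = g := by
  induction hg using Subgroup.closure_induction with
  | mem x hx => exact ⟨[(x, true)], by simpa using hx, by simp [prodL]⟩
  | one => exact ⟨[], by simp, rfl⟩
  | mul x y hx hy ihx ihy =>
      obtain ⟨lx, h1, h2⟩ := ihx
      obtain ⟨ly, h3, h4⟩ := ihy
      refine ⟨lx ++ ly, fun q hq => ?_, by rw [prodL_append, h2, h4]⟩
      rcases List.mem_append.mp hq with h | h
      · exact h1 q h
      · exact h3 q h
  | inv x hx ih =>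
      obtain ⟨lx, h1, h2⟩ := ih
      exact ⟨invL lx, fun q hq => by
        obtain ⟨q', hq', he⟩ := List.mem_map.mp hq
        have := h1 q' (List.mem_reverse.mp hq')
        rw [← he]; exact this, by rw [prodL_invL, h2]⟩

def wordIdx (off : ℕ) : List (G₀ × Bool) → Wd
  | [] => []
  | q :: tl => (off, q.2) :: wordIdx (off+1) tl

lemma evalW_wordIdx (junk : G₀ × Bool) (v : ℕ → G₀) :
    ∀ (l : List (G₀ × Bool)) (off : ℕ),
    (∀ i, i < l.length → v (off + i) = (l.getD i junk).1) →
    evalW v (wordIdx off l) = prodL l := by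
  intro l
  induction l with
  | nil => intro off _; rfl
  | cons q tl ih =>
      intro off hv
      rw [wordIdx, evalW_cons, prodL_cons]
      have h0 : v off = q.1 := by
        have := hv 0 (by simp)
        simpa using this
      rw [h0, ih (off+1) (fun i hi => ?_)]
      have := hv (i+1) (by simp; omega)
      rw [show off + 1 + i = off + (i+1) by omega, this]
      rfl

lemma wordIdx_vars (junk : G₀ × Bool) :
    ∀ (l : List (G₀ × Bool)) (off : ℕ) (p : ℕ × Bool), p ∈ wordIdx off l →
      off ≤ p.1 ∧ p.1 < off + l.length := by
  intro l
  induction l with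
  | nil => intro off p hp; cases hp
  | cons q tl ih =>
      intro off p hp
      rcases List.mem_cons.mp hp with h | h
      · subst h; simp
      · have := ih (off+1) p h
        simp only [List.length_cons]
        omega

end Rep

section KeyPerfect
variable {G' : Type u} [Group G'] [MetricSpace G'] [CompleteSpace G'] [IsTopologicalGroup G']

theorem key_perfect (H : Subgroup G')
    (hres : ∀ y : G', y ∈ H → ∀ ε : ℝ, 0 < ε → ∃ z, z ∈ (H : Set G') ∧ z ≠ y ∧ dist z y < ε)
    (x₀ : G') (hx₀ : x₀ ∈ H)
    (hCT : ∀ A Hh B : G', A ∈ H → Hh ∈ H → B ∈ H → Hh ≠ 1 →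
      A * Hh = Hh * A → Hh * B = B * Hh → A * B = B * A) :
    ∃ P : Set G', IsPerfectSet P ∧ IsCAGroup ↥(Subgroup.closure P) := by
  classical
  set P := Set.range (xb hres x₀ hx₀) with hP
  have hPc : IsCompact P := isCompact_range (xb_continuous hres x₀ hx₀)
  have main : ∀ A Hh B : G', A ∈ Subgroup.closure P → Hh ∈ Subgroup.closure P →
      B ∈ Subgroup.closure P → Hh ≠ 1 → A * Hh = Hh * A → Hh * B = B * Hh →
      A * B = B * A := by
    intro A Hh B hA hHh hB hne hAH hHB
    obtain ⟨la, hla, hpa⟩ := mem_closure_rep hA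
    obtain ⟨lh, hlh, hph⟩ := mem_closure_rep hHh
    obtain ⟨lb, hlb, hpb⟩ := mem_closure_rep hB
    set junk : G' × Bool := (xb hres x₀ hx₀ (fun _ => false), true) with hjunk
    set LL := la ++ (lh ++ lb) with hLL
    have hmemP : ∀ k : ℕ, (LL.getD k junk).1 ∈ P := by
      intro k
      by_cases hk : k < LL.length
      · rw [List.getD_eq_getElem LL junk hk]
        have hmem : LL[k] ∈ LL := List.getElem_mem hk
        have hall : ∀ q ∈ LL, q.1 ∈ P := by
          intro q hq
          rcases List.mem_append.mp hq with h | h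
          · exact hla q h
          · rcases List.mem_append.mp h with h' | h'
            · exact hlh q h'
            · exact hlb q h'
        exact hall _ hmem
      · rw [List.getD_eq_default LL junk (le_of_not_gt hk)]
        exact Set.mem_range_self _
    set β : ℕ → (ℕ → Bool) := fun k => (hmemP k).choose with hβdef
    have hβ : ∀ k, xb hres x₀ hx₀ (β k) = (LL.getD k junk).1 :=
      fun k => (hmemP k).choose_spec
    set v : ℕ → G' := fun k => xb hres x₀ hx₀ (β k) with hv
    set wa := wordIdx 0 la with hwa
    set wh := wordIdx la.length lh with hwh
    set wb := wordIdx (la.length + lh.length) lb with hwb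
    have heva : evalW v wa = A := by
      rw [hwa, evalW_wordIdx junk v la 0 ?_]
      · exact hpa
      · intro i hi
        show xb hres x₀ hx₀ (β (0 + i)) = _
        rw [hβ (0 + i), zero_add, hLL, List.getD_append _ _ _ _ hi]
    have hevh : evalW v wh = Hh := by
      rw [hwh, evalW_wordIdx junk v lh la.length ?_]
      · exact hph
      · intro i hi
        show xb hres x₀ hx₀ (β (la.length + i)) = _
        rw [hβ (la.length + i), hLL,
          List.getD_append_right _ _ _ _ (by omega),
          show la.length + i - la.length = i by omega,
          List.getD_append _ _ _ _ hi]
    have hevb : evalW v wb = B := by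
      rw [hwb, evalW_wordIdx junk v lb (la.length + lh.length) ?_]
      · exact hpb
      · intro i hi
        show xb hres x₀ hx₀ (β (la.length + lh.length + i)) = _
        rw [hβ (la.length + lh.length + i), hLL,
          List.getD_append_right _ _ _ _ (by omega),
          show la.length + lh.length + i - la.length = lh.length + i by omega,
          List.getD_append_right _ _ _ _ (by omega),
          show lh.length + i - lh.length = i by omega]
    set w₁ := commW wa wh with hw₁
    set w₂ := commW wh wb with hw₂
    set w₃ := commW wa wb with hw₃
    set M₀ := max (varsBound w₁) (max (varsBound w₂) (varsBound wh)) with hM₀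
    -- a separation level for the finitely many relevant branches
    obtain ⟨Ls, hLs⟩ : ∃ Ls : ℕ, ∀ k k', k < M₀ → k' < M₀ →
        agr Ls (β k) (β k') → β k = β k' := by
      set f : ℕ × ℕ → ℕ := fun kk =>
        if h : β kk.1 = β kk.2 then 0 else (Function.ne_iff.mp h).choose with hf
      refine ⟨(Finset.range M₀ ×ˢ Finset.range M₀).sup f + 1, ?_⟩
      intro k k' hk hk' hagr
      by_contra hne'
      have hj := (Function.ne_iff.mp hne').choose_spec
      have hjf : f (k, k') = (Function.ne_iff.mp hne').choose := by
        rw [hf]; dsimp only; rw [dif_neg hne']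
      have hmem : (k, k') ∈ Finset.range M₀ ×ˢ Finset.range M₀ :=
        Finset.mem_product.mpr ⟨Finset.mem_range.mpr hk, Finset.mem_range.mpr hk'⟩
      have hle : f (k, k') ≤ (Finset.range M₀ ×ˢ Finset.range M₀).sup f :=
        Finset.le_sup hmem
      exact hj (hagr _ (by omega))
    -- apply the dichotomy to the three words
    have hsep₁ : ∀ k k', k < varsBound w₁ → k' < varsBound w₁ →
        agr Ls (β k) (β k') → β k = β k' := by
      intro k k' hk hk' ha
      exact hLs k k' (lt_of_lt_of_le hk (le_max_left _ _))
        (lt_of_lt_of_le hk' (le_max_left _ _)) ha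
    have hsep₂ : ∀ k k', k < varsBound w₂ → k' < varsBound w₂ →
        agr Ls (β k) (β k') → β k = β k' := by
      intro k k' hk hk' ha
      exact hLs k k' (lt_of_lt_of_le hk (le_trans (le_max_left _ _) (le_max_right _ _)))
        (lt_of_lt_of_le hk' (le_trans (le_max_left _ _) (le_max_right _ _))) ha
    have hseph : ∀ k k', k < varsBound wh → k' < varsBound wh →
        agr Ls (β k) (β k') → β k = β k' := by
      intro k k' hk hk' ha
      exact hLs k k' (lt_of_lt_of_le hk (le_trans (le_max_right _ _) (le_max_right _ _)))
        (lt_of_lt_of_le hk' (le_trans (le_max_right _ _) (le_max_right _ _))) ha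
    have hval₁ : evalW v w₁ = 1 := by
      rw [hw₁, evalW_commW_eq_one_iff, heva, hevh]; exact hAH
    have hval₂ : evalW v w₂ = 1 := by
      rw [hw₂, evalW_commW_eq_one_iff, hevh, hevb]; exact hHB
    have hvalh : evalW v wh ≠ 1 := by rw [hevh]; exact hne
    obtain ⟨N₁, hN₁⟩ : ∃ N, ∀ m, N ≤ m →
        evalW (fun k => (run hres x₀ hx₀ m).x (β k)) w₁ = 1 := by
      rcases key_dichotomy hres x₀ hx₀ w₁ Ls β hsep₁ with ⟨_, h⟩ | ⟨h, _⟩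
      · exact h
      · exact absurd hval₁ h
    obtain ⟨N₂, hN₂⟩ : ∃ N, ∀ m, N ≤ m →
        evalW (fun k => (run hres x₀ hx₀ m).x (β k)) w₂ = 1 := by
      rcases key_dichotomy hres x₀ hx₀ w₂ Ls β hsep₂ with ⟨_, h⟩ | ⟨h, _⟩
      · exact h
      · exact absurd hval₂ h
    obtain ⟨N₃, hN₃⟩ : ∃ N, ∀ m, N ≤ m →
        evalW (fun k => (run hres x₀ hx₀ m).x (β k)) wh ≠ 1 := by
      rcases key_dichotomy hres x₀ hx₀ wh Ls β hseph with ⟨h, _⟩ | ⟨_, h⟩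
      · exact absurd h hvalh
      · exact h
    -- at late stages apply the CT property of H
    have hcent : ∀ m, max N₁ (max N₂ N₃) ≤ m →
        evalW (fun k => (run hres x₀ hx₀ m).x (β k)) w₃ = 1 := by
      intro m hm
      set cm : ℕ → G' := fun k => (run hres x₀ hx₀ m).x (β k) with hcm
      have hmem : ∀ (w : Wd), evalW cm w ∈ H :=
        fun w => evalW_mem w (fun pq _ => (run hres x₀ hx₀ m).xmem _)
      have h1 : evalW cm wa * evalW cm wh = evalW cm wh * evalW cm wa := by
        rw [← evalW_commW_eq_one_iff]
        exact hN₁ m (le_trans (le_max_left _ _) hm)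
      have h2 : evalW cm wh * evalW cm wb = evalW cm wb * evalW cm wh := by
        rw [← evalW_commW_eq_one_iff]
        exact hN₂ m (le_trans (le_trans (le_max_left _ _) (le_max_right _ _)) hm)
      have h3 : evalW cm wh ≠ 1 :=
        hN₃ m (le_trans (le_trans (le_max_right _ _) (le_max_right _ _)) hm)
      have h4 := hCT (evalW cm wa) (evalW cm wh) (evalW cm wb)
        (hmem wa) (hmem wh) (hmem wb) h3 h1 h2
      rw [hw₃, evalW_commW_eq_one_iff]
      exact h4
    -- pass to the limit
    have hlim : evalW v w₃ = 1 := by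
      have hT := centers_tendsto hres x₀ hx₀ β w₃
      have hEv : (fun m => evalW (fun k => (run hres x₀ hx₀ m).x (β k)) w₃) =ᶠ[atTop]
          (fun _ => (1:G')) :=
        eventually_atTop.mpr ⟨max N₁ (max N₂ N₃), fun m hm => hcent m hm⟩
      exact tendsto_nhds_unique (hT.congr' hEv) tendsto_const_nhds
    rw [hw₃, evalW_commW_eq_one_iff, heva, hevb] at hlim
    exact hlim
  refine ⟨P, ⟨⟨xb hres x₀ hx₀ (fun _ => false), Set.mem_range_self _⟩, ?_, ?_⟩, ?_⟩
  · -- completely metrizable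
    refine ⟨Subtype.metricSpace, rfl, ?_⟩
    exact hPc.isClosed.completeSpace_coe
  · -- no isolated points
    rintro x ⟨b, rfl⟩
    exact P_accpt hres x₀ hx₀ b
  · -- CA property of the generated subgroup
    intro hsub hne a ha b hb
    have hane : (hsub : G') ≠ 1 := fun he => hne (by
      apply Subtype.ext
      simpa using he)
    have h1 : (a : G') * hsub = hsub * a := by
      have := (Subgroup.mem_centralizer_iff.mp ha) hsub (Set.mem_singleton _)
      exact_mod_cast congrArg Subtype.val this |>.symm
    have h2 : (hsub : G') * b = b * hsub := by
      have := (Subgroup.mem_centralizer_iff.mp hb) hsub (Set.mem_singleton _)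
      exact_mod_cast congrArg Subtype.val this
    have := main a hsub b a.2 hsub.2 b.2 hane h1 h2
    apply Subtype.ext
    simpa using this

end KeyPerfect

theorem statement18 (κ : Cardinal.{u}) (hκ : ℵ₀ ≤ κ)
    {G : Type u} [Group G] [TopologicalSpace G] [IsTopologicalGroup G]
    (hG : CompletelyMetrizable G) (hw : topWeight G ≤ κ)
    (h : ∀ γ : Ordinal.{u}, γ < (Order.succ κ).ord → ∃ S : Set G,
      (∀ γ' : Ordinal.{u}, γ' < γ → (cbDeriv S γ').Nonempty) ∧
      IsCAGroup ↥(Subgroup.closure S)) :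
    ∃ P : Set G, IsPerfectSet P ∧ IsCAGroup ↥(Subgroup.closure P) := by
  classical
  obtain ⟨m, hm, hcomp⟩ := hG
  subst hm
  letI : MetricSpace G := m
  haveI : CompleteSpace G := hcomp
  have h2lt : (2 : Ordinal.{u}) < (Order.succ κ).ord := by
    have h2 : Cardinal.aleph0 ≤ Order.succ κ := le_trans hκ (le_of_lt (Order.lt_succ κ))
    have hω := Cardinal.omega0_le_ord.mpr h2
    refine lt_of_lt_of_le ?_ hω
    exact_mod_cast Ordinal.nat_lt_omega0 2
  obtain ⟨S, hS, hCA⟩ := h 2 h2lt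
  have hderiv : cbDeriv S (1 : Ordinal.{u}) = {x ∈ S | AccPt x (𝓟 S)} := by
    have h0 : cbDeriv S (0 : Ordinal.{u}) = S := Ordinal.limitRecOn_zero _ _ _
    have h1 : cbDeriv S (Order.succ (0 : Ordinal.{u})) =
        {x ∈ cbDeriv S (0 : Ordinal.{u}) |
          AccPt x (𝓟 (cbDeriv S (0 : Ordinal.{u})))} :=
      Ordinal.limitRecOn_succ _ _ _ _
    calc cbDeriv S (1 : Ordinal.{u}) = cbDeriv S (Order.succ (0 : Ordinal.{u})) := by
          rw [Ordinal.succ_zero]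
      _ = {x ∈ cbDeriv S (0 : Ordinal.{u}) |
            AccPt x (𝓟 (cbDeriv S (0 : Ordinal.{u})))} := h1
      _ = {x ∈ S | AccPt x (𝓟 S)} := by rw [h0]
  have hne1 : (cbDeriv S (1 : Ordinal.{u})).Nonempty := hS 1 (by norm_num)
  rw [hderiv] at hne1
  obtain ⟨x₀, hx₀S, hacc⟩ := hne1
  set H := Subgroup.closure S with hH
  have hx₀H : x₀ ∈ H := Subgroup.subset_closure hx₀S
  have haccH : AccPt x₀ (𝓟 (H : Set G)) :=
    hacc.mono (principal_mono.mpr Subgroup.subset_closure)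
  have hres : ∀ y : G, y ∈ H → ∀ ε : ℝ, 0 < ε →
      ∃ z, z ∈ (H : Set G) ∧ z ≠ y ∧ dist z y < ε := by
    intro y hy ε hε
    have hcont : Continuous fun s : G => y * x₀⁻¹ * s := by continuity
    have hx : y * x₀⁻¹ * x₀ = y := by group
    have hU : (fun s : G => y * x₀⁻¹ * s) ⁻¹' (Metric.ball y ε) ∈ 𝓝 x₀ := by
      apply hcont.continuousAt.preimage_mem_nhds
      rw [hx]
      exact Metric.ball_mem_nhds y hε
    obtain ⟨s, ⟨hsU, hsH⟩, hsne⟩ := accPt_iff_nhds.mp haccH _ hU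
    refine ⟨y * x₀⁻¹ * s, H.mul_mem (H.mul_mem hy (H.inv_mem hx₀H)) hsH, ?_, ?_⟩
    · intro he
      apply hsne
      have h3 : y * x₀⁻¹ * s = y * x₀⁻¹ * x₀ := by rw [he, hx]
      exact mul_left_cancel h3
    · simpa [Metric.mem_ball] using hsU
  have hCT : ∀ A Hh B : G, A ∈ H → Hh ∈ H → B ∈ H → Hh ≠ 1 →
      A * Hh = Hh * A → Hh * B = B * Hh → A * B = B * A := by
    intro A Hh B hA hHh hB hne h1 h2
    have hne' : (⟨Hh, hHh⟩ : H) ≠ 1 := fun he => hne (by simpa using congrArg Subtype.val he)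
    have hmemA : (⟨A, hA⟩ : H) ∈ Subgroup.centralizer ({⟨Hh, hHh⟩} : Set H) := by
      rw [Subgroup.mem_centralizer_iff]
      rintro g hg
      rw [Set.mem_singleton_iff] at hg
      subst hg
      exact Subtype.ext (by simpa using h1.symm)
    have hmemB : (⟨B, hB⟩ : H) ∈ Subgroup.centralizer ({⟨Hh, hHh⟩} : Set H) := by
      rw [Subgroup.mem_centralizer_iff]
      rintro g hg
      rw [Set.mem_singleton_iff] at hg
      subst hg
      exact Subtype.ext (by simpa using h2)
    have hca := hCA ⟨Hh, hHh⟩ hne' ⟨A, hA⟩ hmemA ⟨B, hB⟩ hmemB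
    simpa using congrArg Subtype.val hca
  exact key_perfect H hres x₀ hx₀H hCT
end Perfect
end Stage
end Fusion
end
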